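/- arXiv:1711.10580 — 9 statements merged into one kernel-verified Lean document; each statement's English description precedes it below -/
import Mathlib

section
/- Let R be a ring with Jacobson radical J such that every finitely generated Artinian left R-module has finite length. If the injective hull of every simple left R-module is locally Artinian, then for every left ideal I of R one has ⋂_{n≥0} (I + J^n) = I. -/
universe u

section DiamondAux

variable {R : Type u} [Ring R]

open Submodule



/-- The Jacobson radical annihilates every simple module. -/
theorem DiamondAux.jac_smul_simple {M : Type v} [AddCommGroup M] [Module R M]
    [IsSimpleModule R M] {a : R} (ha : a ∈ Ideal.jacobson (⊥ : Ideal R)) (t : M) :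
    a • t = 0 := by
  by_cases ht : t = 0
  · simp [ht]
  · set φ := LinearMap.toSpanSingleton R M t with hφ
    have hsurj : Function.Surjective φ := by
      rw [← LinearMap.range_eq_top, ← LinearMap.span_singleton_eq_range]
      rcases eq_bot_or_eq_top (Submodule.span R {t}) with h | h
      · exact absurd (Submodule.span_singleton_eq_bot.mp h) ht
      · exact h
    have hsimp : IsSimpleModule R (R ⧸ LinearMap.ker φ) :=
      IsSimpleModule.congr (φ.quotKerEquivOfSurjective hsurj)
    have hmax : Ideal.IsMaximal (LinearMap.ker φ) :=
      Ideal.isMaximal_def.mpr (isSimpleModule_iff_isCoatom.mp hsimp)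
    have hle : Ideal.jacobson (⊥ : Ideal R) ≤ LinearMap.ker φ :=
      sInf_le ⟨bot_le, hmax⟩
    simpa [hφ] using hle ha

/-- A finite-length module is annihilated by a power of the Jacobson radical. -/
theorem DiamondAux.jac_pow_smul_eq_bot {M : Type u} [AddCommGroup M] [Module R M]
    (h : IsFiniteLength R M) :
    ∃ n : ℕ, (Ideal.jacobson (⊥ : Ideal R)) ^ n • (⊤ : Submodule R M) = ⊥ := by
  induction h with
  | of_subsingleton => exact ⟨0, Subsingleton.elim _ _⟩
  | @of_simple_quotient M _ _ N _ _ ih =>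
    obtain ⟨n, hn⟩ := ih
    set J := Ideal.jacobson (⊥ : Ideal R) with hJ
    have h1 : J • (⊤ : Submodule R M) ≤ N := by
      rw [Submodule.smul_le]
      intro r hr m _
      have h2 : r • (Submodule.Quotient.mk m : M ⧸ N) = 0 :=
        DiamondAux.jac_smul_simple hr _
      rwa [← Submodule.Quotient.mk_smul, Submodule.Quotient.mk_eq_zero] at h2
    have h2 : J ^ n • (N : Submodule R M) = ⊥ := by
      have h3 := congrArg (Submodule.map N.subtype) hn
      rwa [Submodule.map_smul'', Submodule.map_top, Submodule.range_subtype,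
        Submodule.map_bot] at h3
    refine ⟨n + 1, le_bot_iff.mp ?_⟩
    have hp : J ^ (n + 1) = J ^ n • J := by rw [Ideal.smul_eq_mul]; exact rfl
    calc J ^ (n + 1) • (⊤ : Submodule R M)
        = J ^ n • (J • (⊤ : Submodule R M)) := by rw [hp, Submodule.smul_assoc]
      _ ≤ J ^ n • (N : Submodule R M) := smul_mono_right _ h1
      _ = ⊥ := h2

/-- A retract of an injective module is injective. -/
theorem DiamondAux.injective_of_retract {E M : Type u} [AddCommGroup E] [Module R E]
    [AddCommGroup M] [Module R M] (hE : Module.Injective R E) (i : M →ₗ[R] E)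
    (p : E →ₗ[R] M) (hpi : ∀ m, p (i m) = m) : Module.Injective R M := by
  constructor
  intro X Y _ _ _ _ f hf g
  obtain ⟨h, hh⟩ := hE.out f hf (i ∘ₗ g)
  exact ⟨p ∘ₗ h, fun x => by simp [hh x, hpi]⟩

/-- Zorn's lemma for sets of submodules closed under suprema of nonempty chains. -/
theorem DiamondAux.zorn_submodule {M : Type v} [AddCommGroup M] [Module R M]
    (s : Set (Submodule R M))
    (hs : ∀ c ⊆ s, IsChain (· ≤ ·) c → c.Nonempty → sSup c ∈ s)
    (N : Submodule R M) (hN : N ∈ s) : ∃ K, N ≤ K ∧ Maximal (· ∈ s) K :=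
  zorn_le_nonempty₀ s
    (fun c hc hchain y hy =>
      ⟨sSup c, hs c hc hchain ⟨y, hy⟩, fun _ hz => le_sSup hz⟩) N hN


theorem DiamondAux.zorn_submodule' {M : Type v} [AddCommGroup M] [Module R M]
    (s : Set (Submodule R M))
    (hs : ∀ c ⊆ s, IsChain (· ≤ ·) c → c.Nonempty → sSup c ∈ s)
    (N : Submodule R M) (hN : N ∈ s) : ∃ K, N ≤ K ∧ Maximal (· ∈ s) K :=
  zorn_le_nonempty₀ s
    (fun c hc hchain y hy =>
      ⟨sSup c, hs c hc hchain ⟨y, hy⟩, fun _ hz => le_sSup hz⟩) N hN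

theorem DiamondAux.main (hfl : ∀ (M : Type u) [AddCommGroup M] [Module R M],
      Module.Finite R M → IsArtinian R M → IsFiniteLength R M)
    (hd : ∀ (E : Type u) [AddCommGroup E] [Module R E], Module.Injective R E →
      (∃ S : Submodule R E, IsSimpleModule R S ∧ ∀ N : Submodule R E, N ≠ ⊥ → S ⊓ N ≠ ⊥) →
      ∀ N : Submodule R E, N.FG → IsArtinian R N)
    (I : Ideal R) (x : R)
    (hx : ∀ n : ℕ, x ∈ I + (Ideal.jacobson (⊥ : Ideal R)) ^ n) (hxI : x ∉ I) : False := by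
  classical
  set J := Ideal.jacobson (⊥ : Ideal R) with hJdef
  -- the element x̄ in R ⧸ I
  set xb : R ⧸ I := Submodule.Quotient.mk x with hxbdef
  have hxb : xb ≠ 0 := fun h => hxI ((Submodule.Quotient.mk_eq_zero I).mp h)
  -- Zorn 1 : a submodule K maximal with respect to xb ∉ K
  obtain ⟨K, -, hK⟩ := DiamondAux.zorn_submodule' {K : Submodule R (R ⧸ I) | xb ∉ K}
    (by
      intro c hc hchain hne hmem
      obtain ⟨z, hzc, hzmem⟩ := (Submodule.mem_sSup_of_directed hne hchain.directedOn).mp hmem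
      exact hc hzc hzmem)
    ⊥ (by simpa using hxb)
  -- the quotient M' and the element y
  set y : (R ⧸ I) ⧸ K := K.mkQ xb with hydef
  have hy0 : y ≠ 0 := fun h => hK.1 ((Submodule.Quotient.mk_eq_zero K).mp h)
  -- every nonzero submodule of M' contains y
  have hy : ∀ N : Submodule R ((R ⧸ I) ⧸ K), N ≠ ⊥ → y ∈ N := by
    intro N hN0
    by_contra hyN
    have hKle : K ≤ Submodule.comap K.mkQ N := by
      intro z hz
      have : K.mkQ z = 0 := (Submodule.Quotient.mk_eq_zero K).mpr hz
      simp [Submodule.mem_comap, this]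
    have hcm : Submodule.comap K.mkQ N ∈ {K : Submodule R (R ⧸ I) | xb ∉ K} := hyN
    have hle := hK.2 hcm hKle
    have : N = ⊥ := by
      have h1 : Submodule.map K.mkQ (Submodule.comap K.mkQ N) = N :=
        Submodule.map_comap_eq_of_surjective K.mkQ_surjective N
      rw [← h1, eq_bot_iff]
      refine le_trans (Submodule.map_mono hle) ?_
      intro w hw
      obtain ⟨z, hz, rfl⟩ := hw
      simpa using (Submodule.Quotient.mk_eq_zero K).mpr hz
    exact hN0 this
  -- the simple essential submodule S' = span {y}
  set S' : Submodule R ((R ⧸ I) ⧸ K) := Submodule.span R {y} with hS'def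
  have hS'0 : S' ≠ ⊥ := by rwa [hS'def, ne_eq, Submodule.span_singleton_eq_bot]
  have hS'simple : IsSimpleModule R S' := by
    rw [isSimpleModule_iff_isAtom]
    refine ⟨hS'0, fun b hb => ?_⟩
    by_contra hb0
    exact hb.not_ge (Submodule.span_le.mpr (by simpa using hy b hb0))
  have hess' : ∀ z : (R ⧸ I) ⧸ K, z ≠ 0 → ∃ r : R, r • z ∈ S' ∧ r • z ≠ 0 := by
    intro z hz
    have h1 : Submodule.span R {z} ≠ ⊥ := by rwa [ne_eq, Submodule.span_singleton_eq_bot]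
    obtain ⟨r, hr⟩ := Submodule.mem_span_singleton.mp (hy _ h1)
    exact ⟨r, by rw [hr]; exact ⟨Submodule.mem_span_singleton_self y, hy0⟩⟩
  -- embed M' into an injective module E
  let Mc : ModuleCat.{u} R := ModuleCat.of R ((R ⧸ I) ⧸ K)
  let Ec : ModuleCat.{u} R := CategoryTheory.Injective.under Mc
  let f : ((R ⧸ I) ⧸ K) →ₗ[R] Ec := (CategoryTheory.Injective.ι Mc).hom
  have hf : Function.Injective f :=
    (ModuleCat.mono_iff_injective (CategoryTheory.Injective.ι Mc)).mp inferInstance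
  have hEinj : Module.Injective R Ec := by
    have : CategoryTheory.Injective (ModuleCat.of R Ec) :=
      CategoryTheory.Injective.injective_under Mc
    exact Module.injective_module_of_injective_object R Ec
  -- transport the data to E
  set M'' : Submodule R Ec := LinearMap.range f with hM''def
  set S : Submodule R Ec := Submodule.map f S' with hSdef
  have hSM'' : S ≤ M'' := by
    rw [hSdef, hM''def, LinearMap.range_eq_map]
    exact Submodule.map_mono le_top
  have hSsimple : IsSimpleModule R S :=
    IsSimpleModule.congr (Submodule.equivMapOfInjective f hf S').symm
  have hessM'' : ∀ z ∈ M'', z ≠ 0 → ∃ r : R, r • z ∈ S ∧ r • z ≠ 0 := by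
    rintro z hz hz0
    obtain ⟨m, rfl⟩ := hz
    have hm : m ≠ 0 := fun h => hz0 (by rw [h, map_zero])
    obtain ⟨r, hr1, hr2⟩ := hess' m hm
    refine ⟨r, ?_, ?_⟩
    · rw [← map_smul]; exact Submodule.mem_map_of_mem hr1
    · rw [← map_smul]
      exact fun h => hr2 (hf (by rwa [map_zero]))
  -- Zorn 2 : maximal "essential extension" H of S containing M''
  obtain ⟨H, hM''H, hH⟩ := DiamondAux.zorn_submodule'
    {X : Submodule R Ec | M'' ≤ X ∧ ∀ z ∈ X, z ≠ 0 → ∃ r : R, r • z ∈ S ∧ r • z ≠ 0}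
    (by
      intro c hc hchain hne
      obtain ⟨X₀, hX₀⟩ := hne
      refine ⟨le_trans (hc hX₀).1 (le_sSup hX₀), ?_⟩
      intro z hz hz0
      obtain ⟨X, hXc, hzX⟩ := (Submodule.mem_sSup_of_directed ⟨X₀, hX₀⟩ hchain.directedOn).mp hz
      exact (hc hXc).2 z hzX hz0)
    M'' ⟨le_rfl, hessM''⟩
  -- Zorn 3 : a maximal complement C of H
  obtain ⟨C, -, hC⟩ := DiamondAux.zorn_submodule' {C : Submodule R Ec | C ⊓ H = ⊥}
    (by
      intro c hc hchain hne
      rw [Set.mem_setOf_eq, eq_bot_iff]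
      rintro z ⟨hz1, hz2⟩
      obtain ⟨X, hXc, hzX⟩ := (Submodule.mem_sSup_of_directed hne hchain.directedOn).mp hz1
      have := hc hXc
      rw [Set.mem_setOf_eq] at this
      rw [← this]
      exact ⟨hzX, hz2⟩)
    ⊥ (by simp)
  -- the map g : H → E ⧸ C is injective with essential image
  set g : H →ₗ[R] (Ec ⧸ C) := C.mkQ ∘ₗ H.subtype with hgdef
  have hginj : Function.Injective g := by
    rw [← LinearMap.ker_eq_bot, eq_bot_iff]
    rintro a ha
    have h1 : (a : Ec) ∈ C := by
      have : C.mkQ (a : Ec) = 0 := ha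
      rwa [← Submodule.Quotient.mk_eq_zero C]
    have h2 : (a : Ec) ∈ C ⊓ H := ⟨h1, a.2⟩
    rw [hC.1] at h2
    have h3 : (a : Ec) = 0 := by simpa using h2
    exact (Submodule.mem_bot R).mpr (Subtype.ext h3)
  have hessY : ∀ w : Ec ⧸ C, w ≠ 0 → ∃ (a : H) (r : R), r • w = g a ∧ g a ≠ 0 := by
    intro w hw
    set N' : Submodule R Ec := Submodule.comap C.mkQ (Submodule.span R {w}) with hN'def
    have hCN' : C ≤ N' := by
      intro z hz
      have : C.mkQ z = 0 := (Submodule.Quotient.mk_eq_zero C).mpr hz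
      simp [hN'def, Submodule.mem_comap, this]
    have hN'H : N' ⊓ H ≠ ⊥ := by
      intro hbot
      have hle : N' ≤ C :=
        hC.2 (show N' ∈ {C : Submodule R Ec | C ⊓ H = ⊥} from hbot) hCN'
      have h1 : Submodule.map C.mkQ N' = Submodule.span R {w} :=
        Submodule.map_comap_eq_of_surjective C.mkQ_surjective _
      have h2 : w ∈ Submodule.map C.mkQ N' := h1 ▸ Submodule.mem_span_singleton_self w
      obtain ⟨z, hz, rfl⟩ := h2
      exact hw ((Submodule.Quotient.mk_eq_zero C).mpr (hle hz))
    obtain ⟨z, hz, hz0⟩ := (Submodule.ne_bot_iff _).mp hN'H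
    obtain ⟨r, hr⟩ := Submodule.mem_span_singleton.mp (hz.1 : C.mkQ z ∈ _)
    refine ⟨⟨z, hz.2⟩, r, ?_, ?_⟩
    · simpa [hgdef] using hr
    · show C.mkQ z ≠ 0
      intro h
      have h2 : z ∈ C ⊓ H := ⟨(Submodule.Quotient.mk_eq_zero C).mp h, hz.2⟩
      rw [hC.1] at h2
      exact hz0 h2
  -- extend the inclusion H ↪ E along g using injectivity of E
  obtain ⟨h, hh⟩ := hEinj.out g hginj H.subtype
  have hhinj : Function.Injective h := by
    rw [injective_iff_map_eq_zero]
    intro w hw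
    by_contra hw0
    obtain ⟨a, r, hr1, hr2⟩ := hessY w hw0
    have h1 : h (g a) = (a : Ec) := hh a
    have h2 : h (r • w) = 0 := by rw [map_smul, hw, smul_zero]
    rw [hr1, h1] at h2
    have : a = 0 := by simpa using Subtype.ext h2
    rw [this, map_zero] at hr2
    exact hr2 rfl
  have hHrange : H ≤ LinearMap.range h := by
    intro z hz
    exact ⟨g ⟨z, hz⟩, hh ⟨z, hz⟩⟩
  have hrangemem : LinearMap.range h ∈
      {X : Submodule R Ec | M'' ≤ X ∧ ∀ z ∈ X, z ≠ 0 → ∃ r : R, r • z ∈ S ∧ r • z ≠ 0} := by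
    refine ⟨le_trans hM''H hHrange, ?_⟩
    rintro z ⟨w, rfl⟩ hz0
    have hw0 : w ≠ 0 := fun hwz => hz0 (by rw [hwz, map_zero])
    obtain ⟨a, r, hr1, hr2⟩ := hessY w hw0
    have ha0 : (a : Ec) ≠ 0 := by
      intro hc0
      apply hr2
      apply hhinj
      rw [map_zero, hh a]
      exact hc0
    obtain ⟨r', hr'1, hr'2⟩ := hH.1.2 (a : Ec) a.2 ha0
    refine ⟨r' * r, ?_, ?_⟩
    · rw [mul_smul, ← map_smul, hr1, hh a]; exact hr'1
    · rw [mul_smul, ← map_smul, hr1, hh a]; exact hr'2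
  have hrangeH : LinearMap.range h = H :=
    le_antisymm (hH.2 hrangemem hHrange) hHrange
  have hgsurj : Function.Surjective g := by
    intro w
    have h1 : h w ∈ H := hrangeH ▸ LinearMap.mem_range_self h w
    have h2 : h (g ⟨h w, h1⟩) = h w := hh ⟨h w, h1⟩
    exact ⟨⟨h w, h1⟩, hhinj h2⟩
  -- conclude that H and C are complements
  have hsup : H ⊔ C = ⊤ := by
    have h1 : Submodule.map C.mkQ H = ⊤ := by
      have h2 : LinearMap.range g = ⊤ := LinearMap.range_eq_top.mpr hgsurj
      rw [hgdef, LinearMap.range_comp, Submodule.range_subtype] at h2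
      exact h2
    have := (Submodule.map_mkQ_eq_top C H).mp h1
    rwa [sup_comm] at this
  have hcompl : IsCompl H C :=
    ⟨disjoint_iff.mpr (by rw [inf_comm]; exact hC.1), codisjoint_iff.mpr hsup⟩
  -- H is injective
  have hHinj : Module.Injective R H := by
    refine DiamondAux.injective_of_retract hEinj H.subtype
      (Submodule.linearProjOfIsCompl H C hcompl) ?_
    exact fun a => Submodule.linearProjOfIsCompl_apply_left hcompl a
  -- the simple essential submodule of H
  set Sh : Submodule R H := Submodule.comap H.subtype S with hShdef
  have hSH : S ≤ H := le_trans hSM'' hM''H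
  have hShsimple : IsSimpleModule R Sh :=
    IsSimpleModule.congr (Submodule.comapSubtypeEquivOfLe hSH)
  have hShess : ∀ N : Submodule R H, N ≠ ⊥ → Sh ⊓ N ≠ ⊥ := by
    intro N hN0
    obtain ⟨a, haN, ha0⟩ := (Submodule.ne_bot_iff _).mp hN0
    have hac : (a : Ec) ≠ 0 := fun hc => ha0 (Subtype.ext hc)
    obtain ⟨r, hr1, hr2⟩ := hH.1.2 (a : Ec) a.2 hac
    refine (Submodule.ne_bot_iff _).mpr ⟨r • a, ⟨?_, Submodule.smul_mem N r haN⟩, ?_⟩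
    · exact Submodule.mem_comap.mpr (by simpa using hr1)
    · exact fun hc => hr2 (by simpa using congrArg H.subtype hc)
  -- the image of M' inside H is finitely generated
  set Nh : Submodule R H := Submodule.comap H.subtype M'' with hNhdef
  have eNh : Nh ≃ₗ[R] M'' := Submodule.comapSubtypeEquivOfLe hM''H
  have e1 : ((R ⧸ I) ⧸ K) ≃ₗ[R] M'' := LinearEquiv.ofInjective f hf
  have hfin : Module.Finite R ((R ⧸ I) ⧸ K) := inferInstance
  have hNhfin : Module.Finite R Nh := Module.Finite.equiv (e1.trans eNh.symm)
  have hNhfg : Nh.FG := Module.Finite.iff_fg.mp hNhfin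
  -- apply the diamond hypothesis
  have hart : IsArtinian R Nh := hd H hHinj ⟨Sh, hShsimple, hShess⟩ Nh hNhfg
  have hartM' : IsArtinian R ((R ⧸ I) ⧸ K) :=
    isArtinian_of_linearEquiv (eNh.trans e1.symm)
  have hflM' : IsFiniteLength R ((R ⧸ I) ⧸ K) := hfl _ hfin hartM'
  obtain ⟨n, hn⟩ := DiamondAux.jac_pow_smul_eq_bot hflM'
  -- final contradiction
  have hxn := hx n
  rw [Submodule.add_eq_sup] at hxn
  obtain ⟨i, hi, j, hj, hij⟩ := Submodule.mem_sup.mp hxn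
  have hxj : xb = Submodule.Quotient.mk j := by
    rw [hxbdef, ← hij]
    have : (Submodule.Quotient.mk i : R ⧸ I) = 0 := (Submodule.Quotient.mk_eq_zero I).mpr hi
    rw [Submodule.Quotient.mk_add, this, zero_add]
  have hyj : y = j • (K.mkQ (Submodule.Quotient.mk (1 : R))) := by
    rw [hydef, hxj]
    have : (Submodule.Quotient.mk j : R ⧸ I) = j • Submodule.Quotient.mk (1 : R) := by
      rw [← Submodule.Quotient.mk_smul, smul_eq_mul, mul_one]
    rw [this, map_smul]
  have hyJ : y ∈ J ^ n • (⊤ : Submodule R ((R ⧸ I) ⧸ K)) := by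
    rw [hyj]
    exact Submodule.smul_mem_smul hj Submodule.mem_top
  rw [hn] at hyJ
  exact hy0 hyJ


end DiamondAux

/-- Property (⋄): the injective hull of every simple left `R`-module is locally
Artinian.  Equivalently stated: every injective left `R`-module containing an
essential simple submodule (i.e. every injective hull of a simple module) has
all of its finitely generated submodules Artinian. -/
def HasDiamond (R : Type u) [Ring R] : Prop :=
  ∀ (E : Type u) [AddCommGroup E] [Module R E], Module.Injective R E →
    (∃ S : Submodule R E, IsSimpleModule R S ∧ ∀ N : Submodule R E, N ≠ ⊥ → S ⊓ N ≠ ⊥) →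
    ∀ N : Submodule R E, N.FG → IsArtinian R N

/-- If every finitely generated Artinian left `R`-module has finite length and `R`
satisfies (⋄), then `⋂ₙ (I + J^n) = I` for every left ideal `I`, where `J` is the
Jacobson radical of `R`. -/
theorem diamond_implies_krull_intersection (R : Type u) [Ring R]
    (hfl : ∀ (M : Type u) [AddCommGroup M] [Module R M],
      Module.Finite R M → IsArtinian R M → IsFiniteLength R M)
    (hd : HasDiamond R) (I : Ideal R) :
    ⨅ n : ℕ, (I + (Ideal.jacobson (⊥ : Ideal R)) ^ n) = I := by
  refine le_antisymm ?_ (le_iInf fun n => by rw [Submodule.add_eq_sup]; exact le_sup_left)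
  intro x hx
  by_contra hxI
  exact DiamondAux.main hfl hd I x (fun n => (Submodule.mem_iInf _).mp hx n) hxI
end

section
/- Let R be a ring with Jacobson radical J such that every finitely generated Artinian left R-module has finite length, and suppose injective hulls of simple left R-modules are locally Artinian. Then for every finitely generated left R-module M, ⋂_{n≥0} J^n M = 0. -/
universe u

open Submodule

section Aux

variable {R : Type u} [Ring R]

/-- For `a` in the Jacobson radical, `1 - a` has a left inverse. -/
lemma aux_left_inv {a : R} (ha : a ∈ Ideal.jacobson (⊥ : Ideal R)) :
    ∃ u : R, u * (1 - a) = 1 := by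
  obtain ⟨z, hz⟩ := Ideal.mem_jacobson_iff.mp ha (-1)
  rw [Ideal.mem_bot] at hz
  refine ⟨z, ?_⟩
  have h1 : z * -1 * a + z = 1 := sub_eq_zero.mp hz
  have h2 : z * (1 - a) = z * -1 * a + z := by noncomm_ring
  rw [h2, h1]

/-- The Jacobson radical is closed under right multiplication. -/
lemma aux_right_mul {a : R} (r : R) (ha : a ∈ Ideal.jacobson (⊥ : Ideal R)) :
    a * r ∈ Ideal.jacobson (⊥ : Ideal R) :=
  Ideal.mul_mem_right r _ ha

variable {M : Type u} [AddCommGroup M] [Module R M]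

/-- Representation of elements of `J • span s` as combinations of `s` with
coefficients in `J`. -/
lemma aux_repr (s : Finset M) {x : M}
    (hx : x ∈ (Ideal.jacobson (⊥ : Ideal R)) • span R (s : Set M)) :
    ∃ c : M → R, (∀ i, c i ∈ Ideal.jacobson (⊥ : Ideal R)) ∧ ∑ i ∈ s, c i • i = x := by
  refine Submodule.smul_induction_on hx ?_ ?_
  · intro r hr n hn
    obtain ⟨f, hf⟩ := mem_span_finset.mp hn
    refine ⟨fun i => r * f i, fun i => aux_right_mul _ hr, ?_⟩
    show ∑ i ∈ s, (r * f i) • i = r • n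
    rw [← hf.2, Finset.smul_sum]
    exact Finset.sum_congr rfl fun i _ => mul_smul r (f i) i
  · rintro x y ⟨c, hc, rfl⟩ ⟨d, hd, rfl⟩
    refine ⟨fun i => c i + d i, fun i => Ideal.add_mem _ (hc i) (hd i), ?_⟩
    show ∑ i ∈ s, (c i + d i) • i = _
    rw [← Finset.sum_add_distrib]
    exact Finset.sum_congr rfl fun i _ => add_smul (c i) (d i) i

/-- Nakayama's lemma for (possibly noncommutative) rings. -/
lemma aux_nakayama_span : ∀ (n : ℕ) (s : Finset M), s.card = n →
    span R (s : Set M) ≤ (Ideal.jacobson (⊥ : Ideal R)) • span R (s : Set M) →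
    span R (s : Set M) = ⊥ := by
  intro n
  induction n with
  | zero =>
    intro s hs _
    rw [Finset.card_eq_zero.mp hs]
    simp
  | succ n ih =>
    intro s hs hle
    classical
    obtain ⟨a, ha⟩ : s.Nonempty := Finset.card_pos.mp (by omega)
    obtain ⟨c, hc, hsum⟩ := aux_repr s (hle (subset_span ha))
    have hsum' : c a • a + ∑ i ∈ s.erase a, c i • i = a := by
      rw [Finset.add_sum_erase s (fun i => c i • i) ha]
      exact hsum
    have hsub : (1 - c a) • a = ∑ i ∈ s.erase a, c i • i := by
      rw [sub_smul, one_smul, sub_eq_iff_eq_add, add_comm, hsum']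
    obtain ⟨u, hu⟩ := aux_left_inv (hc a)
    have haspan : a ∈ span R ((s.erase a : Finset M) : Set M) := by
      have : a = ∑ i ∈ s.erase a, (u * c i) • i := by
        calc a = (u * (1 - c a)) • a := by rw [hu, one_smul]
        _ = u • ((1 - c a) • a) := mul_smul u _ a
        _ = u • ∑ i ∈ s.erase a, c i • i := by rw [hsub]
        _ = ∑ i ∈ s.erase a, (u * c i) • i := by
            rw [Finset.smul_sum]
            exact Finset.sum_congr rfl fun i _ => (mul_smul u (c i) i).symm
      have hmem : (∑ i ∈ s.erase a, (u * c i) • i) ∈ span R ((s.erase a : Finset M) : Set M) :=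
        Submodule.sum_mem _ fun i hi => Submodule.smul_mem _ _ (subset_span hi)
      rwa [← this] at hmem
    have hspan : span R (s : Set M) = span R ((s.erase a : Finset M) : Set M) := by
      refine le_antisymm ?_ (span_mono (by exact_mod_cast Finset.erase_subset a s))
      rw [span_le]
      intro b hb
      rcases eq_or_ne b a with rfl | hba
      · exact haspan
      · exact subset_span (Finset.mem_erase.mpr ⟨hba, hb⟩)
    have hcard : (s.erase a).card = n := by
      rw [Finset.card_erase_of_mem ha, hs]
      omega
    rw [hspan]
    exact ih _ hcard (by rw [← hspan]; exact hle)

/-- Nakayama's lemma, submodule form. -/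
lemma aux_nakayama (N : Submodule R M) (hfg : N.FG)
    (hN : N ≤ (Ideal.jacobson (⊥ : Ideal R)) • N) : N = ⊥ := by
  obtain ⟨s, rfl⟩ := hfg
  exact aux_nakayama_span s.card s rfl hN

/-- Powers of an ideal commute with the ideal under the scalar action. -/
lemma aux_smul_comm (I : Ideal R) (N : Submodule R M) :
    ∀ n : ℕ, I ^ n • (I • N) = I • (I ^ n • N)
  | 0 => by rw [Submodule.pow_zero, Ideal.one_eq_top, Submodule.top_smul, Submodule.top_smul]
  | (n + 1) => by
    have h : ∀ P : Submodule R M, I ^ (n + 1) • P = I ^ n • (I • P) := fun P => by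
      rw [Submodule.pow_succ, ← Ideal.smul_eq_mul, Submodule.smul_assoc]
    rw [h (I • N), h N]
    exact aux_smul_comm I (I • N) n

/-- Every module embeds into an injective module. -/
lemma aux_embed (R : Type u) [Ring R] (C : Type u) [AddCommGroup C] [Module R C] :
    ∃ (E : Type u) (_ : AddCommGroup E) (_ : Module R E) (f : C →ₗ[R] E),
      Module.Injective R E ∧ Function.Injective f := by
  haveI : CategoryTheory.EnoughInjectives (ModuleCat.{u} R) := ModuleCat.enoughInjectives.{u} R
  let X : ModuleCat.{u} R := ModuleCat.of R C
  let E := CategoryTheory.Injective.under X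
  haveI : CategoryTheory.Injective (ModuleCat.of R E) :=
    (inferInstance : CategoryTheory.Injective E)
  refine ⟨E, inferInstance, inferInstance, (CategoryTheory.Injective.ι X).hom, ?_, ?_⟩
  · exact Module.injective_module_of_injective_object R E
  · exact (ModuleCat.mono_iff_injective (CategoryTheory.Injective.ι X)).mp inferInstance

end Aux

set_option maxHeartbeats 1600000 in
/-- If every finitely generated Artinian left `R`-module has finite length and `R`
satisfies (⋄), then `⋂ₙ JⁿM = 0` for every finitely generated left `R`-module `M`,
where `J` is the Jacobson radical of `R`. -/
theorem diamond_implies_radical_intersection_zero (R : Type u) [Ring R]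
    (hfl : ∀ (M : Type u) [AddCommGroup M] [Module R M],
      Module.Finite R M → IsArtinian R M → IsFiniteLength R M)
    (hd : HasDiamond R)
    (M : Type u) [AddCommGroup M] [Module R M] (hM : Module.Finite R M) :
    ⨅ n : ℕ, ((Ideal.jacobson (⊥ : Ideal R)) ^ n • (⊤ : Submodule R M)) = ⊥ := by
  set J := Ideal.jacobson (⊥ : Ideal R) with hJdef
  rw [eq_bot_iff]
  intro x hx
  rw [Submodule.mem_bot]
  by_contra hx0
  -- Step 1: a submodule K maximal with respect to x ∉ K
  obtain ⟨K, -, hK⟩ := zorn_le_nonempty₀ {K : Submodule R M | x ∉ K} (by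
      intro c hcs hchain y hy
      refine ⟨sSup c, ?_, fun z hz => le_sSup hz⟩
      intro hmem
      rw [Submodule.mem_sSup_of_directed ⟨y, hy⟩ hchain.directedOn] at hmem
      obtain ⟨P, hPc, hxP⟩ := hmem
      exact hcs hPc hxP) ⊥ (by simpa using hx0)
  have hxK : x ∉ K := hK.prop
  set xb : M ⧸ K := K.mkQ x with hxbdef
  have hxb0 : xb ≠ 0 := by
    simpa [hxbdef, Submodule.Quotient.mk_eq_zero] using hxK
  -- Step 2: every nonzero submodule of M ⧸ K contains xb
  have hB : ∀ N : Submodule R (M ⧸ K), N ≠ ⊥ → xb ∈ N := by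
    intro N hN
    have hle : K ≤ N.comap K.mkQ := by
      intro k hk
      have : K.mkQ k = 0 := (Submodule.Quotient.mk_eq_zero K).mpr hk
      simp [Submodule.mem_comap, this]
    by_contra hc
    have heq : N.comap K.mkQ = K := le_antisymm (hK.2 hc hle) hle
    apply hN
    have h1 : (N.comap K.mkQ).map K.mkQ = N :=
      Submodule.map_comap_eq_of_surjective (Submodule.mkQ_surjective K) N
    rw [heq] at h1
    rw [← h1, eq_bot_iff]
    rintro z ⟨k, hk, rfl⟩
    simpa using (Submodule.Quotient.mk_eq_zero K).mpr hk
  -- Step 3: embed M ⧸ K into an injective module E₀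
  obtain ⟨E₀, _, _, ψ, hinjE₀, hψ⟩ := aux_embed R (M ⧸ K)
  set y : E₀ := ψ xb with hydef
  have hy0 : y ≠ 0 := fun h => hxb0 (hψ (by simpa [hydef] using h))
  have HS : ∀ Q : Submodule R E₀, Q ≤ LinearMap.range ψ → Q ≠ ⊥ → y ∈ Q := by
    intro Q hQle hQ
    obtain ⟨q, hqQ, hq0⟩ := (Submodule.ne_bot_iff Q).mp hQ
    obtain ⟨cq, rfl⟩ := hQle hqQ
    have hcomp : Q.comap ψ ≠ ⊥ := by
      refine (Submodule.ne_bot_iff _).mpr ⟨cq, hqQ, fun h => hq0 (by rw [h]; simp)⟩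
    exact hB _ hcomp
  set S' : Submodule R E₀ := span R {y} with hS'def
  have hS'le : S' ≤ LinearMap.range ψ := by
    rw [hS'def, span_le, Set.singleton_subset_iff]
    exact ⟨xb, rfl⟩
  -- essential-extension predicate
  set Ess : Submodule R E₀ → Prop :=
    fun P => ∀ Q : Submodule R E₀, Q ≤ P → Q ≠ ⊥ → S' ⊓ Q ≠ ⊥ with hEssdef
  have hEssRange : Ess (LinearMap.range ψ) := by
    intro Q hQ hQ0
    refine (Submodule.ne_bot_iff _).mpr ⟨y, Submodule.mem_inf.mpr ⟨?_, HS Q hQ hQ0⟩, hy0⟩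
    exact subset_span rfl
  -- Step 4: a maximal essential extension Eb of S' inside E₀
  obtain ⟨Eb, -, hEb⟩ := zorn_le_nonempty₀
      {P : Submodule R E₀ | LinearMap.range ψ ≤ P ∧ Ess P} (by
      intro c hcs hchain P₀ hP₀
      refine ⟨sSup c, ⟨le_trans (hcs hP₀).1 (le_sSup hP₀), ?_⟩, fun z hz => le_sSup hz⟩
      intro Q hQ hQ0
      obtain ⟨q, hqQ, hq0⟩ := (Submodule.ne_bot_iff Q).mp hQ0
      have hq : q ∈ sSup c := hQ hqQ
      rw [Submodule.mem_sSup_of_directed ⟨P₀, hP₀⟩ hchain.directedOn] at hq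
      obtain ⟨P, hPc, hqP⟩ := hq
      have hspanle : span R {q} ≤ P := by rw [span_le, Set.singleton_subset_iff]; exact hqP
      have := (hcs hPc).2 (span R {q}) hspanle
        (fun h => hq0 (by rwa [span_singleton_eq_bot] at h))
      obtain ⟨z, hz, hz0⟩ := (Submodule.ne_bot_iff _).mp this
      rw [Submodule.mem_inf] at hz
      have hzQ : z ∈ Q := by
        have : span R {q} ≤ Q := by rw [span_le, Set.singleton_subset_iff]; exact hqQ
        exact this hz.2
      exact (Submodule.ne_bot_iff _).mpr ⟨z, Submodule.mem_inf.mpr ⟨hz.1, hzQ⟩, hz0⟩)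
      (LinearMap.range ψ) ⟨le_rfl, hEssRange⟩
  have hrangeEb : LinearMap.range ψ ≤ Eb := hEb.prop.1
  have hEssEb : Ess Eb := hEb.prop.2
  -- Step 5: a maximal complement Nc of Eb
  obtain ⟨Nc, -, hNc⟩ := zorn_le_nonempty₀ {P : Submodule R E₀ | P ⊓ Eb = ⊥} (by
      intro c hcs hchain P₀ hP₀
      refine ⟨sSup c, ?_, fun z hz => le_sSup hz⟩
      show sSup c ⊓ Eb = ⊥
      rw [eq_bot_iff]
      rintro z hz
      rw [Submodule.mem_inf] at hz
      obtain ⟨hz1, hz2⟩ := hz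
      rw [Submodule.mem_sSup_of_directed ⟨P₀, hP₀⟩ hchain.directedOn] at hz1
      obtain ⟨P, hPc, hzP⟩ := hz1
      have : z ∈ P ⊓ Eb := Submodule.mem_inf.mpr ⟨hzP, hz2⟩
      rw [hcs hPc] at this
      exact this) ⊥ (by simp)
  have hNcEb : Nc ⊓ Eb = ⊥ := hNc.prop
  -- Step 6: image of Eb is essential in E₀ ⧸ Nc
  have claimA : ∀ Qb : Submodule R (E₀ ⧸ Nc), Qb ≠ ⊥ → (Eb.map Nc.mkQ) ⊓ Qb ≠ ⊥ := by
    intro Qb hQb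
    have hle : Nc ≤ Qb.comap Nc.mkQ := by
      intro nn hn
      have : Nc.mkQ nn = 0 := (Submodule.Quotient.mk_eq_zero Nc).mpr hn
      simp [Submodule.mem_comap, this]
    have hNlt : Nc < Qb.comap Nc.mkQ := by
      refine lt_of_le_of_ne hle fun heq => hQb ?_
      have h1 : (Qb.comap Nc.mkQ).map Nc.mkQ = Qb :=
        Submodule.map_comap_eq_of_surjective (Submodule.mkQ_surjective Nc) Qb
      rw [← heq] at h1
      rw [← h1, eq_bot_iff]
      rintro z ⟨nn, hn, rfl⟩
      simpa using (Submodule.Quotient.mk_eq_zero Nc).mpr hn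
    have hmeet : (Qb.comap Nc.mkQ) ⊓ Eb ≠ ⊥ := by
      intro h
      have := hNc.2 h hNlt.le
      exact hNlt.ne' (le_antisymm this hNlt.le)
    obtain ⟨w, hw, hw0⟩ := (Submodule.ne_bot_iff _).mp hmeet
    rw [Submodule.mem_inf] at hw
    refine (Submodule.ne_bot_iff _).mpr ⟨Nc.mkQ w,
      Submodule.mem_inf.mpr ⟨Submodule.mem_map_of_mem hw.2, hw.1⟩, ?_⟩
    intro h0
    have hwN : w ∈ Nc := (Submodule.Quotient.mk_eq_zero Nc).mp h0
    have : w ∈ Nc ⊓ Eb := Submodule.mem_inf.mpr ⟨hwN, hw.2⟩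
    rw [hNcEb] at this
    exact hw0 this
  -- Step 7: the retraction σ
  have fker : LinearMap.ker (Nc.mkQ.comp Eb.subtype) = ⊥ := by
    rw [eq_bot_iff]
    intro z hz
    rw [LinearMap.mem_ker, LinearMap.comp_apply] at hz
    have : (z : E₀) ∈ Nc ⊓ Eb :=
      Submodule.mem_inf.mpr ⟨(Submodule.Quotient.mk_eq_zero Nc).mp hz, z.2⟩
    rw [hNcEb] at this
    simpa [Submodule.mem_bot] using Subtype.ext (by simpa using this)
  have finj : Function.Injective (Nc.mkQ.comp Eb.subtype) := LinearMap.ker_eq_bot.mp fker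
  obtain ⟨σ, hσ⟩ := hinjE₀.out (Nc.mkQ.comp Eb.subtype) finj Eb.subtype
  have hσ' : ∀ e : E₀, (he : e ∈ Eb) → σ (Nc.mkQ e) = e := fun e he => hσ ⟨e, he⟩
  have hσinj : Function.Injective σ := by
    rw [← LinearMap.ker_eq_bot]
    by_contra hker
    have hA := claimA (LinearMap.ker σ) hker
    obtain ⟨w, hw, hw0⟩ := (Submodule.ne_bot_iff _).mp hA
    rw [Submodule.mem_inf] at hw
    obtain ⟨e, heEb, hew⟩ := hw.1
    have hσw : σ w = e := by rw [← hew]; exact hσ' e heEb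
    have he0 : e = 0 := by rw [← hσw]; exact LinearMap.mem_ker.mp hw.2
    exact hw0 (by rw [← hew, he0, map_zero])
  have hEbrange : Eb ≤ LinearMap.range σ := fun e he => ⟨Nc.mkQ e, hσ' e he⟩
  have hrangeEss : Ess (LinearMap.range σ) := by
    intro Q hQle hQ0
    have hcom : Q.comap σ ≠ ⊥ := by
      obtain ⟨q, hq, hq0⟩ := (Submodule.ne_bot_iff Q).mp hQ0
      obtain ⟨z, rfl⟩ := hQle hq
      exact (Submodule.ne_bot_iff _).mpr ⟨z, hq, fun h => hq0 (by rw [h, map_zero])⟩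
    have hA := claimA _ hcom
    obtain ⟨w, hw, hw0⟩ := (Submodule.ne_bot_iff _).mp hA
    rw [Submodule.mem_inf] at hw
    obtain ⟨e, heEb, hew⟩ := hw.1
    have hσw : σ w = e := by rw [← hew]; exact hσ' e heEb
    have heQ : e ∈ Q := by rw [← hσw]; exact hw.2
    have he0 : e ≠ 0 := by
      intro h
      exact hw0 (hσinj (by rw [hσw, h, map_zero]))
    have hQEb : Q ⊓ Eb ≠ ⊥ :=
      (Submodule.ne_bot_iff _).mpr ⟨e, Submodule.mem_inf.mpr ⟨heQ, heEb⟩, he0⟩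
    have := hEssEb (Q ⊓ Eb) inf_le_right hQEb
    obtain ⟨z, hz, hz0⟩ := (Submodule.ne_bot_iff _).mp this
    rw [Submodule.mem_inf] at hz
    exact (Submodule.ne_bot_iff _).mpr
      ⟨z, Submodule.mem_inf.mpr ⟨hz.1, (Submodule.mem_inf.mp hz.2).1⟩, hz0⟩
  have hF : LinearMap.range σ = Eb :=
    le_antisymm (hEb.2 ⟨le_trans hrangeEb hEbrange, hrangeEss⟩ hEbrange) hEbrange
  have hρmem : ∀ z : E₀, σ (Nc.mkQ z) ∈ Eb := fun z => hF ▸ LinearMap.mem_range_self σ (Nc.mkQ z)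
  -- Step 8: Eb is an injective module
  haveI hinjEb : Module.Injective R ↥Eb := by
    constructor
    intro X Y _ _ _ _ f hf g
    obtain ⟨h, hh⟩ := hinjE₀.out f hf (Eb.subtype.comp g)
    refine ⟨LinearMap.codRestrict Eb ((σ.comp Nc.mkQ).comp h) (fun yy => hρmem _), fun xx => ?_⟩
    apply Subtype.ext
    have h1 : h (f xx) = (g xx : E₀) := hh xx
    simp only [LinearMap.codRestrict_apply, LinearMap.comp_apply, h1]
    exact hσ' _ (g xx).2
  -- Step 9: the simple essential submodule of Eb
  have hyEb : y ∈ Eb := hrangeEb ⟨xb, rfl⟩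
  set y' : ↥Eb := ⟨y, hyEb⟩ with hy'def
  have hy'0 : y' ≠ 0 := fun h => hy0 (by simpa [hy'def, Subtype.ext_iff] using h)
  set S'' : Submodule R ↥Eb := span R {y'} with hS''def
  have hmapS'' : S''.map Eb.subtype = S' := by
    rw [hS''def, Submodule.map_span, hS'def]
    congr 1
    simp [hy'def]
  have hsubinj : Function.Injective Eb.subtype := Submodule.injective_subtype Eb
  have hSimple : IsSimpleModule R ↥S'' := by
    rw [isSimpleModule_iff_isAtom]
    constructor
    · rw [hS''def]
      exact fun h => hy'0 (by rwa [span_singleton_eq_bot] at h)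
    · intro b hb
      by_contra hb0
      have hmapb : b.map Eb.subtype ≠ ⊥ := by
        obtain ⟨z, hz, hz0⟩ := (Submodule.ne_bot_iff b).mp hb0
        exact (Submodule.ne_bot_iff _).mpr ⟨(z : E₀), Submodule.mem_map_of_mem hz,
          fun h => hz0 (Subtype.ext h)⟩
      have hle : b.map Eb.subtype ≤ S' := hmapS'' ▸ Submodule.map_mono hb.le
      have hyb : y ∈ b.map Eb.subtype := HS _ (le_trans hle hS'le) hmapb
      obtain ⟨w, hwb, hw⟩ := hyb
      have hwy : w = y' := Subtype.ext hw
      have : S'' ≤ b := by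
        rw [hS''def, span_le, Set.singleton_subset_iff]
        exact hwy ▸ hwb
      exact absurd (lt_of_lt_of_le hb this) (lt_irrefl b)
  have hEssential : ∀ N : Submodule R ↥Eb, N ≠ ⊥ → S'' ⊓ N ≠ ⊥ := by
    intro N hN
    have hmapN : N.map Eb.subtype ≠ ⊥ := by
      obtain ⟨z, hz, hz0⟩ := (Submodule.ne_bot_iff N).mp hN
      exact (Submodule.ne_bot_iff _).mpr ⟨(z : E₀), Submodule.mem_map_of_mem hz,
        fun h => hz0 (Subtype.ext h)⟩
    have := hEssEb (N.map Eb.subtype) (Submodule.map_subtype_le Eb N) hmapN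
    obtain ⟨z, hz, hz0⟩ := (Submodule.ne_bot_iff _).mp this
    rw [Submodule.mem_inf] at hz
    obtain ⟨w, hwN, hww⟩ := hz.2
    have hwS : w ∈ S'' := by
      have hzS : z ∈ S''.map Eb.subtype := hmapS'' ▸ hz.1
      obtain ⟨v, hv, hvz⟩ := hzS
      have : v = w := hsubinj (by rw [hvz, hww])
      exact this ▸ hv
    refine (Submodule.ne_bot_iff _).mpr ⟨w, Submodule.mem_inf.mpr ⟨hwS, hwN⟩, fun h => hz0 ?_⟩
    rw [← hww, h]
    simp
  -- Step 10: apply the diamond hypothesis to the image of M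
  set φ : M →ₗ[R] ↥Eb :=
    LinearMap.codRestrict Eb (ψ.comp K.mkQ) (fun m => hrangeEb ⟨K.mkQ m, rfl⟩) with hφdef
  have hfgrange : (LinearMap.range φ).FG := by
    rw [LinearMap.range_eq_map]
    exact Submodule.FG.map _ (Module.finite_def.mp hM)
  haveI hart : IsArtinian R ↥(LinearMap.range φ) :=
    hd ↥Eb hinjEb ⟨S'', hSimple, hEssential⟩ _ hfgrange
  haveI hfin : Module.Finite R ↥(LinearMap.range φ) := Module.Finite.iff_fg.mpr hfgrange
  have hlen : IsFiniteLength R ↥(LinearMap.range φ) := hfl _ hfin hart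
  haveI hnoeth : IsNoetherian R ↥(LinearMap.range φ) :=
    (isFiniteLength_iff_isNoetherian_isArtinian.mp hlen).1
  set W := ↥(LinearMap.range φ) with hWdef
  set ρ : M →ₗ[R] W := φ.rangeRestrict with hρdef
  have hρsurj : Function.Surjective ρ := LinearMap.surjective_rangeRestrict φ
  -- Step 11: the chain JⁿW stabilizes; Nakayama
  have hanti : ∀ n : ℕ, J ^ (n + 1) • (⊤ : Submodule R W) ≤ J ^ n • ⊤ := by
    intro n
    rw [Submodule.pow_succ, ← Ideal.smul_eq_mul, Submodule.smul_assoc]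
    exact smul_mono_right _ Submodule.smul_le_right
  have hA : Antitone (fun n : ℕ => J ^ n • (⊤ : Submodule R W)) := antitone_nat_of_succ_le hanti
  obtain ⟨n₀, hn₀⟩ := IsArtinian.monotone_stabilizes
    (⟨fun n => OrderDual.toDual (J ^ n • (⊤ : Submodule R W)),
      fun a b h => hA h⟩ : ℕ →o (Submodule R W)ᵒᵈ)
  have hstabeq : J ^ n₀ • (⊤ : Submodule R W) = J ^ (n₀ + 1) • ⊤ := hn₀ (n₀ + 1) (Nat.le_succ n₀)
  have hstab : J ^ n₀ • (⊤ : Submodule R W) ≤ J • (J ^ n₀ • ⊤) := by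
    have h2 : J ^ (n₀ + 1) • (⊤ : Submodule R W) = J • (J ^ n₀ • ⊤) := by
      rw [Submodule.pow_succ, ← Ideal.smul_eq_mul, Submodule.smul_assoc, aux_smul_comm J ⊤ n₀]
    exact le_of_eq (hstabeq.trans h2)
  have hbot : J ^ n₀ • (⊤ : Submodule R W) = ⊥ :=
    aux_nakayama _ (IsNoetherian.noetherian _) hstab
  -- Step 12: conclusion
  have hxmem : x ∈ J ^ n₀ • (⊤ : Submodule R M) := by
    have := Submodule.mem_iInf (fun n : ℕ => J ^ n • (⊤ : Submodule R M)) |>.mp hx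
    exact this n₀
  have hmap : (J ^ n₀ • (⊤ : Submodule R M)).map ρ = J ^ n₀ • (⊤ : Submodule R W) := by
    rw [Submodule.map_smul'', Submodule.map_top, LinearMap.range_eq_top.mpr hρsurj]
  have hρx : ρ x ∈ J ^ n₀ • (⊤ : Submodule R W) := hmap ▸ Submodule.mem_map_of_mem hxmem
  rw [hbot, Submodule.mem_bot] at hρx
  have hφx : φ x = 0 := by
    have : (ρ x : ↥Eb) = φ x := rfl
    rw [← this, hρx]
    rfl
  apply hy0
  have : (φ x : E₀) = y := rfl
  rw [← this, hφx]
  rfl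
end

section
/- Let (R, m) be a commutative quasi-local ring satisfying (⋄). If m^n is an idempotent ideal for some n ≥ 1, then m^n = 0. -/
section MaxEssential

universe v

variable {R : Type v} [Ring R]

/-- Inside an injective module `Q`, any submodule `M₀` in which `S` is essential is contained
in a submodule `E` which is itself injective and in which `S` is still essential.  (This is the
usual construction of an injective hull as a maximal essential extension inside an injective
module.) -/
theorem exists_essential_injective_extension (Q : Type v) [AddCommGroup Q] [Module R Q]
    [hQ : Module.Injective R Q] (S M₀ : Submodule R Q)
    (h0 : ∀ N ≤ M₀, N ≠ ⊥ → S ⊓ N ≠ ⊥) :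
    ∃ E : Submodule R Q, M₀ ≤ E ∧ (∀ N ≤ E, N ≠ ⊥ → S ⊓ N ≠ ⊥) ∧
      Module.Injective R ↥E := by
  classical
  -- Zorn: a maximal essential extension `E` of `S` containing `M₀`, inside `Q`.
  have hchain1 : ∀ c ⊆ {E' : Submodule R Q | M₀ ≤ E' ∧ ∀ N ≤ E', N ≠ ⊥ → S ⊓ N ≠ ⊥},
      IsChain (· ≤ ·) c → ∀ y ∈ c, ∃ ub ∈
        {E' : Submodule R Q | M₀ ≤ E' ∧ ∀ N ≤ E', N ≠ ⊥ → S ⊓ N ≠ ⊥}, ∀ z ∈ c, z ≤ ub := by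
    intro c hcs hc y hy
    refine ⟨sSup c, ⟨(hcs hy).1.trans (le_sSup hy), fun N hN hNbot hSN => ?_⟩,
      fun z hz => le_sSup hz⟩
    obtain ⟨a, haN, ha0⟩ := Submodule.exists_mem_ne_zero_of_ne_bot hNbot
    obtain ⟨E', hE'c, haE'⟩ :=
      (Submodule.mem_sSup_of_directed ⟨y, hy⟩ hc.directedOn).mp (hN haN)
    refine (hcs hE'c).2 (Submodule.span R {a})
      ((Submodule.span_singleton_le_iff_mem a E').mpr haE')
      (by simpa [Submodule.span_singleton_eq_bot] using ha0) ?_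
    rw [eq_bot_iff, ← hSN]
    exact inf_le_inf_left S ((Submodule.span_singleton_le_iff_mem a N).mpr haN)
  obtain ⟨E, hM₀E, hE⟩ := zorn_le_nonempty₀
    {E' : Submodule R Q | M₀ ≤ E' ∧ ∀ N ≤ E', N ≠ ⊥ → S ⊓ N ≠ ⊥} hchain1 M₀ ⟨le_rfl, h0⟩
  -- Zorn: a maximal complement `C` of `E`.
  have hchain2 : ∀ c ⊆ {C' : Submodule R Q | E ⊓ C' = ⊥}, IsChain (· ≤ ·) c →
      ∀ y ∈ c, ∃ ub ∈ {C' : Submodule R Q | E ⊓ C' = ⊥}, ∀ z ∈ c, z ≤ ub := by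
    intro c hcs hc y hy
    refine ⟨sSup c, ?_, fun z hz => le_sSup hz⟩
    rw [Set.mem_setOf_eq, eq_bot_iff]
    rintro a ha
    obtain ⟨haE, haS⟩ := Submodule.mem_inf.mp ha
    obtain ⟨C', hC'c, haC'⟩ :=
      (Submodule.mem_sSup_of_directed ⟨y, hy⟩ hc.directedOn).mp haS
    have h := hcs hC'c
    rw [Set.mem_setOf_eq] at h
    exact h ▸ Submodule.mem_inf.mpr ⟨haE, haC'⟩
  obtain ⟨C, -, hC⟩ := zorn_le_nonempty₀ {C' : Submodule R Q | E ⊓ C' = ⊥} hchain2 ⊥ (by simp)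
  have hEC : E ⊓ C = ⊥ := hC.1
  -- the image of `E` in `Q ⧸ C` is essential
  have stepA : ∀ N' : Submodule R (Q ⧸ C), N' ≠ ⊥ → E.map C.mkQ ⊓ N' ≠ ⊥ := by
    intro N' hN'
    obtain ⟨z, hzN', hz0⟩ := Submodule.exists_mem_ne_zero_of_ne_bot hN'
    obtain ⟨y, rfl⟩ := C.mkQ_surjective z
    have hyC : y ∉ C := fun h =>
      hz0 (by rwa [Submodule.mkQ_apply, Submodule.Quotient.mk_eq_zero])
    have hne : E ⊓ (C ⊔ Submodule.span R {y}) ≠ ⊥ := by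
      intro h
      exact hyC (hC.2 h le_sup_left
        (Submodule.mem_sup_right (Submodule.mem_span_singleton_self y)))
    obtain ⟨e, he, he0⟩ := Submodule.exists_mem_ne_zero_of_ne_bot hne
    obtain ⟨heE, heCS⟩ := Submodule.mem_inf.mp he
    obtain ⟨cc, hcc, sy, hsy, rfl⟩ := Submodule.mem_sup.mp heCS
    obtain ⟨r, rfl⟩ := Submodule.mem_span_singleton.mp hsy
    intro hbot
    have h1 : C.mkQ (cc + r • y) ∈ E.map C.mkQ ⊓ N' := by
      refine Submodule.mem_inf.mpr ⟨Submodule.mem_map_of_mem heE, ?_⟩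
      have hcc0 : C.mkQ cc = 0 := (Submodule.Quotient.mk_eq_zero C).mpr hcc
      have : C.mkQ (cc + r • y) = r • C.mkQ y := by
        rw [map_add, map_smul, hcc0, zero_add]
      rw [this]
      exact N'.smul_mem r hzN'
    rw [hbot, Submodule.mem_bot] at h1
    have : cc + r • y ∈ E ⊓ C := Submodule.mem_inf.mpr
      ⟨heE, (Submodule.Quotient.mk_eq_zero C).mp (by rwa [Submodule.mkQ_apply] at h1)⟩
    rw [hEC, Submodule.mem_bot] at this
    exact he0 this
  -- the natural map `E → Q ⧸ C` is injective
  have hmem0 : ∀ e : Q, e ∈ E → C.mkQ e = 0 → e = 0 := by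
    intro e heE h
    have : e ∈ E ⊓ C := Submodule.mem_inf.mpr
      ⟨heE, (Submodule.Quotient.mk_eq_zero C).mp (by rwa [Submodule.mkQ_apply] at h)⟩
    rwa [hEC, Submodule.mem_bot] at this
  set f : ↥E →ₗ[R] Q ⧸ C := C.mkQ ∘ₗ E.subtype with hfdef
  have hf : Function.Injective f := by
    rw [injective_iff_map_eq_zero]
    intro a ha
    exact Subtype.ext (hmem0 a a.2 ha)
  -- extend the inclusion `E ↪ Q` along `f` using injectivity of `Q`
  obtain ⟨h, hh⟩ := hQ.out f hf E.subtype
  -- `h` is injective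
  have hh_inj : Function.Injective h := by
    rw [injective_iff_map_eq_zero]
    intro z hz
    by_contra hz0
    have hzspan : Submodule.span R {z} ≠ ⊥ := by
      simpa [Submodule.span_singleton_eq_bot] using hz0
    obtain ⟨w, hw, hw0⟩ := Submodule.exists_mem_ne_zero_of_ne_bot (stepA _ hzspan)
    obtain ⟨hwE, hwz⟩ := Submodule.mem_inf.mp hw
    obtain ⟨e, heE, hew⟩ := Submodule.mem_map.mp hwE
    obtain ⟨r, rfl⟩ := Submodule.mem_span_singleton.mp hwz
    have h1 : h (r • z) = e := by
      rw [← hew]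
      exact hh ⟨e, heE⟩
    have h2 : h (r • z) = 0 := by rw [map_smul, hz, smul_zero]
    rw [h1] at h2
    subst h2
    rw [map_zero] at hew
    exact hw0 hew.symm
  -- `E ≤ range h`
  have hEr : E ≤ LinearMap.range h := fun a haE => ⟨f ⟨a, haE⟩, hh ⟨a, haE⟩⟩
  -- the range of `h` is an essential extension of `S` containing `M₀`; by maximality it is `E`
  have hrE : LinearMap.range h = E := by
    refine le_antisymm (hE.2 ⟨hE.1.1.trans hEr, ?_⟩ hEr) hEr
    intro N hN hNbot hSN
    obtain ⟨a, haN, ha0⟩ := Submodule.exists_mem_ne_zero_of_ne_bot hNbot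
    obtain ⟨z, hz⟩ := hN haN
    have hz0 : z ≠ 0 := fun h0 => ha0 (by rw [← hz, h0, map_zero])
    have hzspan : Submodule.span R {z} ≠ ⊥ := by
      simpa [Submodule.span_singleton_eq_bot] using hz0
    obtain ⟨w, hw, hw0⟩ := Submodule.exists_mem_ne_zero_of_ne_bot (stepA _ hzspan)
    obtain ⟨hwE, hwz⟩ := Submodule.mem_inf.mp hw
    obtain ⟨e, heE, hew⟩ := Submodule.mem_map.mp hwE
    obtain ⟨r, rfl⟩ := Submodule.mem_span_singleton.mp hwz
    have h1 : h (r • z) = e := by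
      rw [← hew]
      exact hh ⟨e, heE⟩
    have h2 : h (r • z) = r • a := by rw [map_smul, hz]
    have he0 : e ≠ 0 := by
      intro h0
      apply hw0
      apply hh_inj
      rw [h1, h0, map_zero]
    have heEN : e ∈ E ⊓ N := Submodule.mem_inf.mpr ⟨heE, by rw [← h1, h2]; exact N.smul_mem r haN⟩
    have hEN : E ⊓ N ≠ ⊥ := fun hb => he0 (by rw [hb, Submodule.mem_bot] at heEN; exact heEN)
    refine hE.1.2 (E ⊓ N) inf_le_left hEN ?_
    rw [eq_bot_iff, ← hSN, ← inf_assoc]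
    exact inf_le_inf_right N inf_le_left
  -- hence `E ⊔ C = ⊤`, so `E` is a direct summand of `Q`
  have hcod : E ⊔ C = ⊤ := by
    have hmap : Submodule.map C.mkQ E = ⊤ := by
      rw [eq_top_iff]
      rintro z -
      have hzE : h z ∈ E := hrE ▸ LinearMap.mem_range_self h z
      refine Submodule.mem_map.mpr ⟨h z, hzE, ?_⟩
      refine hh_inj ?_
      exact hh ⟨h z, hzE⟩
    rw [Submodule.map_mkQ_eq_top] at hmap
    rwa [sup_comm]
  have hcompl : IsCompl E C := ⟨disjoint_iff.mpr hEC, codisjoint_iff.mpr hcod⟩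
  -- a retraction `Q → E` makes `E` injective
  refine ⟨E, hE.1.1, hE.1.2, ⟨?_⟩⟩
  intro X Y _ _ _ _ g hg g'
  obtain ⟨h', hh'⟩ := hQ.out g hg (E.subtype ∘ₗ g')
  refine ⟨(Submodule.linearProjOfIsCompl E C hcompl) ∘ₗ h', fun x => ?_⟩
  rw [LinearMap.comp_apply, hh' x, LinearMap.comp_apply]
  exact Submodule.linearProjOfIsCompl_apply_left hcompl (g' x)

end MaxEssential

open IsLocalRing in
/-- If a commutative quasi-local ring `(R, 𝔪)` satisfies (⋄) and `𝔪^n` is idempotent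
for some `n ≥ 1`, then `𝔪^n = 0`. -/
theorem maximalIdeal_pow_eq_bot_of_idempotent (R : Type u) [CommRing R] [IsLocalRing R]
    (hd : HasDiamond R) (n : ℕ) (hn : 1 ≤ n)
    (hidem : maximalIdeal R ^ n * maximalIdeal R ^ n = maximalIdeal R ^ n) :
    maximalIdeal R ^ n = ⊥ := by
  classical
  by_contra hI0
  set I : Ideal R := maximalIdeal R ^ n with hIdef
  obtain ⟨x, hxI, hx0⟩ := Submodule.exists_mem_ne_zero_of_ne_bot hI0
  -- Zorn: an ideal `P` maximal with respect to `x ∉ P`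
  have hchain3 : ∀ c ⊆ {J : Ideal R | x ∉ J}, IsChain (· ≤ ·) c →
      ∀ y ∈ c, ∃ ub ∈ {J : Ideal R | x ∉ J}, ∀ z ∈ c, z ≤ ub := by
    intro c hcs hc y hy
    refine ⟨sSup c, ?_, fun z hz => le_sSup hz⟩
    intro hx
    obtain ⟨J, hJc, hxJ⟩ :=
      (Submodule.mem_sSup_of_directed ⟨y, hy⟩ hc.directedOn).mp hx
    exact hcs hJc hxJ
  obtain ⟨P, -, hP⟩ := zorn_le_nonempty₀ {J : Ideal R | x ∉ J} hchain3 ⊥ (by simpa using hx0)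
  have hxP : x ∉ P := hP.1
  have hPtop : P ≠ ⊤ := fun h => hxP (h ▸ Submodule.mem_top)
  -- the cyclic module `R ⧸ P` and its embedding into an injective module
  let Qc : ModuleCat.{u} R := CategoryTheory.Injective.under (ModuleCat.of R (R ⧸ P))
  let ι : ModuleCat.of R (R ⧸ P) ⟶ Qc := CategoryTheory.Injective.ι _
  have hι : Function.Injective ι := (ModuleCat.mono_iff_injective _).mp inferInstance
  haveI hQI : CategoryTheory.Injective (ModuleCat.of R ↥Qc) :=
    (inferInstance : CategoryTheory.Injective Qc)
  haveI hQinj : Module.Injective R ↥Qc := Module.injective_module_of_injective_object R ↥Qc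
  set M₀ : Submodule R ↥Qc := LinearMap.range ι.hom with hM₀def
  set xQ : ↥Qc := ι (Submodule.Quotient.mk x) with hxQdef
  set vQ : ↥Qc := ι (Submodule.Quotient.mk 1) with hvQdef
  set S : Submodule R ↥Qc := Submodule.span R {xQ} with hSdef
  have hxbar0 : (Submodule.Quotient.mk x : R ⧸ P) ≠ 0 := fun h =>
    hxP ((Submodule.Quotient.mk_eq_zero P).mp h)
  have hxQ0 : xQ ≠ 0 := fun h => hxbar0 (hι (by rwa [map_zero]))
  have hS0 : S ≠ ⊥ := by simpa [hSdef, Submodule.span_singleton_eq_bot] using hxQ0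
  have hSM₀ : S ≤ M₀ := by
    rw [hSdef, Submodule.span_singleton_le_iff_mem]
    exact ⟨Submodule.Quotient.mk x, rfl⟩
  -- every nonzero element of `R ⧸ P` generates a submodule containing the class of `x`
  have hmin : ∀ m : R ⧸ P, m ≠ 0 → ∃ r : R, r • m = Submodule.Quotient.mk x := by
    intro m hm
    obtain ⟨a, rfl⟩ := Submodule.Quotient.mk_surjective P m
    have haP : a ∉ P := fun h => hm ((Submodule.Quotient.mk_eq_zero P).mpr h)
    have hxJ : x ∈ P ⊔ Ideal.span {a} := by
      by_contra hxJ
      exact haP (hP.2 hxJ le_sup_left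
        (Submodule.mem_sup_right (Ideal.subset_span (Set.mem_singleton a))))
    obtain ⟨p, hp, t, ht, heq⟩ := Submodule.mem_sup.mp hxJ
    obtain ⟨r, hr⟩ := Ideal.mem_span_singleton'.mp ht
    refine ⟨r, ?_⟩
    have h1 : r • (Submodule.Quotient.mk a : R ⧸ P) = Submodule.Quotient.mk (r * a) := by
      rw [← smul_eq_mul, Submodule.Quotient.mk_smul]
    rw [h1, hr]
    rw [← heq]
    have : (Submodule.Quotient.mk (p + t) : R ⧸ P) =
        Submodule.Quotient.mk p + Submodule.Quotient.mk t := by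
      rw [Submodule.Quotient.mk_add]
    rw [this, (Submodule.Quotient.mk_eq_zero P).mpr hp, zero_add]
  -- hence `S` is contained in every nonzero submodule of `M₀`
  have hSle : ∀ N ≤ M₀, N ≠ ⊥ → S ≤ N := by
    intro N hNM hN
    obtain ⟨w, hwN, hw0⟩ := Submodule.exists_mem_ne_zero_of_ne_bot hN
    obtain ⟨m, hm⟩ := hNM hwN
    have hm0 : m ≠ 0 := fun h => hw0 (by rw [← hm, h, map_zero])
    obtain ⟨r, hr⟩ := hmin m hm0
    have hxQN : xQ ∈ N := by
      have hx' : xQ = r • w := by rw [← hm, ← map_smul, hr]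
      rw [hx']
      exact N.smul_mem r hwN
    rw [hSdef, Submodule.span_singleton_le_iff_mem]
    exact hxQN
  have hess : ∀ N ≤ M₀, N ≠ ⊥ → S ⊓ N ≠ ⊥ := by
    intro N hNM hN
    rw [inf_eq_left.mpr (hSle N hNM hN)]
    exact hS0
  -- `S` is simple
  haveI hSsimple : IsSimpleModule R ↥S := by
    rw [isSimpleModule_iff_isAtom]
    refine ⟨hS0, fun N hN => ?_⟩
    by_contra hN0
    exact hN.not_ge (hSle N (hN.le.trans hSM₀) hN0)
  -- pass to a maximal essential extension `E`, which is injective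
  obtain ⟨E, hM₀E, hessE, hEinj⟩ :=
    exists_essential_injective_extension (↥Qc) S M₀ hess
  have hSE : S ≤ E := hSM₀.trans hM₀E
  -- apply property (⋄)
  have hdiamond : ∀ N : Submodule R ↥E, N.FG → IsArtinian R N := by
    refine hd ↥E hEinj ⟨S.comap E.subtype, ?_, ?_⟩
    · exact IsSimpleModule.congr (Submodule.comapSubtypeEquivOfLe hSE)
    · intro N' hN'
      obtain ⟨u, huN', hu0⟩ := Submodule.exists_mem_ne_zero_of_ne_bot hN'
      have hmapbot : N'.map E.subtype ≠ ⊥ := by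
        intro h
        apply hu0
        have : (↑u : ↥Qc) ∈ N'.map E.subtype := Submodule.mem_map_of_mem huN'
        rw [h, Submodule.mem_bot] at this
        exact Subtype.ext this
      obtain ⟨w, hw, hw0⟩ := Submodule.exists_mem_ne_zero_of_ne_bot
        (hessE (N'.map E.subtype) (Submodule.map_subtype_le E N') hmapbot)
      obtain ⟨hwS, hwN⟩ := Submodule.mem_inf.mp hw
      obtain ⟨u', hu'N', rfl⟩ := Submodule.mem_map.mp hwN
      intro hbot
      have hmem : u' ∈ S.comap E.subtype ⊓ N' :=
        Submodule.mem_inf.mpr ⟨Submodule.mem_comap.mpr hwS, hu'N'⟩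
      rw [hbot, Submodule.mem_bot] at hmem
      exact hw0 (by rw [hmem]; rfl)
  -- the cyclic submodule generated by the class of `1` is Artinian
  have hvQE : vQ ∈ E := hM₀E ⟨Submodule.Quotient.mk 1, rfl⟩
  set vE : ↥E := ⟨vQ, hvQE⟩ with hvEdef
  have hart : IsArtinian R ↥(Submodule.span R {vE}) :=
    hdiamond _ (Submodule.fg_span_singleton vE)
  -- transfer Artinianness to `R ⧸ P`
  set vN : ↥(Submodule.span R {vE}) := ⟨vE, Submodule.mem_span_singleton_self vE⟩ with hvNdef
  set ψ : R →ₗ[R] ↥(Submodule.span R {vE}) := LinearMap.toSpanSingleton R _ vN with hψdef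
  have hkerψ : LinearMap.ker ψ = P := by
    ext r
    have h1 : ψ r = r • vN := rfl
    have h2 : r • (Submodule.Quotient.mk 1 : R ⧸ P) = Submodule.Quotient.mk r := by
      rw [← Submodule.Quotient.mk_smul, smul_eq_mul, mul_one]
    constructor
    · intro hr
      rw [LinearMap.mem_ker, h1] at hr
      have hvE0 : r • vE = 0 := by
        have := congrArg Subtype.val hr
        exact this
      have : r • vQ = 0 := by
        have := congrArg Subtype.val hvE0
        exact this
      have : ι (r • (Submodule.Quotient.mk 1 : R ⧸ P)) = 0 := by
        rwa [map_smul]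
      have h3 : r • (Submodule.Quotient.mk 1 : R ⧸ P) = 0 := hι (by rwa [map_zero])
      rw [h2] at h3
      exact (Submodule.Quotient.mk_eq_zero P).mp h3
    · intro hr
      rw [LinearMap.mem_ker, h1]
      have h3 : r • vQ = 0 := by
        rw [hvQdef, ← map_smul, h2, (Submodule.Quotient.mk_eq_zero P).mpr hr, map_zero]
      refine Subtype.ext (Subtype.ext ?_)
      exact h3
  set φ : (R ⧸ P) →ₗ[R] ↥(Submodule.span R {vE}) := P.liftQ ψ hkerψ.ge with hφdef
  have hφinj : Function.Injective φ := by
    rw [← LinearMap.ker_eq_bot, Submodule.ker_liftQ_eq_bot]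
    exact hkerψ.le
  haveI hartP : IsArtinian R (R ⧸ P) := isArtinian_of_injective φ hφinj
  -- `R ⧸ P` is an Artinian local ring
  haveI : Nontrivial (R ⧸ P) := Ideal.Quotient.nontrivial_iff.mpr hPtop
  haveI : IsArtinianRing (R ⧸ P) := isArtinian_of_tower R hartP
  haveI : IsLocalRing (R ⧸ P) :=
    IsLocalRing.of_surjective' (Ideal.Quotient.mk P) Ideal.Quotient.mk_surjective
  -- the image `J` of `I` in `R ⧸ P` is idempotent and contained in the Jacobson radical
  set J : Ideal (R ⧸ P) := I.map (Ideal.Quotient.mk P) with hJdef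
  have hJidem : J * J = J := by rw [hJdef, ← Ideal.map_mul, hidem]
  have hcom : Ideal.comap (Ideal.Quotient.mk P) (maximalIdeal (R ⧸ P)) = maximalIdeal R :=
    IsLocalRing.eq_maximalIdeal
      (Ideal.comap_isMaximal_of_surjective _ Ideal.Quotient.mk_surjective)
  have hJle : J ≤ Ideal.jacobson ⊥ := by
    rw [IsLocalRing.jacobson_eq_maximalIdeal (⊥ : Ideal (R ⧸ P)) bot_ne_top]
    rw [hJdef, Ideal.map_le_iff_le_comap, hcom]
    exact Ideal.pow_le_self (by omega)
  obtain ⟨k, hk⟩ := IsArtinianRing.isNilpotent_jacobson_bot (R := R ⧸ P)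
  have hk0 : k ≠ 0 := by
    rintro rfl
    rw [pow_zero] at hk
    have h01 : (1 : R ⧸ P) ∈ (⊥ : Ideal (R ⧸ P)) := by
      have : (1 : R ⧸ P) ∈ (1 : Ideal (R ⧸ P)) := by
        rw [Ideal.one_eq_top]; exact Submodule.mem_top
      rwa [hk] at this
    rw [Ideal.mem_bot] at h01
    exact one_ne_zero h01
  have hJk : ∀ m : ℕ, 1 ≤ m → J ^ m = J := by
    intro m hm
    induction m with
    | zero => omega
    | succ l ih =>
      rcases Nat.eq_or_lt_of_le hm with h | h
      · rw [← h, pow_one]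
      · have hl : 1 ≤ l := by omega
        rw [pow_succ, ih hl, hJidem]
  have hJbot : J = ⊥ := by
    have h1 : J ≤ (Ideal.jacobson (⊥ : Ideal (R ⧸ P))) ^ k :=
      (hJk k (Nat.one_le_iff_ne_zero.mpr hk0)) ▸ Ideal.pow_right_mono hJle k
    rw [hk] at h1
    exact le_bot_iff.mp h1
  have hIP : I ≤ P := by
    intro a haI
    have h1 : Ideal.Quotient.mk P a ∈ J := Ideal.mem_map_of_mem _ haI
    rw [hJbot, Ideal.mem_bot] at h1
    exact Ideal.Quotient.eq_zero_iff_mem.mp h1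
  exact hxP (hIP hxI)
end

section
/- If R is a ring such that R/Soc(R) is Artinian as a left R-module, then R satisfies (⋄), i.e., for every left ideal I such that R/I has an essential simple socle, R/I is Artinian. -/
/-- The socle of a module: the sum of all its simple submodules. -/
def socle (R : Type u) (M : Type v) [Ring R] [AddCommGroup M] [Module R M] :
    Submodule R M :=
  sSup {S : Submodule R M | IsSimpleModule R S}

/-- A simple module is Artinian. -/
theorem isArtinian_of_isSimpleModule {R M : Type*} [Ring R] [AddCommGroup M] [Module R M]
    [IsSimpleModule R M] : IsArtinian R M := by
  have : Finite (Submodule R M) := by open IsSimpleOrder in infer_instance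
  exact Finite.to_wellFoundedLT

/-- If `R/Soc(R)` is Artinian as a left `R`-module, then `R` satisfies (⋄): for every
left ideal `I` such that `R/I` has an essential simple socle, `R/I` is Artinian. -/
theorem diamond_of_quotient_socle_artinian (R : Type u) [Ring R]
    (h : IsArtinian R (R ⧸ socle R R))
    (I : Ideal R)
    (hI : ∃ S : Submodule R (R ⧸ I), IsSimpleModule R S ∧
      ∀ N : Submodule R (R ⧸ I), N ≠ ⊥ → S ⊓ N ≠ ⊥) :
    IsArtinian R (R ⧸ I) := by
  obtain ⟨S, hS, hSess⟩ := hI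
  set N : Submodule R (R ⧸ I) := (socle R R).map I.mkQ with hN
  -- Step 1 : N ≤ S
  have hNS : N ≤ S := by
    rw [hN, socle, Submodule.map_le_iff_le_comap]
    apply sSup_le
    intro T hT
    rw [← Submodule.map_le_iff_le_comap]
    haveI : IsSimpleModule R T := hT
    -- T.map I.mkQ is ⊥ or a simple submodule
    set f : T →ₗ[R] R ⧸ I := I.mkQ ∘ₗ T.subtype with hf
    have hrange : LinearMap.range f = T.map I.mkQ := by
      rw [hf, LinearMap.range_comp, Submodule.range_subtype]
    rcases eq_bot_or_eq_top (LinearMap.ker f) with hker | hker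
    · -- f injective, so the image is simple
      have hinj : Function.Injective f := LinearMap.ker_eq_bot.mp hker
      haveI hsimp : IsSimpleModule R (T.map I.mkQ) := by
        rw [← hrange]
        exact IsSimpleModule.congr (LinearEquiv.ofInjective f hinj).symm
      -- a simple submodule is ≤ S by essentiality
      by_cases hbot : T.map I.mkQ = ⊥
      · rw [hbot]; exact bot_le
      · have hmeet : S ⊓ T.map I.mkQ ≠ ⊥ := hSess _ hbot
        have hatom : IsAtom (T.map I.mkQ) := IsSimpleModule.isAtom
        have hle : S ⊓ T.map I.mkQ ≤ T.map I.mkQ := inf_le_right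
        rcases hatom.le_iff.mp hle with h' | h'
        · exact absurd h' hmeet
        · calc T.map I.mkQ = S ⊓ T.map I.mkQ := h'.symm
            _ ≤ S := inf_le_left
    · -- f = 0
      have : T.map I.mkQ = ⊥ := by
        rw [← hrange, LinearMap.range_eq_bot]
        ext x
        have : (x : T) ∈ LinearMap.ker f := hker ▸ Submodule.mem_top
        simpa using this
      rw [this]; exact bot_le
  -- Step 2 : N is Artinian
  haveI hNart : IsArtinian R N := by
    have hatomS : IsAtom S := IsSimpleModule.isAtom
    rcases hatomS.le_iff.mp hNS with h' | h'
    · haveI : Subsingleton (↥(⊥ : Submodule R (R ⧸ I))) := inferInstance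
      haveI : Subsingleton N := h' ▸ this
      haveI : Subsingleton (Submodule R N) := inferInstance
      haveI : Finite (Submodule R N) := Finite.of_subsingleton
      exact Finite.to_wellFoundedLT
    · haveI : IsSimpleModule R N := h' ▸ hS
      exact isArtinian_of_isSimpleModule
  -- Step 3 : (R ⧸ I) ⧸ N is Artinian, being an image of R ⧸ socle R R
  haveI hQart : IsArtinian R ((R ⧸ I) ⧸ N) := by
    have hle : socle R R ≤ LinearMap.ker (N.mkQ ∘ₗ I.mkQ) := by
      intro x hx
      simp only [LinearMap.mem_ker, LinearMap.comp_apply, Submodule.mkQ_apply]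
      exact (Submodule.Quotient.mk_eq_zero N).mpr (Submodule.mem_map_of_mem hx)
    let g : (R ⧸ socle R R) →ₗ[R] (R ⧸ I) ⧸ N := Submodule.liftQ _ (N.mkQ ∘ₗ I.mkQ) hle
    have hsurj : Function.Surjective g := by
      intro y
      obtain ⟨z, rfl⟩ := Submodule.mkQ_surjective N y
      obtain ⟨r, rfl⟩ := Submodule.mkQ_surjective I z
      exact ⟨Submodule.Quotient.mk r, rfl⟩
    exact isArtinian_of_surjective _ g hsurj
  -- Conclude
  exact (isArtinian_iff_submodule_quotient N).mpr ⟨hNart, hQart⟩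
end

section
/- Let (R, m) be a commutative quasi-local ring. If R satisfies ⋂_{n≥0}(I + m^n) = I for every ideal I, and m/m^2 is a finitely generated R-module, then R is Noetherian. -/
open MvPolynomial

private lemma KIaux.degOfMem {R σ : Type*} [CommRing R] {p : MvPolynomial σ R} {n : ℕ}
    (hp : p.IsHomogeneous n) {d : σ →₀ ℕ} (hd : d ∈ p.support) :
    d.degree = n := by
  by_contra h
  exact MvPolynomial.mem_support_iff.mp hd (hp.coeff_eq_zero h)

private lemma KIaux.prodPowMem {R : Type*} [CommRing R] (m : Ideal R) {ι : Type*}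
    (x : ι → R) (hx : ∀ i, x i ∈ m) (s : Finset ι) (d : ι → ℕ) :
    ∏ i ∈ s, x i ^ d i ∈ m ^ (∑ i ∈ s, d i) := by
  classical
  induction s using Finset.induction_on with
  | empty => simp [Ideal.one_eq_top]
  | @insert a s ha ih =>
    rw [Finset.prod_insert ha, Finset.sum_insert ha, pow_add]
    exact Ideal.mul_mem_mul (Ideal.pow_mem_pow (hx _) _) ih

private lemma KIaux.evalMem {R : Type*} [CommRing R] (m K : Ideal R) {σ : Type*}
    (x : σ → R) (hx : ∀ i, x i ∈ m) {p : MvPolynomial σ R} {n : ℕ}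
    (hp : p.IsHomogeneous n) (hc : ∀ d, p.coeff d ∈ K) :
    MvPolynomial.eval x p ∈ K * m ^ n := by
  rw [MvPolynomial.eval_eq]
  refine Ideal.sum_mem _ fun d hd => ?_
  have hdeg : (∑ i ∈ d.support, d i) = n := by
    simpa [Finsupp.degree_apply] using KIaux.degOfMem hp hd
  exact hdeg ▸ Ideal.mul_mem_mul (hc d) (KIaux.prodPowMem m x hx _ _)

private lemma KIaux.existsHomogEval {R : Type*} [CommRing R] {σ : Type*} [Fintype σ]
    (x : σ → R) (n : ℕ) {c : R} (hc : c ∈ (Ideal.span (Set.range x)) ^ n) :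
    ∃ p : MvPolynomial σ R, p.IsHomogeneous n ∧ MvPolynomial.eval x p = c := by
  induction n generalizing c with
  | zero =>
    exact ⟨MvPolynomial.C c, MvPolynomial.isHomogeneous_C _ _, MvPolynomial.eval_C _⟩
  | succ n ih =>
    rw [pow_succ] at hc
    refine Submodule.mul_induction_on hc ?_ ?_
    · intro a ha b hb
      obtain ⟨p, hp, hpe⟩ := ih ha
      obtain ⟨cf, hcf⟩ := Submodule.mem_span_range_iff_exists_fun _ |>.mp hb
      refine ⟨p * ∑ i, MvPolynomial.C (cf i) * MvPolynomial.X i,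
        hp.mul (MvPolynomial.IsHomogeneous.sum _ _ _ fun i _ =>
          MvPolynomial.isHomogeneous_C_mul_X _ _), ?_⟩
      rw [map_mul, hpe, map_sum]
      simp only [map_mul, MvPolynomial.eval_C, MvPolynomial.eval_X]
      rw [← hcf]
      simp [smul_eq_mul]
    · rintro u v ⟨p, hp, rfl⟩ ⟨q, hq, rfl⟩
      exact ⟨p + q, hp.add hq, map_add _ _ _⟩

private lemma KIaux.homogCompMul {R σ : Type*} [CommRing R] (q τ : MvPolynomial σ R) {d : ℕ}
    (hτ : τ.IsHomogeneous d) (n : ℕ) :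
    homogeneousComponent n (q * τ) =
      if d ≤ n then homogeneousComponent (n - d) q * τ else 0 := by
  classical
  conv_lhs => rw [← q.sum_homogeneousComponent, Finset.sum_mul, map_sum]
  have hterm : ∀ i, homogeneousComponent n (homogeneousComponent i q * τ) =
      if n = i + d then homogeneousComponent i q * τ else 0 := fun i =>
    homogeneousComponent_of_mem ((homogeneousComponent_isHomogeneous i q).mul hτ)
  simp only [hterm]
  by_cases hd : d ≤ n
  · have hcond : ∀ i, (n = i + d) = (i = n - d) := fun i => by
      apply propext; omega
    simp only [hcond]
    rw [Finset.sum_ite_eq' (Finset.range (q.totalDegree + 1)) (n - d)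
      (fun i => homogeneousComponent i q * τ), if_pos hd]
    split_ifs with h
    · rfl
    · rw [homogeneousComponent_eq_zero, zero_mul]
      simp only [Finset.mem_range, not_lt] at h
      omega
  · rw [if_neg hd]
    refine Finset.sum_eq_zero fun i _ => ?_
    rw [if_neg]; omega

private lemma KIaux.existsHomogLift {R S σ : Type*} [CommRing R] [CommRing S] {f : R →+* S}
    (hf : Function.Surjective f) {pb : MvPolynomial σ S} {n : ℕ}
    (hp : pb.IsHomogeneous n) :
    ∃ p : MvPolynomial σ R, p.IsHomogeneous n ∧ MvPolynomial.map f p = pb := by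
  classical
  refine ⟨∑ d ∈ pb.support, monomial d (Function.surjInv hf (pb.coeff d)), ?_, ?_⟩
  · exact MvPolynomial.IsHomogeneous.sum _ _ _ fun d hd =>
      isHomogeneous_monomial _ (KIaux.degOfMem hp hd)
  · rw [map_sum]
    simp only [map_monomial, Function.surjInv_eq hf]
    exact pb.as_sum.symm

open IsLocalRing in
private lemma KIaux.maximalIdealFG (R : Type*) [CommRing R] [IsLocalRing R]
    (hint : ∀ I : Ideal R, ⨅ n : ℕ, (I + maximalIdeal R ^ n) = I)
    (hfg : Module.Finite R
      (↥(maximalIdeal R) ⧸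
        (Submodule.comap (maximalIdeal R).subtype (maximalIdeal R ^ 2)))) :
    (maximalIdeal R).FG := by
  classical
  set m := maximalIdeal R with hm
  set N := Submodule.comap m.subtype (m ^ 2) with hN
  obtain ⟨s, hs⟩ := hfg.fg_top
  have hsurj := N.mkQ_surjective
  choose g hg using hsurj
  set Y : Set R := (m.subtype '' (g '' ↑s)) with hY
  have hYfin : Y.Finite := ((s.finite_toSet.image g).image _)
  set J : Ideal R := Ideal.span Y with hJ
  have h1 : Submodule.span R (g '' ↑s) ⊔ N = ⊤ := by
    rw [sup_comm, ← Submodule.map_mkQ_eq_top]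
    rw [Submodule.map_span]
    rw [← Set.image_comp]
    have : (⇑N.mkQ ∘ g) '' ↑s = ↑s := by
      ext y; constructor
      · rintro ⟨z, hz, rfl⟩; simpa [Function.comp, hg] using hz
      · intro hy; exact ⟨y, hy, by simp [Function.comp, hg]⟩
    rw [this, hs]
  have h2 : (m : Submodule R R) = J ⊔ m ^ 2 := by
    have := congrArg (Submodule.map m.subtype) h1
    rw [Submodule.map_sup, Submodule.map_span, Submodule.map_subtype_top,
      Submodule.map_comap_subtype] at this
    have hle : (m : Submodule R R) ⊓ m ^ 2 = (m ^ 2 : Ideal R) :=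
      inf_eq_right.mpr (Ideal.pow_le_self two_ne_zero)
    rw [hle] at this
    exact this.symm
  have hchain : ∀ n : ℕ, (m : Ideal R) ≤ J ⊔ m ^ n := by
    intro n
    induction n with
    | zero => simp [Ideal.one_eq_top]
    | succ n ih =>
      have h3 : m ^ 2 ≤ J ⊔ m ^ (n + 1) := by
        have hsq : (m : Ideal R) ^ 2 = m * m := sq m
        rw [hsq]
        calc m * m ≤ m * (J ⊔ m ^ n) := Ideal.mul_mono_right ih
          _ = m * J ⊔ m * m ^ n := Ideal.mul_sup _ _ _
          _ ≤ J ⊔ m ^ (n + 1) := by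
            apply sup_le_sup
            · exact Ideal.mul_le.mpr fun a _ b hb => J.mul_mem_left a hb
            · rw [pow_succ, mul_comm]
      calc (m : Ideal R) = J ⊔ m ^ 2 := h2
        _ ≤ J ⊔ (J ⊔ m ^ (n+1)) := sup_le_sup_left h3 _
        _ = J ⊔ m ^ (n+1) := by rw [← sup_assoc, sup_idem]
  have hmJ : (m : Ideal R) = J := by
    have hle : m ≤ ⨅ n : ℕ, (J + m ^ n) := le_iInf fun n => by
      rw [Ideal.add_eq_sup]; exact hchain n
    rw [hint J] at hle
    refine le_antisymm hle (Ideal.span_le.mpr ?_)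
    rintro y ⟨z, -, rfl⟩
    exact z.2
  rw [hmJ, hJ]
  exact Submodule.fg_span hYfin

open IsLocalRing in
/-- Let `(R, 𝔪)` be a commutative quasi-local ring.  If `⋂ₙ (I + 𝔪ⁿ) = I` for every
ideal `I` of `R` and `𝔪/𝔪²` is a finitely generated `R`-module, then `R` is
Noetherian. -/
theorem noetherian_of_krull_intersection_and_cotangent_fg (R : Type u) [CommRing R]
    [IsLocalRing R]
    (hint : ∀ I : Ideal R, ⨅ n : ℕ, (I + maximalIdeal R ^ n) = I)
    (hfg : Module.Finite R
      (↥(maximalIdeal R) ⧸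
        (Submodule.comap (maximalIdeal R).subtype (maximalIdeal R ^ 2)))) :
    IsNoetherianRing R := by
  classical
  obtain ⟨r, x, hxspan⟩ :=
    Submodule.fg_iff_exists_fin_generating_family.mp (KIaux.maximalIdealFG R hint hfg)
  set m := maximalIdeal R with hmdef
  have hx : ∀ i, x i ∈ m := fun i => hxspan ▸ Submodule.subset_span ⟨i, rfl⟩
  rw [isNoetherianRing_iff_ideal_fg]
  intro I
  set k := ResidueField R with hkdef
  have hres : Function.Surjective (residue R) := residue_surjective
  set W : Set (MvPolynomial (Fin r) k) :=
    { pb | ∃ (n : ℕ) (f : MvPolynomial (Fin r) R), f.IsHomogeneous n ∧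
        MvPolynomial.map (residue R) f = pb ∧
        MvPolynomial.eval x f ∈ I ⊔ m ^ (n + 1) } with hW
  -- extract a finite subset T of W spanning the same ideal
  obtain ⟨G, hG⟩ := IsNoetherian.noetherian (Ideal.span W)
  have hmem : ∀ g ∈ G, ∃ t : Finset (MvPolynomial (Fin r) k),
      ↑t ⊆ W ∧ g ∈ Ideal.span (↑t : Set (MvPolynomial (Fin r) k)) := fun g hg =>
    Submodule.mem_span_finite_of_mem_span (show g ∈ Ideal.span W from hG ▸ Submodule.subset_span hg)
  choose Tg hTgW hTgmem using hmem
  set T : Finset (MvPolynomial (Fin r) k) := G.attach.biUnion (fun g => Tg g.1 g.2) with hT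
  have hTW : (↑T : Set (MvPolynomial (Fin r) k)) ⊆ W := by
    intro t ht
    simp only [hT, Finset.coe_biUnion, Set.mem_iUnion, Finset.mem_coe] at ht
    obtain ⟨g, -, hgt⟩ := ht
    exact hTgW _ _ hgt
  have hA : Ideal.span (↑T : Set (MvPolynomial (Fin r) k)) = Ideal.span W := by
    refine le_antisymm (Ideal.span_le.mpr fun t ht => Ideal.subset_span (hTW ht)) ?_
    rw [← hG]
    refine Ideal.span_le.mpr fun g hg => ?_
    refine Submodule.span_mono ?_ (hTgmem g hg)
    intro t ht
    simp only [hT, Finset.coe_biUnion, Set.mem_iUnion, Finset.mem_coe]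
    exact ⟨⟨g, hg⟩, Finset.mem_attach _ _, ht⟩
  -- choose data for elements of T
  have hWT : ∀ t : {t // t ∈ T}, ∃ (n : ℕ) (f : MvPolynomial (Fin r) R),
      f.IsHomogeneous n ∧ MvPolynomial.map (residue R) f = (t : MvPolynomial (Fin r) k) ∧
      MvPolynomial.eval x f ∈ I ⊔ m ^ (n + 1) := fun t => hTW t.2
  choose nn ff hhom hπf heval using hWT
  have hsplit' : ∀ t, ∃ a ∈ I, ∃ e ∈ m ^ (nn t + 1), MvPolynomial.eval x (ff t) = a + e := by
    intro t
    obtain ⟨a, ha, e, he, hae⟩ := Submodule.mem_sup.mp (heval t)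
    exact ⟨a, ha, e, he, hae.symm⟩
  choose aa haI ee heM hsplit using hsplit'
  set J : Ideal R := Ideal.span (Set.range aa) with hJ
  have hJfg : J.FG := Submodule.fg_span (Set.finite_range aa)
  have hJI : J ≤ I := Ideal.span_le.mpr (by rintro _ ⟨t, rfl⟩; exact haI t)
  -- key claim
  have key : ∀ n : ℕ, I ≤ J ⊔ m ^ n := by
    intro n
    induction n with
    | zero => simp [Ideal.one_eq_top]
    | succ n ih =>
      intro b hb
      obtain ⟨j, hj, c, hc, hb'⟩ := Submodule.mem_sup.mp (ih hb)
      have hcbj : c = b - j := by rw [← hb']; ring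
      have hcI : c ∈ I := by rw [hcbj]; exact I.sub_mem hb (hJI hj)
      have hxspan' : Ideal.span (Set.range x) = m := hxspan
      obtain ⟨g, hgH, hge⟩ := KIaux.existsHomogEval x n
        (show c ∈ (Ideal.span (Set.range x)) ^ n by rw [hxspan']; exact hc)
      have hgW : MvPolynomial.map (residue R) g ∈ W :=
        ⟨n, g, hgH, rfl, by rw [hge]; exact (le_sup_left : I ≤ I ⊔ m ^ (n+1)) hcI⟩
      have hgA : MvPolynomial.map (residue R) g
          ∈ Ideal.span (↑T : Set (MvPolynomial (Fin r) k)) := by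
        rw [hA]; exact Ideal.subset_span hgW
      obtain ⟨q, -, hq⟩ := Submodule.mem_span_finset.mp hgA
      rw [← Finset.sum_attach T (fun t => q t • t)] at hq
      -- homogeneous component computation
      have hπg : (MvPolynomial.map (residue R) g).IsHomogeneous n := hgH.map _
      have hcomp : ∑ t ∈ T.attach,
          (if nn t ≤ n then homogeneousComponent (n - nn t) (q ↑t) else 0) * (t : MvPolynomial (Fin r) k)
          = MvPolynomial.map (residue R) g := by
        have h0 := congrArg (homogeneousComponent n) hq
        rw [map_sum] at h0
        have h1 : homogeneousComponent n (MvPolynomial.map (residue R) g)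
            = MvPolynomial.map (residue R) g := by
          rw [homogeneousComponent_of_mem hπg, if_pos rfl]
        rw [h1] at h0
        rw [← h0]
        refine Finset.sum_congr rfl fun t _ => ?_
        have htH : (t : MvPolynomial (Fin r) k).IsHomogeneous (nn t) :=
          hπf t ▸ (hhom t).map _
        rw [smul_eq_mul, KIaux.homogCompMul (q ↑t) _ htH n, ite_mul, zero_mul]
      -- construct lifts
      have hht : ∀ t : {t // t ∈ T}, ∃ h : MvPolynomial (Fin r) R,
          MvPolynomial.map (residue R) h
            = (if nn t ≤ n then homogeneousComponent (n - nn t) (q ↑t) else 0) ∧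
          (h * ff t).IsHomogeneous n ∧
          MvPolynomial.eval x (h * ff t) ∈ J ⊔ m ^ (n + 1) := by
        intro t
        by_cases hle : nn t ≤ n
        · obtain ⟨h, hhH, hhπ⟩ := KIaux.existsHomogLift hres
            (homogeneousComponent_isHomogeneous (n - nn t) (q ↑t))
          refine ⟨h, by rw [if_pos hle]; exact hhπ, ?_, ?_⟩
          · have := hhH.mul (hhom t)
            rwa [Nat.sub_add_cancel hle] at this
          · rw [map_mul, hsplit t, mul_add]
            have h1 : MvPolynomial.eval x h * aa t ∈ J :=
              Ideal.mul_mem_left _ _ (Ideal.subset_span ⟨t, rfl⟩)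
            have h2 : MvPolynomial.eval x h * ee t ∈ m ^ (n + 1) := by
              have he : MvPolynomial.eval x h ∈ m ^ (n - nn t) := by
                have := KIaux.evalMem m ⊤ x hx hhH (fun d => trivial)
                rwa [Ideal.top_mul] at this
              have hmul := Ideal.mul_mem_mul he (heM t)
              rw [← pow_add] at hmul
              have harith : (n - nn t) + (nn t + 1) = n + 1 := by omega
              rwa [harith] at hmul
            exact Submodule.add_mem _ ((le_sup_left : J ≤ J ⊔ m ^ (n+1)) h1)
              ((le_sup_right : m ^ (n+1) ≤ J ⊔ m ^ (n+1)) h2)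
        · refine ⟨0, by rw [if_neg hle]; simp, by simpa using isHomogeneous_zero _ _ n, by simp⟩
      choose hh hhπ hhH hhe using hht
      set v : MvPolynomial (Fin r) R := g - ∑ t ∈ T.attach, hh t * ff t with hv
      have hvH : v.IsHomogeneous n :=
        hgH.sub (MvPolynomial.IsHomogeneous.sum _ _ _ fun t _ => hhH t)
      have hvπ : MvPolynomial.map (residue R) v = 0 := by
        rw [hv, map_sub, map_sum]
        simp only [map_mul, hhπ, hπf]
        rw [hcomp, sub_self]
      have hvcoef : ∀ d, v.coeff d ∈ m := by
        intro d
        have h0 : (MvPolynomial.map (residue R) v).coeff d = 0 := by rw [hvπ]; simp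
        rw [MvPolynomial.coeff_map] at h0
        exact (residue_eq_zero_iff _).mp h0
      have hve : MvPolynomial.eval x v ∈ m ^ (n + 1) := by
        have := KIaux.evalMem m m x hx hvH hvcoef
        rwa [← pow_succ'] at this
      have hcJ : c ∈ J ⊔ m ^ (n + 1) := by
        have hceq : c = MvPolynomial.eval x v
            + ∑ t ∈ T.attach, MvPolynomial.eval x (hh t * ff t) := by
          rw [← hge, hv, map_sub, map_sum]
          ring
        rw [hceq]
        exact Submodule.add_mem _ ((le_sup_right : m ^ (n+1) ≤ J ⊔ m ^ (n+1)) hve)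
          (Submodule.sum_mem _ fun t _ => hhe t)
      rw [← hb']
      exact Submodule.add_mem _ ((le_sup_left : J ≤ J ⊔ m ^ (n+1)) hj) hcJ
  have hIJ : I ≤ J := by
    have hle : I ≤ ⨅ n : ℕ, (J + m ^ n) := le_iInf fun n => by
      rw [Ideal.add_eq_sup]; exact key n
    rwa [hint J] at hle
  have : I = J := le_antisymm hIJ hJI
  rw [this]
  exact hJfg
end

section
/- A commutative quasi-local ring (R, m) is Noetherian if and only if R satisfies (⋄) and m/m^2 is a finitely generated R-module. -/
universe u v

section Hull
variable {R : Type u} [Ring R]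

theorem MyInj.of_retract {I M : Type v} [AddCommGroup I] [Module R I]
    [AddCommGroup M] [Module R M] (hI : Module.Injective R I)
    (i : M →ₗ[R] I) (ρ : I →ₗ[R] M) (hρ : ∀ x, ρ (i x) = x) : Module.Injective R M := by
  constructor
  intro X Y _ _ _ _ f hf g
  obtain ⟨h, hh⟩ := hI.out f hf (i ∘ₗ g)
  exact ⟨ρ ∘ₗ h, fun x => by simp [hh x, hρ]⟩

/-- essential extension predicate, elementwise -/
def IsEssExt {I : Type v} [AddCommGroup I] [Module R I] (M0 W : Submodule R I) : Prop :=
  M0 ≤ W ∧ ∀ x ∈ W, x ≠ 0 → ∃ r : R, r • x ≠ 0 ∧ r • x ∈ M0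

theorem exists_max_essExt {I : Type v} [AddCommGroup I] [Module R I] (M0 : Submodule R I) :
    ∃ E : Submodule R I, IsEssExt M0 E ∧ ∀ W : Submodule R I, IsEssExt M0 W → E ≤ W → W = E := by
  have hchains : ∀ c ⊆ {W : Submodule R I | IsEssExt M0 W}, IsChain (· ≤ ·) c →
      ∀ y ∈ c, ∃ ub ∈ {W : Submodule R I | IsEssExt M0 W}, ∀ z ∈ c, z ≤ ub := by
    intro c hcs hchain y hyc
    refine ⟨sSup c, ⟨le_trans (hcs hyc).1 (le_sSup hyc), ?_⟩, fun z hz => le_sSup hz⟩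
    intro x hx hx0
    obtain ⟨W, hWc, hxW⟩ :=
      (Submodule.mem_sSup_of_directed ⟨y, hyc⟩ hchain.directedOn).mp hx
    exact (hcs hWc).2 x hxW hx0
  obtain ⟨E, -, hEs, hmax⟩ :=
    zorn_le_nonempty₀ {W : Submodule R I | IsEssExt M0 W} hchains M0
      ⟨le_rfl, fun x hx hx0 => ⟨1, by simpa, by simpa using hx⟩⟩
  exact ⟨E, hEs, fun W hW hEW => le_antisymm (hmax hW hEW) hEW⟩

theorem injective_of_max_essExt {I : Type v} [AddCommGroup I] [Module R I]
    (hI : Module.Injective R I) (M0 E : Submodule R I) (hE : IsEssExt M0 E)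
    (hmax : ∀ W : Submodule R I, IsEssExt M0 W → E ≤ W → W = E) :
    Module.Injective R ↥E := by
  classical
  -- maximal complement
  have hchains : ∀ c ⊆ {N : Submodule R I | N ⊓ E = ⊥}, IsChain (· ≤ ·) c →
      ∀ y ∈ c, ∃ ub ∈ {N : Submodule R I | N ⊓ E = ⊥}, ∀ z ∈ c, z ≤ ub := by
    intro c hcs hchain y hyc
    refine ⟨sSup c, ?_, fun z hz => le_sSup hz⟩
    rw [Set.mem_setOf_eq, eq_bot_iff]
    rintro x ⟨hx1, hx2⟩
    obtain ⟨W, hWc, hxW⟩ :=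
      (Submodule.mem_sSup_of_directed ⟨y, hyc⟩ hchain.directedOn).mp hx1
    exact (eq_bot_iff.mp (hcs hWc)) ⟨hxW, hx2⟩
  obtain ⟨N, -, hNt, hNmax⟩ :=
    zorn_le_nonempty₀ {N : Submodule R I | N ⊓ E = ⊥} hchains ⊥ (by simp)
  -- the quotient map restricted to E
  set π := N.mkQ with hπ
  have hj : Function.Injective (π ∘ₗ E.subtype) := by
    intro x y hxy
    have h1 : Submodule.Quotient.mk (p := N) (x : I) = Submodule.Quotient.mk (y : I) := hxy
    have : (x : I) - y ∈ N := (Submodule.Quotient.eq N).mp h1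
    have h2 : (x : I) - y ∈ E := sub_mem x.2 y.2
    have : (x : I) - y ∈ N ⊓ E := ⟨this, h2⟩
    rw [hNt] at this
    exact Subtype.ext (sub_eq_zero.mp this)
  -- star: essentiality of image of E in I/N
  have star : ∀ u : I ⧸ N, u ≠ 0 → ∃ (z : I) (r : R),
      z ∈ E ∧ z ≠ 0 ∧ π z = r • u ∧ r • u ≠ 0 := by
    intro u hu
    obtain ⟨y, rfl⟩ := N.mkQ_surjective u
    have hyN : y ∉ N := fun h => hu ((Submodule.Quotient.mk_eq_zero N).mpr h)
    have hX : ¬ ((N ⊔ Submodule.span R {y}) ⊓ E = ⊥) := by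
      intro h
      have := hNmax h le_sup_left
      exact hyN (this (Submodule.mem_sup_right (Submodule.mem_span_singleton_self y)))
    obtain ⟨z, hz, hz0⟩ := (Submodule.ne_bot_iff _).mp hX
    obtain ⟨a, haN, b, hb, hab⟩ := Submodule.mem_sup.mp hz.1
    obtain ⟨r, rfl⟩ := Submodule.mem_span_singleton.mp hb
    have hzN : z ∉ N := by
      intro hmem
      have : z ∈ N ⊓ E := ⟨hmem, hz.2⟩
      rw [hNt, Submodule.mem_bot] at this
      exact hz0 this
    have hπz : π z = r • N.mkQ y := by
      rw [← hab, map_add, map_smul]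
      have h0 : π a = 0 := (Submodule.Quotient.mk_eq_zero N).mpr haN
      simp [π, h0]
    refine ⟨z, r, hz.2, hz0, hπz, fun hcontr => hzN ?_⟩
    have hz00 : π z = 0 := by rw [hπz]; exact hcontr
    exact (Submodule.Quotient.mk_eq_zero N).mp hz00
  -- extend the inclusion of E along j
  obtain ⟨h, hh⟩ := hI.out (π ∘ₗ E.subtype) hj E.subtype
  have hinj : ∀ u : I ⧸ N, h u = 0 → u = 0 := by
    intro u hu
    by_contra hu0
    obtain ⟨z, r, hzE, hz0, hπz, hru⟩ := star u hu0
    have : h (π z) = z := hh ⟨z, hzE⟩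
    rw [hπz, map_smul, hu, smul_zero] at this
    exact hz0 this.symm
  -- range of h ∘ π is E
  have hrange : LinearMap.range (h ∘ₗ π) = E := by
    refine hmax _ ⟨?_, ?_⟩ ?_
    · intro x hx
      have hxE : x ∈ E := hE.1 hx
      exact ⟨x, hh ⟨x, hxE⟩⟩
    · rintro x ⟨w, rfl⟩ hx0
      have hu0 : π w ≠ 0 := fun h0 => hx0 (by simp [LinearMap.comp_apply, h0])
      obtain ⟨z, r, hzE, hz0, hπz, hru⟩ := star (π w) hu0
      have hrx : r • ((h ∘ₗ π) w) = z := by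
        have : h (π z) = z := hh ⟨z, hzE⟩
        rw [hπz] at this
        simpa [LinearMap.comp_apply] using this
      obtain ⟨r', hr'0, hr'M⟩ := hE.2 z hzE hz0
      refine ⟨r' * r, ?_, ?_⟩
      · rw [mul_smul, hrx]; exact hr'0
      · rw [mul_smul, hrx]; exact hr'M
    · intro x hxE
      exact ⟨x, hh ⟨x, hxE⟩⟩
  -- retraction
  have hmem : ∀ x : I, (h ∘ₗ π) x ∈ E := fun x => hrange ▸ LinearMap.mem_range_self _ x
  refine MyInj.of_retract hI E.subtype (LinearMap.codRestrict E (h ∘ₗ π) hmem) ?_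
  intro x
  exact Subtype.ext (hh x)

end Hull

open CategoryTheory in
theorem exists_injective_essential {R : Type u} [Ring R] (M : Type u) [AddCommGroup M]
    [Module R M] :
    ∃ (E : Type u) (_ : AddCommGroup E) (_ : Module R E) (f : M →ₗ[R] E),
      Module.Injective R E ∧ Function.Injective f ∧
      ∀ x : E, x ≠ 0 → ∃ r : R, r • x ≠ 0 ∧ r • x ∈ LinearMap.range f := by
  let Mc : ModuleCat.{u} R := ModuleCat.of R M
  let J : ModuleCat.{u} R := Injective.under Mc
  let i : Mc ⟶ J := Injective.ι Mc
  have hi : Function.Injective i := (ModuleCat.mono_iff_injective i).mp inferInstance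
  have hJ : Module.Injective R J :=
    Module.injective_module_of_injective_object R J (inj := Injective.injective_under Mc)
  let i' : M →ₗ[R] J := i.hom
  obtain ⟨E, hE, hmax⟩ := exists_max_essExt (LinearMap.range i')
  have hEinj : Module.Injective R ↥E := injective_of_max_essExt hJ _ E hE hmax
  have hmem : ∀ x : M, i' x ∈ E := fun x => hE.1 (LinearMap.mem_range_self i' x)
  refine ⟨↥E, inferInstance, inferInstance, LinearMap.codRestrict E i' hmem, hEinj, ?_, ?_⟩
  · intro x y hxy
    exact hi (congrArg Subtype.val hxy)
  · intro x hx
    have hx0 : (x : J) ≠ 0 := fun h => hx (Subtype.ext h)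
    obtain ⟨r, hr0, hrM⟩ := hE.2 (x : J) x.2 hx0
    obtain ⟨c, hc⟩ := hrM
    refine ⟨r, fun h => hr0 ?_, ⟨c, Subtype.ext ?_⟩⟩
    · have := congrArg Subtype.val h
      simpa using this
    · simpa using hc

theorem isArtinian_of_hasDiamond {R : Type u} [CommRing R] (hD : HasDiamond R)
    (M : Type u) [AddCommGroup M] [Module R M] [Module.Finite R M]
    (b : M) (hb : b ≠ 0) (hess : ∀ c : M, c ≠ 0 → b ∈ Submodule.span R {c}) :
    IsArtinian R M := by
  obtain ⟨E, _, _, f, hEinj, hf, hessE⟩ := exists_injective_essential (R := R) M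
  have hfb : f b ≠ 0 := fun h => hb (hf (by rw [h, map_zero]))
  have key : ∀ x : E, x ≠ 0 → f b ∈ Submodule.span R {x} := by
    intro x hx
    obtain ⟨r, hr0, c, hc⟩ := hessE x hx
    have hc0 : c ≠ 0 := by rintro rfl; rw [map_zero] at hc; exact hr0 hc.symm
    obtain ⟨s, rfl⟩ := Submodule.mem_span_singleton.mp (hess c hc0)
    have : f (s • c) = s • (r • x) := by rw [map_smul, hc]
    rw [this, smul_smul]
    exact Submodule.smul_mem _ _ (Submodule.mem_span_singleton_self x)
  have hS : IsSimpleModule R ↥(Submodule.span R {f b}) := by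
    rw [isSimpleModule_iff_isAtom]
    constructor
    · simpa [Submodule.span_singleton_eq_bot] using hfb
    · intro X hX
      by_contra hX0
      obtain ⟨x, hxX, hx0⟩ := (Submodule.ne_bot_iff X).mp hX0
      have h1 : Submodule.span R {f b} ≤ X :=
        (Submodule.span_singleton_le_iff_mem _ _).mpr
          ((Submodule.span_singleton_le_iff_mem _ _).mpr hxX (key x hx0))
      exact absurd (le_antisymm hX.le h1) hX.ne
  have hsoc : ∀ N : Submodule R E, N ≠ ⊥ → Submodule.span R {f b} ⊓ N ≠ ⊥ := by
    intro N hN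
    obtain ⟨x, hxN, hx0⟩ := (Submodule.ne_bot_iff N).mp hN
    have h1 : f b ∈ N := (Submodule.span_singleton_le_iff_mem _ _).mpr hxN (key x hx0)
    intro hbot
    have : f b ∈ Submodule.span R {f b} ⊓ N := ⟨Submodule.mem_span_singleton_self _, h1⟩
    rw [hbot, Submodule.mem_bot] at this
    exact hfb this
  have hfg : (LinearMap.range f).FG := by
    rw [← Submodule.map_top]
    exact Submodule.FG.map f Module.Finite.fg_top
  have hart : IsArtinian R ↥(LinearMap.range f) :=
    hD E hEinj ⟨Submodule.span R {f b}, hS, hsoc⟩ (LinearMap.range f) hfg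
  exact isArtinian_of_linearEquiv (LinearEquiv.ofInjective f hf).symm

open IsLocalRing in
theorem diamond_closed {R : Type u} [CommRing R] [IsLocalRing R] (hD : HasDiamond R)
    (J : Ideal R) (a : R) (ha : a ∉ J) : ∃ n : ℕ, a ∉ J ⊔ maximalIdeal R ^ n := by
  classical
  -- Zorn: maximal P ⊇ J avoiding a
  have hchains : ∀ c ⊆ {P : Ideal R | J ≤ P ∧ a ∉ P}, IsChain (· ≤ ·) c →
      ∀ y ∈ c, ∃ ub ∈ {P : Ideal R | J ≤ P ∧ a ∉ P}, ∀ z ∈ c, z ≤ ub := by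
    intro c hcs hchain y hyc
    refine ⟨sSup c, ⟨le_trans (hcs hyc).1 (le_sSup hyc), ?_⟩, fun z hz => le_sSup hz⟩
    intro hmem
    obtain ⟨W, hWc, hxW⟩ :=
      (Submodule.mem_sSup_of_directed ⟨y, hyc⟩ hchain.directedOn).mp hmem
    exact (hcs hWc).2 hxW
  obtain ⟨P, -, hPs, hPmax⟩ :=
    zorn_le_nonempty₀ {P : Ideal R | J ≤ P ∧ a ∉ P} hchains J ⟨le_rfl, ha⟩
  obtain ⟨hJP, haP⟩ := hPs
  have hPne : P ≠ ⊤ := fun h => haP (h ▸ Submodule.mem_top)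
  -- R/P has essential simple socle generated by mk a
  let C := R ⧸ P
  have hb0 : (Ideal.Quotient.mk P) a ≠ 0 := fun h => haP (Ideal.Quotient.eq_zero_iff_mem.mp h)
  have hess : ∀ c : C, c ≠ 0 → (Ideal.Quotient.mk P) a ∈ Submodule.span R {c} := by
    intro c hc
    obtain ⟨x, rfl⟩ := Ideal.Quotient.mk_surjective c
    have hxP : x ∉ P := fun h => hc (Ideal.Quotient.eq_zero_iff_mem.mpr h)
    have haQ : a ∈ P ⊔ Ideal.span {x} := by
      by_contra haQ
      have hQs : P ⊔ Ideal.span {x} ∈ {P : Ideal R | J ≤ P ∧ a ∉ P} :=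
        ⟨le_trans hJP le_sup_left, haQ⟩
      exact hxP (hPmax hQs le_sup_left
        (Submodule.mem_sup_right (Ideal.subset_span rfl)))
    obtain ⟨p, hp, q, hq, hpq⟩ := Submodule.mem_sup.mp haQ
    obtain ⟨r, rfl⟩ := Ideal.mem_span_singleton'.mp hq
    refine Submodule.mem_span_singleton.mpr ⟨r, ?_⟩
    have : (Ideal.Quotient.mk P) a = (Ideal.Quotient.mk P) (p + r * x) := by rw [hpq]
    rw [this, map_add, Ideal.Quotient.eq_zero_iff_mem.mpr hp, zero_add]
    rfl
  -- apply the diamond property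
  have : Module.Finite R C :=
    Module.Finite.of_surjective (Submodule.mkQ (P : Submodule R R))
      (Submodule.mkQ_surjective _)
  have hart : IsArtinian R C := isArtinian_of_hasDiamond hD C _ hb0 hess
  -- C is an Artinian local ring, so its maximal ideal is nilpotent
  have : Nontrivial C := Ideal.Quotient.nontrivial_iff.mpr hPne
  have : IsLocalRing C := IsLocalRing.of_surjective' (Ideal.Quotient.mk P)
    Ideal.Quotient.mk_surjective
  have hartRing : IsArtinianRing C := isArtinian_of_tower R hart
  obtain ⟨k, hk⟩ := IsArtinianRing.isNilpotent_jacobson_bot (R := C)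
  -- image of maximal ideal is inside maximal ideal of C
  have hmap : Ideal.map (Ideal.Quotient.mk P) (maximalIdeal R) ≤ maximalIdeal C := by
    rw [Ideal.map_le_iff_le_comap]
    intro x hx
    rw [Ideal.mem_comap, IsLocalRing.mem_maximalIdeal, mem_nonunits_iff]
    intro hU
    obtain ⟨v, hv⟩ := hU.exists_right_inv
    obtain ⟨y, rfl⟩ := Ideal.Quotient.mk_surjective v
    have : x * y - 1 ∈ P := by
      rw [← Ideal.Quotient.eq_zero_iff_mem, map_sub, map_one, map_mul, hv, sub_self]
    have h1 : (1 : R) ∈ maximalIdeal R := by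
      have hxy : x * y ∈ maximalIdeal R := Ideal.mul_mem_right y _ hx
      have hP : x * y - 1 ∈ maximalIdeal R := le_maximalIdeal hPne this
      simpa using sub_mem hxy hP
    exact (Ideal.ne_top_iff_one _).mp (IsLocalRing.maximalIdeal.isMaximal R).ne_top h1
  have hjac : maximalIdeal C = Ideal.jacobson ⊥ :=
    (IsLocalRing.jacobson_eq_maximalIdeal ⊥ bot_ne_top).symm
  have hpow : maximalIdeal R ^ k ≤ P := by
    have h1 : Ideal.map (Ideal.Quotient.mk P) (maximalIdeal R ^ k) = ⊥ := by
      rw [Ideal.map_pow]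
      rw [eq_bot_iff]
      calc Ideal.map (Ideal.Quotient.mk P) (maximalIdeal R) ^ k
          ≤ maximalIdeal C ^ k := Ideal.pow_right_mono hmap k
        _ = (Ideal.jacobson ⊥) ^ k := by rw [hjac]
        _ = ⊥ := by rw [hk, Ideal.zero_eq_bot]
    have h2 : maximalIdeal R ^ k ≤ Ideal.comap (Ideal.Quotient.mk P) ⊥ :=
      Ideal.map_le_iff_le_comap.mp (le_of_eq h1)
    intro x hx
    have := h2 hx
    rwa [Ideal.mem_comap, Submodule.mem_bot, Ideal.Quotient.eq_zero_iff_mem] at this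
  refine ⟨k, fun hmem => haP ?_⟩
  exact sup_le hJP hpow hmem

open IsLocalRing in
theorem maximalIdeal_fg_of_diamond {R : Type u} [CommRing R] [IsLocalRing R]
    (hD : HasDiamond R)
    (hfin : Module.Finite R
      (↥(maximalIdeal R) ⧸ (Submodule.comap (maximalIdeal R).subtype (maximalIdeal R ^ 2)))) :
    ∃ vs : Set R, vs.Finite ∧ maximalIdeal R = Ideal.span vs := by
  classical
  set m := maximalIdeal R
  set K : Submodule R ↥m := Submodule.comap m.subtype (m ^ 2)
  -- lift generators of m/m² to m
  obtain ⟨s, hs⟩ := Module.Finite.fg_top (R := R) (M := ↥m ⧸ K)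
  have : ∃ t : Finset ↥m, Finset.image K.mkQ t = s := by
    have : ∀ q ∈ s, ∃ z : ↥m, K.mkQ z = q := fun q _ => K.mkQ_surjective q
    choose g hg using this
    refine ⟨(s.attach).image (fun q => g q.1 q.2), ?_⟩
    ext q
    rw [Finset.image_image]
    simp only [Finset.mem_image, Finset.mem_attach, true_and, Subtype.exists, Function.comp]
    constructor
    · rintro ⟨q', hq', rfl⟩
      rw [hg q' hq']; exact hq'
    · intro hq
      exact ⟨q, hq, hg q hq⟩
  obtain ⟨t, ht⟩ := this
  -- span t ⊔ K = ⊤ in ↥m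
  have htop : Submodule.span R (t : Set ↥m) ⊔ K = ⊤ := by
    have h1 : Submodule.map K.mkQ (Submodule.span R (t : Set ↥m)) = ⊤ := by
      rw [Submodule.map_span, ← hs]
      congr 1
      rw [← ht]
      simp [Finset.coe_image]
    have h2 := congrArg (Submodule.comap K.mkQ) h1
    rwa [Submodule.comap_map_mkQ, Submodule.comap_top, sup_comm] at h2
  -- push down to R
  set vs : Set R := (Subtype.val '' (t : Set ↥m)) with hvs
  have hm2 : m ^ 2 ≤ m := by
    calc m ^ 2 = m * m := by ring
      _ ≤ m := Ideal.mul_le_left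
  have hmeq : m = Ideal.span vs ⊔ m ^ 2 := by
    have h3 := congrArg (Submodule.map m.subtype) htop
    rw [Submodule.map_sup, Submodule.map_span, Submodule.map_comap_subtype,
      Submodule.map_subtype_top] at h3
    rw [inf_eq_right.mpr hm2] at h3
    exact h3.symm
  -- m ≤ span vs ⊔ m^n for all n
  have hlen : ∀ n : ℕ, m ≤ Ideal.span vs ⊔ m ^ n := by
    intro n
    induction n with
    | zero => rw [pow_zero, Ideal.one_eq_top]; exact le_trans le_top le_sup_right
    | succ n ih =>
      refine le_trans (le_of_eq hmeq) (sup_le le_sup_left ?_)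
      have h2 : m ^ 2 = m * m := by ring
      rw [h2]
      calc m * m ≤ m * (Ideal.span vs ⊔ m ^ n) := Ideal.mul_mono_right ih
        _ = m * Ideal.span vs ⊔ m * m ^ n := Ideal.mul_sup _ _ _
        _ ≤ Ideal.span vs ⊔ m ^ (n+1) := by
            refine sup_le_sup Ideal.mul_le_right (le_of_eq ?_)
            rw [pow_succ, mul_comm]
  -- closedness forces m = span vs
  refine ⟨vs, (t : Set ↥m).toFinite.image _, le_antisymm ?_ ?_⟩
  · intro x hx
    by_contra hxI
    obtain ⟨n, hn⟩ := diamond_closed hD (Ideal.span vs) x hxI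
    exact hn (hlen n hx)
  · rw [Ideal.span_le]
    rintro x ⟨z, hz, rfl⟩
    exact z.2

section PolyHelpers
open MvPolynomial

variable {R : Type*} [CommRing R] {σ : Type*} [Fintype σ]

theorem prod_pow_mem_pow_degree (I : Ideal R) (v : σ → R) (hv : ∀ i, v i ∈ I)
    (α : σ →₀ ℕ) : (α.prod fun i k => v i ^ k) ∈ I ^ (Finsupp.degree α) := by
  classical
  rw [Finsupp.prod, Finsupp.degree_apply]
  generalize (α.support : Finset σ) = t
  induction t using Finset.induction with
  | empty => simp [Ideal.one_eq_top]
  | insert _ _ h ih =>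
    rw [Finset.prod_insert h, Finset.sum_insert h, pow_add]
    exact Ideal.mul_mem_mul (Ideal.pow_mem_pow (hv _) _) ih

theorem aeval_mem_pow_of_isHomogeneous (I : Ideal R) (v : σ → R) (hv : ∀ i, v i ∈ I)
    {g : MvPolynomial σ R} {d : ℕ} (hg : g.IsHomogeneous d) :
    MvPolynomial.aeval v g ∈ I ^ d := by
  classical
  have hsum : MvPolynomial.aeval v g
      = ∑ α ∈ g.support, MvPolynomial.aeval v (MvPolynomial.monomial α (g.coeff α)) := by
    conv_lhs => rw [g.as_sum]
    rw [map_sum]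
  rw [hsum]
  refine Submodule.sum_mem _ fun α hα => ?_
  rw [aeval_monomial]
  have hdeg : Finsupp.degree α = d := by
    by_contra hne
    exact (mem_support_iff.mp hα) (hg.coeff_eq_zero hne)
  have := prod_pow_mem_pow_degree I v hv α
  rw [hdeg] at this
  simpa using Ideal.mul_mem_left _ _ this

theorem aeval_mem_pow_succ_of_coeff_mem (I : Ideal R) (v : σ → R) (hv : ∀ i, v i ∈ I)
    {g : MvPolynomial σ R} {d : ℕ} (hg : g.IsHomogeneous d)
    (hc : ∀ α, g.coeff α ∈ I) : MvPolynomial.aeval v g ∈ I ^ (d + 1) := by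
  classical
  have hsum : MvPolynomial.aeval v g
      = ∑ α ∈ g.support, MvPolynomial.aeval v (MvPolynomial.monomial α (g.coeff α)) := by
    conv_lhs => rw [g.as_sum]
    rw [map_sum]
  rw [hsum]
  refine Submodule.sum_mem _ fun α hα => ?_
  rw [aeval_monomial]
  have hdeg : Finsupp.degree α = d := by
    by_contra hne
    exact (mem_support_iff.mp hα) (hg.coeff_eq_zero hne)
  have h1 := prod_pow_mem_pow_degree I v hv α
  rw [hdeg] at h1
  have : (algebraMap R R) (g.coeff α) ∈ I := by simpa using hc α
  rw [pow_succ, mul_comm (I ^ d) I]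
  exact Ideal.mul_mem_mul this h1

/-- every element of `(span (range v))^d` is the value of a homogeneous polynomial -/
theorem exists_isHomogeneous_aeval (v : σ → R) (d : ℕ) (b : R)
    (hb : b ∈ (Ideal.span (Set.range v)) ^ d) :
    ∃ g : MvPolynomial σ R, g.IsHomogeneous d ∧ MvPolynomial.aeval v g = b := by
  classical
  induction d generalizing b with
  | zero =>
    exact ⟨C b, isHomogeneous_C _ _, by simp⟩
  | succ d ih =>
    rw [pow_succ] at hb
    induction hb using Submodule.mul_induction_on' with
    | mem_mul_mem r hr x hx =>
      obtain ⟨g, hg, hgv⟩ := ih r hr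
      obtain ⟨c, hc⟩ := (Finsupp.mem_span_range_iff_exists_finsupp).mp hx
      refine ⟨g * (c.sum fun i a => MvPolynomial.monomial (Finsupp.single i 1) a), ?_, ?_⟩
      · refine hg.mul ?_
        rw [Finsupp.sum]
        refine IsHomogeneous.sum _ _ _ fun i _ => isHomogeneous_monomial _ ?_
        simp [Finsupp.degree_apply, Finsupp.support_single_ne_zero _ one_ne_zero]
      · rw [map_mul, hgv]
        congr 1
        rw [Finsupp.sum, map_sum]
        rw [← hc, Finsupp.sum]
        refine Finset.sum_congr rfl fun i _ => ?_
        rw [aeval_monomial]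
        simp
    | add x y _ _ hx hy =>
      obtain ⟨g1, hg1, hv1⟩ := hx
      obtain ⟨g2, hg2, hv2⟩ := hy
      exact ⟨g1 + g2, hg1.add hg2, by rw [map_add, hv1, hv2]⟩

theorem MvPolynomial.IsHomogeneous.map' {S : Type*} [CommRing S] (f : R →+* S)
    {g : MvPolynomial σ R} {n : ℕ} (hg : g.IsHomogeneous n) :
    (MvPolynomial.map f g).IsHomogeneous n := by
  intro d hd
  rw [coeff_map] at hd
  exact hg (fun h0 => hd (by rw [h0, map_zero]))

theorem exists_isHomogeneous_map_eq {S : Type*} [CommRing S] (f : R →+* S)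
    (hf : Function.Surjective f) {q : MvPolynomial σ S} {n : ℕ} (hq : q.IsHomogeneous n) :
    ∃ g : MvPolynomial σ R, g.IsHomogeneous n ∧ MvPolynomial.map f g = q := by
  classical
  refine ⟨∑ α ∈ q.support, MvPolynomial.monomial α (Function.surjInv hf (q.coeff α)), ?_, ?_⟩
  · refine IsHomogeneous.sum _ _ _ fun α hα => isHomogeneous_monomial _ ?_
    by_contra hne
    exact (mem_support_iff.mp hα) (hq.coeff_eq_zero hne)
  · rw [map_sum]
    conv_rhs => rw [q.as_sum]
    refine Finset.sum_congr rfl fun α _ => ?_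
    rw [map_monomial, Function.surjInv_eq hf]

theorem homogeneousComponent_mul_isHomogeneous (h p : MvPolynomial σ R) {n d : ℕ}
    (hp : p.IsHomogeneous n) (hnd : n ≤ d) :
    MvPolynomial.homogeneousComponent d (h * p) =
      (MvPolynomial.homogeneousComponent (d - n) h) * p := by
  classical
  conv_lhs => rw [← MvPolynomial.sum_homogeneousComponent h]
  rw [Finset.sum_mul, map_sum]
  have hterm : ∀ e : ℕ, MvPolynomial.homogeneousComponent d
      ((MvPolynomial.homogeneousComponent e h) * p) =
      if e = d - n then (MvPolynomial.homogeneousComponent (d - n) h) * p else 0 := by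
    intro e
    have hhom : ((MvPolynomial.homogeneousComponent e h) * p).IsHomogeneous (e + n) :=
      (homogeneousComponent_isHomogeneous e h).mul hp
    rw [MvPolynomial.homogeneousComponent_of_mem ((mem_homogeneousSubmodule _ _).mpr hhom)]
    by_cases he : e = d - n
    · subst he
      rw [if_pos (show d = d - n + n by omega), if_pos rfl]
    · rw [if_neg (show ¬ d = e + n by omega), if_neg he]
  rw [Finset.sum_congr rfl fun e _ => hterm e]
  rw [Finset.sum_ite_eq' (Finset.range (h.totalDegree + 1)) (d - n)
    (fun _ => (MvPolynomial.homogeneousComponent (d - n) h) * p)]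
  by_cases hd : d - n ∈ Finset.range (h.totalDegree + 1)
  · rw [if_pos hd]
  · rw [if_neg hd]
    rw [MvPolynomial.homogeneousComponent_eq_zero, zero_mul]
    simp only [Finset.mem_range, not_lt] at hd
    omega

theorem homogeneousComponent_mul_eq_zero (h p : MvPolynomial σ R) {n d : ℕ}
    (hp : p.IsHomogeneous n) (hnd : d < n) :
    MvPolynomial.homogeneousComponent d (h * p) = 0 := by
  classical
  conv_lhs => rw [← MvPolynomial.sum_homogeneousComponent h]
  rw [Finset.sum_mul, map_sum]
  refine Finset.sum_eq_zero fun e _ => ?_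
  have hhom : ((MvPolynomial.homogeneousComponent e h) * p).IsHomogeneous (e + n) :=
    (homogeneousComponent_isHomogeneous e h).mul hp
  rw [MvPolynomial.homogeneousComponent_of_mem ((mem_homogeneousSubmodule _ _).mpr hhom)]
  rw [if_neg (show ¬ d = e + n by omega)]

end PolyHelpers

open MvPolynomial in
open IsLocalRing in
theorem isNoetherianRing_of_closed_of_fg {R : Type u} [CommRing R] [IsLocalRing R]
    (hclosed : ∀ (J : Ideal R) (a : R), a ∉ J → ∃ n : ℕ, a ∉ J ⊔ maximalIdeal R ^ n)
    {s : ℕ} (v : Fin s → R) (hv : maximalIdeal R = Ideal.span (Set.range v)) :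
    IsNoetherianRing R := by
  classical
  set m := maximalIdeal R with hm
  have hvm : ∀ i, v i ∈ m := fun i => hv ▸ Ideal.subset_span (Set.mem_range_self i)
  set κ := ResidueField R with hκ
  set φ : MvPolynomial (Fin s) R →+* MvPolynomial (Fin s) κ :=
    (MvPolynomial.map (residue R)) with hφ
  have hres : Function.Surjective (residue R) := Ideal.Quotient.mk_surjective
  rw [isNoetherianRing_iff_ideal_fg]
  intro J
  set gen : Set (MvPolynomial (Fin s) κ) :=
    {q | ∃ (n : ℕ) (g : MvPolynomial (Fin s) R), g.IsHomogeneous n ∧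
      MvPolynomial.aeval v g ∈ J ∧ φ g = q} with hgen
  -- extract finite generating subset of gen
  obtain ⟨T0, hT0⟩ : (Ideal.span gen).FG := IsNoetherian.noetherian _
  have hmemspan : ∀ q ∈ T0, q ∈ Submodule.span (MvPolynomial (Fin s) κ) gen := by
    intro q hq
    rw [show Submodule.span (MvPolynomial (Fin s) κ) gen = Ideal.span gen from rfl, ← hT0]
    exact Ideal.subset_span hq
  choose U hU1 hU2 using fun q hq => Submodule.mem_span_finite_of_mem_span (hmemspan q hq)
  set T : Finset (MvPolynomial (Fin s) κ) := T0.attach.biUnion (fun a => U a.1 a.2) with hT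
  have hTsub : (T : Set (MvPolynomial (Fin s) κ)) ⊆ gen := by
    intro q hq
    simp only [hT, Finset.coe_biUnion, Set.mem_iUnion, Finset.mem_coe] at hq
    obtain ⟨a, -, hqa⟩ := hq
    exact hU1 a.1 a.2 hqa
  have hTspan : Ideal.span gen ≤ Ideal.span (T : Set (MvPolynomial (Fin s) κ)) := by
    rw [← hT0, Ideal.span_le]
    intro q hq
    refine Submodule.span_mono ?_ (hU2 q hq)
    intro x hx
    simp only [hT, Finset.coe_biUnion, Set.mem_iUnion, Finset.mem_coe]
    exact ⟨⟨q, hq⟩, Finset.mem_attach _ _, hx⟩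
  -- data for each member of T
  have hTgen : ∀ q ∈ T, ∃ (n : ℕ) (g : MvPolynomial (Fin s) R), g.IsHomogeneous n ∧
      MvPolynomial.aeval v g ∈ J ∧ φ g = q := fun q hq => hTsub hq
  choose nf gf hghom hgJ hgφ using hTgen
  set bsetF : Finset R :=
    T.attach.image (fun a => MvPolynomial.aeval v (gf a.1 a.2)) with hbsetF
  set J0 : Ideal R := Ideal.span (bsetF : Set R) with hJ0
  have hJ0fg : J0.FG := ⟨bsetF, rfl⟩
  have hbJ0 : ∀ (q) (hq : q ∈ T), MvPolynomial.aeval v (gf q hq) ∈ J0 := by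
    intro q hq
    refine Ideal.subset_span ?_
    simp only [hbsetF, Finset.coe_image, Set.mem_image, Finset.mem_coe]
    exact ⟨⟨q, hq⟩, Finset.mem_attach _ _, rfl⟩
  have hJ0J : J0 ≤ J := by
    rw [hJ0, Ideal.span_le]
    intro x hx
    simp only [hbsetF, Finset.coe_image, Set.mem_image, Finset.mem_coe] at hx
    obtain ⟨a, -, rfl⟩ := hx
    exact hgJ a.1 a.2
  -- key descent step
  have key : ∀ (d : ℕ) (x : R), x ∈ J → x ∈ m ^ d →
      ∃ y, y ∈ J ∧ y ∈ m ^ (d + 1) ∧ x - y ∈ J0 := by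
    intro d x hxJ hxm
    rw [hv] at hxm
    obtain ⟨g, hghomog, hgx⟩ := exists_isHomogeneous_aeval v d x hxm
    have hqgen : φ g ∈ Ideal.span gen :=
      Ideal.subset_span ⟨d, g, hghomog, hgx ▸ hxJ, rfl⟩
    obtain ⟨hfun, -, hsum⟩ := Submodule.mem_span_finset.mp (hTspan hqgen)
    -- homogeneous components
    have hφg : (φ g).IsHomogeneous d := hghomog.map' (residue R)
    -- the coefficients
    set c : {q // q ∈ T} → MvPolynomial (Fin s) κ := fun a =>
      if nf a.1 a.2 ≤ d then
        MvPolynomial.homogeneousComponent (d - nf a.1 a.2) (hfun a.1) else 0 with hc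
    have hcpos : ∀ (a : {q // q ∈ T}) (h : nf a.1 a.2 ≤ d),
        c a = MvPolynomial.homogeneousComponent (d - nf a.1 a.2) (hfun a.1) := by
      intro a h; simp only [hc]; rw [if_pos h]
    have hcneg : ∀ (a : {q // q ∈ T}), ¬ nf a.1 a.2 ≤ d → c a = 0 := by
      intro a h; simp only [hc]; rw [if_neg h]
    have hclaim : φ g = ∑ a ∈ T.attach, c a * a.1 := by
      have h1 : φ g = MvPolynomial.homogeneousComponent d (φ g) := by
        rw [MvPolynomial.homogeneousComponent_of_mem
          ((mem_homogeneousSubmodule _ _).mpr hφg), if_pos rfl]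
      rw [h1]
      conv_lhs => rw [← hsum, ← Finset.sum_attach T (fun q => hfun q • q)]
      rw [map_sum]
      refine Finset.sum_congr rfl fun a _ => ?_
      have hqa : (a.1 : MvPolynomial (Fin s) κ).IsHomogeneous (nf a.1 a.2) := by
        have h := (hghom a.1 a.2).map' (residue R)
        rwa [← hφ, hgφ a.1 a.2] at h
      rw [smul_eq_mul]
      by_cases hle : nf a.1 a.2 ≤ d
      · rw [homogeneousComponent_mul_isHomogeneous _ _ hqa hle, hcpos a hle]
      · rw [homogeneousComponent_mul_eq_zero _ _ hqa (by omega), hcneg a hle, zero_mul]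
    -- lift the coefficients homogeneously
    have hlift : ∀ a : {q // q ∈ T}, ∃ Ca : MvPolynomial (Fin s) R,
        Ca.IsHomogeneous (d - nf a.1 a.2) ∧ MvPolynomial.map (residue R) Ca = c a ∧
        (¬ nf a.1 a.2 ≤ d → Ca = 0) := by
      intro a
      by_cases hle : nf a.1 a.2 ≤ d
      · obtain ⟨Ca, h1, h2⟩ := exists_isHomogeneous_map_eq (residue R) hres
          (MvPolynomial.homogeneousComponent_isHomogeneous (d - nf a.1 a.2) (hfun a.1))
        exact ⟨Ca, h1, by rw [h2, hcpos a hle], fun h => absurd hle h⟩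
      · exact ⟨0, MvPolynomial.isHomogeneous_zero _ _ _, by rw [map_zero, hcneg a hle],
          fun _ => rfl⟩
    choose Cf hChom hCmap hCzero using hlift
    set g' : MvPolynomial (Fin s) R := g - ∑ a ∈ T.attach, Cf a * gf a.1 a.2 with hg'
    have hg'hom : g'.IsHomogeneous d := by
      have hterm : ∀ a : {q // q ∈ T}, (Cf a * gf a.1 a.2).IsHomogeneous d := by
        intro a
        by_cases hle : nf a.1 a.2 ≤ d
        · have := (hChom a).mul (hghom a.1 a.2)
          rwa [Nat.sub_add_cancel hle] at this
        · rw [hCzero a hle, zero_mul]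
          exact MvPolynomial.isHomogeneous_zero _ _ _
      have hsummem : (∑ a ∈ T.attach, Cf a * gf a.1 a.2) ∈ homogeneousSubmodule (Fin s) R d :=
        Submodule.sum_mem _ fun a _ => (mem_homogeneousSubmodule _ _).mpr (hterm a)
      have hgmem : g ∈ homogeneousSubmodule (Fin s) R d :=
        (mem_homogeneousSubmodule _ _).mpr hghomog
      exact (mem_homogeneousSubmodule _ _).mp (sub_mem hgmem hsummem)
    have hg'0 : φ g' = 0 := by
      rw [hg', map_sub, map_sum, hclaim]
      refine sub_eq_zero.mpr (Finset.sum_congr rfl fun a _ => ?_)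
      rw [map_mul, hCmap a, hgφ a.1 a.2]
    have hcoeffm : ∀ α, g'.coeff α ∈ m := by
      intro α
      have : (φ g').coeff α = 0 := by rw [hg'0]; rfl
      rw [hφ, MvPolynomial.coeff_map] at this
      exact Ideal.Quotient.eq_zero_iff_mem.mp this
    refine ⟨MvPolynomial.aeval v g', ?_, ?_, ?_⟩
    · have : MvPolynomial.aeval v g' =
          x - ∑ a ∈ T.attach, MvPolynomial.aeval v (Cf a * gf a.1 a.2) := by
        rw [hg', map_sub, map_sum, hgx]
      rw [this]
      refine sub_mem hxJ (Submodule.sum_mem _ fun a _ => ?_)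
      rw [map_mul]
      exact Ideal.mul_mem_left _ _ (hgJ a.1 a.2)
    · exact aeval_mem_pow_succ_of_coeff_mem m v hvm hg'hom hcoeffm
    · have : x - MvPolynomial.aeval v g' =
          ∑ a ∈ T.attach, MvPolynomial.aeval v (Cf a * gf a.1 a.2) := by
        rw [hg', map_sub, map_sum, hgx]
        ring
      rw [this]
      refine Submodule.sum_mem _ fun a _ => ?_
      rw [map_mul]
      exact Ideal.mul_mem_left _ _ (hbJ0 a.1 a.2)
  -- iterate
  have main : ∀ x ∈ J, ∀ t : ℕ, ∃ y, y ∈ J ∧ y ∈ m ^ t ∧ x - y ∈ J0 := by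
    intro x hx t
    induction t with
    | zero =>
      exact ⟨x, hx, by simp [pow_zero, Ideal.one_eq_top], by simp⟩
    | succ t ih =>
      obtain ⟨y, hyJ, hym, hxy⟩ := ih
      obtain ⟨y', hy'J, hy'm, hyy'⟩ := key t y hyJ hym
      exact ⟨y', hy'J, hy'm, by simpa using add_mem hxy hyy'⟩
  have hJJ0 : J ≤ J0 := by
    intro x hx
    by_contra hx0
    obtain ⟨n, hn⟩ := hclosed J0 x hx0
    obtain ⟨y, -, hym, hxy⟩ := main x hx n
    exact hn (Submodule.mem_sup.mpr ⟨x - y, hxy, y, hym, by ring⟩)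
  have : J = J0 := le_antisymm hJJ0 hJ0J
  rw [this]
  exact hJ0fg


open IsLocalRing in
theorem isArtinian_of_pow_smul {R : Type u} [CommRing R] [IsLocalRing R]
    [IsNoetherianRing R] (M : Type v) [AddCommGroup M] [Module R M] [Module.Finite R M]
    (K : ℕ) (hM : ∀ r ∈ maximalIdeal R ^ K, ∀ x : M, r • x = 0) : IsArtinian R M := by
  induction K generalizing M with
  | zero =>
    have hsub : Subsingleton M := by
      constructor
      intro x y
      have hx := hM 1 (by rw [pow_zero, Ideal.one_eq_top]; trivial) x
      have hy := hM 1 (by rw [pow_zero, Ideal.one_eq_top]; trivial) y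
      rw [one_smul] at hx hy
      rw [hx, hy]
    exact isArtinian_of_finite
  | succ K ih =>
    have hNoeth : IsNoetherian R M := isNoetherian_of_isNoetherianRing_of_finite R M
    set M' : Submodule R M := maximalIdeal R • ⊤ with hM'def
    have : Module.Finite R ↥M' := Module.Finite.iff_fg.mpr (IsNoetherian.noetherian M')
    have hart1 : IsArtinian R ↥M' := by
      refine ih ↥M' ?_
      intro r hr x
      refine Subtype.ext ?_
      have hx2 : (x : M) ∈ maximalIdeal R • (⊤ : Submodule R M) := x.2
      show r • (x : M) = 0
      refine Submodule.smul_induction_on hx2 (fun a ha z _ => ?_) (fun y z hy hz => ?_)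
      · rw [smul_smul]
        exact hM (r * a) (by rw [pow_succ]; exact Ideal.mul_mem_mul hr ha) z
      · rw [smul_add, hy, hz, add_zero]
    have htor : Module.IsTorsionBySet R (M ⧸ M') ((maximalIdeal R : Ideal R) : Set R) := by
      intro x a
      obtain ⟨y, rfl⟩ := Submodule.mkQ_surjective M' x
      have : (a : R) • (M'.mkQ y) = M'.mkQ ((a : R) • y) := (map_smul M'.mkQ _ _).symm
      rw [this]
      refine (Submodule.Quotient.mk_eq_zero _).mpr ?_
      exact Submodule.smul_mem_smul a.2 trivial
    letI : Module (R ⧸ maximalIdeal R) (M ⧸ M') := htor.module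
    haveI : IsScalarTower R (R ⧸ maximalIdeal R) (M ⧸ M') := htor.isScalarTower
    haveI hfinκ : Module.Finite (R ⧸ maximalIdeal R) (M ⧸ M') :=
      Module.Finite.of_restrictScalars_finite R _ _
    letI : Field (R ⧸ maximalIdeal R) := Ideal.Quotient.field _
    haveI hsimple : IsSimpleModule R (R ⧸ maximalIdeal R) :=
      isSimpleModule_iff_isCoatom.mpr ((Ideal.isMaximal_def).mp (maximalIdeal.isMaximal R))
    haveI : Module.Finite R (R ⧸ maximalIdeal R) :=
      Module.Finite.of_surjective (Submodule.mkQ _) (Submodule.mkQ_surjective _)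
    haveI hartκ : IsArtinian R (R ⧸ maximalIdeal R) := inferInstance
    have hart2 : IsArtinian R (M ⧸ M') := by
      let e := (Module.finBasis (R ⧸ maximalIdeal R) (M ⧸ M')).equivFun
      haveI : IsArtinian R (Fin (Module.finrank (R ⧸ maximalIdeal R) (M ⧸ M')) →
          R ⧸ maximalIdeal R) := isArtinian_pi'
      exact isArtinian_of_linearEquiv (e.restrictScalars R).symm
    exact isArtinian_of_range_eq_ker M'.subtype M'.mkQ
      (by rw [Submodule.range_subtype, Submodule.ker_mkQ])

open IsLocalRing in
theorem hasDiamond_of_isNoetherianRing {R : Type u} [CommRing R] [IsLocalRing R]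
    (hN : IsNoetherianRing R) : HasDiamond R := by
  intro E _ _ _ hsoc N hNfg
  obtain ⟨S, hS, hSess⟩ := hsoc
  have hatom : IsAtom S := isSimpleModule_iff_isAtom.mp hS
  obtain ⟨x0, hx0S, hx00⟩ := (Submodule.ne_bot_iff S).mp hatom.1
  have hSfg : S.FG := by
    refine ⟨{x0}, ?_⟩
    rw [Finset.coe_singleton]
    by_contra hne
    have hle : Submodule.span R {x0} ≤ S :=
      (Submodule.span_singleton_le_iff_mem _ _).mpr hx0S
    have hbot := hatom.2 _ (lt_of_le_of_ne hle hne)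
    rw [Submodule.span_singleton_eq_bot] at hbot
    exact hx00 hbot
  have hmS : maximalIdeal R • S = ⊥ := by
    by_contra hne
    have h1 : maximalIdeal R • S ≤ S := Submodule.smul_le_right
    have h2 : maximalIdeal R • S = S := by
      rcases lt_or_eq_of_le h1 with h | h
      · exact absurd (hatom.2 _ h) hne
      · exact h
    have := Submodule.eq_bot_of_le_smul_of_le_jacobson_bot (maximalIdeal R) S hSfg
      (le_of_eq h2.symm) (maximalIdeal_le_jacobson ⊥)
    exact hatom.1 this
  haveI : IsNoetherian R R := hN
  have tor : ∀ (x : E) (a : R), a ∈ maximalIdeal R → ∃ k : ℕ, a ^ k • x = 0 := by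
    intro x a ha
    by_contra hcon
    push_neg at hcon
    have hmono : Monotone (fun k => LinearMap.ker (LinearMap.toSpanSingleton R E (a ^ k • x))) := by
      intro k l hkl r hr
      have hrk : r • (a ^ k • x) = 0 := hr
      show r • (a ^ l • x) = 0
      have hexp : a ^ l = a ^ (l - k) * a ^ k := by
        rw [← pow_add]
        congr 1
        omega
      rw [hexp, mul_smul, smul_comm r (a ^ (l - k)), hrk, smul_zero]
    obtain ⟨n, hn⟩ := monotone_stabilizes_iff_noetherian.mpr ‹IsNoetherian R R›
      ⟨fun k => LinearMap.ker (LinearMap.toSpanSingleton R E (a ^ k • x)), hmono⟩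
    have hxn : a ^ n • x ≠ 0 := hcon n
    have hspan : Submodule.span R {a ^ n • x} ≠ ⊥ := by
      simpa [Submodule.span_singleton_eq_bot] using hxn
    obtain ⟨s', hs', hs'0⟩ := (Submodule.ne_bot_iff _).mp (hSess _ hspan)
    obtain ⟨r, hr⟩ := Submodule.mem_span_singleton.mp hs'.2
    have has' : a • s' = 0 := by
      have : a • s' ∈ maximalIdeal R • S := Submodule.smul_mem_smul ha hs'.1
      rwa [hmS, Submodule.mem_bot] at this
    have hrk1 : r • (a ^ (n + 1) • x) = 0 := by
      have : a • (r • (a ^ n • x)) = r • (a ^ (n + 1) • x) := by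
        rw [smul_comm a r, pow_succ, mul_comm, mul_smul]
      rw [← this, hr, has']
    have heq : LinearMap.ker (LinearMap.toSpanSingleton R E (a ^ n • x)) =
        LinearMap.ker (LinearMap.toSpanSingleton R E (a ^ (n + 1) • x)) := hn (n + 1) (by omega)
    have hrn : r ∈ LinearMap.ker (LinearMap.toSpanSingleton R E (a ^ n • x)) := by
      rw [heq]
      exact hrk1
    have hfin0 : r • (a ^ n • x) = 0 := hrn
    rw [hr] at hfin0
    exact hs'0 hfin0
  have tor2 : ∀ x : E, ∃ K : ℕ, ∀ r ∈ maximalIdeal R ^ K, r • x = 0 := by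
    intro x
    set Ix : Ideal R := LinearMap.ker (LinearMap.toSpanSingleton R E x) with hIx
    have hrad : maximalIdeal R ≤ Ideal.radical Ix := by
      intro a ha
      obtain ⟨k, hk⟩ := tor x a ha
      refine Ideal.mem_radical_iff.mpr ⟨k, ?_⟩
      show a ^ k • x = 0
      exact hk
    obtain ⟨K, hK⟩ := Ideal.exists_pow_le_of_le_radical_of_fg hrad
      (IsNoetherian.noetherian _)
    refine ⟨K, fun r hr => ?_⟩
    have : r ∈ Ix := hK hr
    exact this
  obtain ⟨sN, hsN⟩ := hNfg
  choose Kf hKf using tor2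
  set K := sN.sup Kf with hK
  have hann : ∀ y ∈ N, ∀ r ∈ maximalIdeal R ^ K, r • y = 0 := by
    intro y hy
    rw [← hsN] at hy
    induction hy using Submodule.span_induction with
    | mem z hz =>
      intro r hr
      exact hKf z r (Ideal.pow_le_pow_right (Finset.le_sup hz) hr)
    | zero => intro r _; rw [smul_zero]
    | add y z _ _ hy hz => intro r hr; rw [smul_add, hy r hr, hz r hr, add_zero]
    | smul c y _ hy => intro r hr; rw [smul_comm r c y, hy r hr, smul_zero]
  haveI : Module.Finite R ↥N := Module.Finite.iff_fg.mpr ⟨sN, hsN⟩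
  refine isArtinian_of_pow_smul ↥N K ?_
  intro r hr x
  exact Subtype.ext (hann x.1 x.2 r hr)

open IsLocalRing in
/-- A commutative quasi-local ring `(R, 𝔪)` is Noetherian if and only if `R` satisfies
(⋄) and `𝔪/𝔪²` is a finitely generated `R`-module. -/
theorem noetherian_iff_diamond_and_cotangent_fg (R : Type u) [CommRing R]
    [IsLocalRing R] :
    IsNoetherianRing R ↔
      HasDiamond R ∧
        Module.Finite R
          (↥(maximalIdeal R) ⧸
            (Submodule.comap (maximalIdeal R).subtype (maximalIdeal R ^ 2))) := by
  constructor
  · intro h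
    refine ⟨hasDiamond_of_isNoetherianRing h, ?_⟩
    haveI : IsNoetherian R R := h
    haveI : Module.Finite R ↥(maximalIdeal R) :=
      Module.Finite.iff_fg.mpr (IsNoetherian.noetherian _)
    exact Module.Finite.of_surjective (Submodule.mkQ _) (Submodule.mkQ_surjective _)
  · rintro ⟨hD, hfin⟩
    obtain ⟨vs, hfinvs, hvs⟩ := maximalIdeal_fg_of_diamond hD hfin
    obtain ⟨n, f, hf⟩ := hfinvs.fin_embedding
    exact isNoetherianRing_of_closed_of_fg (diamond_closed hD) (fun i => f i)
      (by rw [hvs, ← hf])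
end

section
/- Let R be a commutative ring, m a maximal ideal, and E = E(R/m) the injective hull of R/m as an R-module. If E is locally of finite length as an R_m-module, then for every x ∈ E the R-submodule Rx equals the R_m-submodule R_m x; in particular E is locally of finite length as an R-module. -/
universe u

/-- A finite length module over a local ring is annihilated by a power of the
maximal ideal. -/
lemma aux_pow_annihilates {A : Type u} [CommRing A] [IsLocalRing A]
    {M : Type u} [AddCommGroup M] [Module A M] (h : IsFiniteLength A M) :
    ∃ n : ℕ, ∀ z ∈ (IsLocalRing.maximalIdeal A) ^ n, ∀ y : M, z • y = 0 := by
  induction h with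
  | of_subsingleton =>
      exact ⟨0, fun z _ y => by rw [Subsingleton.elim y 0, smul_zero]⟩
  | @of_simple_quotient M _ _ N _ _ ih =>
      obtain ⟨n, hn⟩ := ih
      have hJ : IsLocalRing.maximalIdeal A ≤ Module.annihilator A (M ⧸ N) :=
        (IsLocalRing.eq_maximalIdeal (IsSimpleModule.annihilator_isMaximal)).ge
      refine ⟨n + 1, fun z hz y => ?_⟩
      rw [pow_succ] at hz
      refine Submodule.mul_induction_on hz (fun a ha b hb => ?_)
        (fun r s hr hs => by rw [add_smul, hr, hs, add_zero])
      have hbN : b • y ∈ N := by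
        have := Module.mem_annihilator.mp (hJ hb) (Submodule.Quotient.mk y)
        rwa [← Submodule.Quotient.mk_smul, Submodule.Quotient.mk_eq_zero] at this
      have h0 : a • (b • y) = 0 := congrArg Subtype.val (hn a ha ⟨b • y, hbN⟩)
      rw [mul_smul, h0]

/-- The key lemma: every `Rm`-multiple of `x` is already an `R`-multiple. -/
lemma aux_key (R : Type u) [CommRing R] (m : Ideal R) [m.IsMaximal]
    (Rm : Type u) [CommRing Rm] [Algebra R Rm] [IsLocalization.AtPrime Rm m]
    (E : Type u) [AddCommGroup E] [Module R E] [Module Rm E] [IsScalarTower R Rm E]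
    (hloc : ∀ N : Submodule Rm E, N.FG → IsFiniteLength Rm N)
    (x : E) (r' : Rm) : ∃ r : R, r' • x = r • x := by
  haveI : IsLocalRing Rm := IsLocalization.AtPrime.isLocalRing Rm m
  obtain ⟨n, hn⟩ :=
    aux_pow_annihilates (hloc (Submodule.span Rm {x}) (Submodule.fg_span_singleton x))
  have hx : x ∈ Submodule.span Rm {x} := Submodule.mem_span_singleton_self x
  -- `m ^ (n+1)` kills `x`
  have hkill : ∀ z ∈ m ^ (n + 1), z • x = 0 := by
    intro z hz
    have hmap : Ideal.map (algebraMap R Rm) m ≤ IsLocalRing.maximalIdeal Rm := by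
      rw [Ideal.map_le_iff_le_comap]
      intro w hw
      rw [Ideal.mem_comap]
      exact (IsLocalization.AtPrime.to_map_mem_maximal_iff Rm m w).mpr hw
    have hz' : algebraMap R Rm z ∈ (IsLocalRing.maximalIdeal Rm) ^ (n + 1) := by
      have h1 : algebraMap R Rm z ∈ (Ideal.map (algebraMap R Rm) m) ^ (n + 1) := by
        rw [← Ideal.map_pow]; exact Ideal.mem_map_of_mem _ hz
      exact Ideal.pow_right_mono hmap (n + 1) h1
    have hz'' : algebraMap R Rm z ∈ (IsLocalRing.maximalIdeal Rm) ^ n :=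
      Ideal.pow_le_pow_right (Nat.le_succ n) hz'
    have h0 : algebraMap R Rm z • x = 0 :=
      congrArg Subtype.val (hn _ hz'' ⟨x, hx⟩)
    rwa [algebraMap_smul] at h0
  -- write `r' = a / s`
  obtain ⟨⟨a, s⟩, hs⟩ := IsLocalization.surj (M := m.primeCompl) r'
  -- `m ^ (n+1)` and `(s)` are comaximal
  have hsup : m ^ (n + 1) ⊔ Ideal.span {(s : R)} = ⊤ := by
    by_contra hne
    obtain ⟨M', hM', hle⟩ := Ideal.exists_le_maximal _ hne
    have h1 : m ≤ M' :=
      (Ideal.IsPrime.pow_le_iff (Nat.succ_ne_zero n)).mp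
        (le_trans le_sup_left hle)
    have h2 : m = M' := (inferInstance : m.IsMaximal).eq_of_le hM'.ne_top h1
    have h3 : (s : R) ∈ M' :=
      hle (le_sup_right (a := m ^ (n + 1)) (Ideal.mem_span_singleton_self (s : R)))
    exact s.2 (h2 ▸ h3)
  have h1 : (1 : R) ∈ m ^ (n + 1) ⊔ Ideal.span {(s : R)} := hsup ▸ Submodule.mem_top
  obtain ⟨z, hz, w, hw, hzw⟩ := Submodule.mem_sup.mp h1
  obtain ⟨t, ht⟩ := Ideal.mem_span_singleton'.mp hw
  refine ⟨t * a, ?_⟩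
  have hx1 : x = z • x + (t * (s : R)) • x := by
    rw [ht, ← add_smul, hzw, one_smul]
  have e1 : r' • ((s : R) • x) = a • x := by
    rw [← algebraMap_smul Rm (s : R) x, ← mul_smul, hs, algebraMap_smul]
  conv_lhs => rw [hx1]
  rw [smul_add, hkill z hz, smul_zero, zero_add, mul_smul, smul_comm r' t, e1, ← mul_smul]

/-- Transfer finite length from `Rm` to `R` when every `Rm`-multiple is an
`R`-multiple. -/
lemma aux_transfer {R Rm : Type u} [CommRing R] [CommRing Rm] [Algebra R Rm]
    (M : Type u) [AddCommGroup M] [Module R M] [Module Rm M] [IsScalarTower R Rm M]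
    (key : ∀ (x : M) (r' : Rm), ∃ r : R, r' • x = r • x)
    (h : IsFiniteLength Rm M) : IsFiniteLength R M := by
  rw [isFiniteLength_iff_isNoetherian_isArtinian] at h ⊢
  have hsurj : Function.Surjective
      (Submodule.restrictScalars R : Submodule Rm M → Submodule R M) := by
    intro P
    refine ⟨{ carrier := P
              add_mem' := fun ha hb => P.add_mem ha hb
              zero_mem' := P.zero_mem
              smul_mem' := fun r' x hx => ?_ }, SetLike.coe_injective rfl⟩
    obtain ⟨r, hr⟩ := key x r'
    show r' • x ∈ P
    rw [hr]
    exact P.smul_mem r hx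
  let e : Submodule Rm M ≃o Submodule R M :=
    RelIso.ofSurjective (Submodule.restrictScalarsEmbedding R Rm M) hsurj
  have f := e.symm.toOrderEmbedding
  haveI hn : WellFoundedGT (Submodule Rm M) := h.1.wellFoundedGT
  haveI ha : WellFoundedLT (Submodule Rm M) := h.2
  exact ⟨isNoetherian_mk f.wellFoundedGT, f.wellFoundedLT⟩

/-- Let `R` be a commutative ring, `𝔪` a maximal ideal, and `E = E(R/𝔪)` the injective
hull of `R/𝔪` as an `R`-module (an injective `R`-module with an essential simple
submodule isomorphic to `R/𝔪`), viewed also as a module over the localization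
`R_𝔪`.  If `E` is locally of finite length as an `R_𝔪`-module, then for every `x ∈ E`
the `R`-submodule `Rx` equals the `R_𝔪`-submodule `R_𝔪 x`; in particular `E` is
locally of finite length as an `R`-module. -/
theorem span_eq_span_localization_of_locally_finiteLength
    (R : Type u) [CommRing R] (m : Ideal R) [m.IsMaximal]
    (Rm : Type u) [CommRing Rm] [Algebra R Rm] [IsLocalization.AtPrime Rm m]
    (E : Type u) [AddCommGroup E] [Module R E] [Module Rm E] [IsScalarTower R Rm E]
    (hinj : Module.Injective R E)
    (hhull : ∃ S : Submodule R E,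
      (∀ N : Submodule R E, N ≠ ⊥ → S ⊓ N ≠ ⊥) ∧ Nonempty (S ≃ₗ[R] R ⧸ m))
    (hloc : ∀ N : Submodule Rm E, N.FG → IsFiniteLength Rm N) :
    (∀ x : E, (Submodule.span R {x} : Set E) = (Submodule.span Rm {x} : Set E)) ∧
      (∀ N : Submodule R E, N.FG → IsFiniteLength R N) := by
  have key : ∀ (x : E) (r' : Rm), ∃ r : R, r' • x = r • x := aux_key R m Rm E hloc
  constructor
  · intro x
    ext y
    simp only [SetLike.mem_coe, Submodule.mem_span_singleton]
    constructor
    · rintro ⟨r, rfl⟩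
      exact ⟨algebraMap R Rm r, algebraMap_smul Rm r x⟩
    · rintro ⟨r', rfl⟩
      obtain ⟨r, hr⟩ := key x r'
      exact ⟨r, hr.symm⟩
  · intro N hN
    let N' : Submodule Rm E :=
      { carrier := N
        add_mem' := fun ha hb => N.add_mem ha hb
        zero_mem' := N.zero_mem
        smul_mem' := fun r' x hx => by
          obtain ⟨r, hr⟩ := key x r'
          show r' • x ∈ N
          rw [hr]
          exact N.smul_mem r hx }
    have hN' : N'.FG := by
      obtain ⟨s, hs⟩ := hN
      refine ⟨s, le_antisymm (Submodule.span_le.mpr ?_) ?_⟩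
      · intro y hy
        show y ∈ N
        rw [← hs]
        exact Submodule.subset_span hy
      · intro y hy
        have hyN : y ∈ Submodule.span R (s : Set E) := hs ▸ hy
        exact Submodule.span_le_restrictScalars R Rm (s : Set E) hyN
    have key' : ∀ (y : ↥N') (r' : Rm), ∃ r : R, r' • y = r • y := by
      intro y r'
      obtain ⟨r, hr⟩ := key (y : E) r'
      exact ⟨r, Subtype.ext hr⟩
    have hfl : IsFiniteLength R ↥N' := aux_transfer ↥N' key' (hloc N' hN')
    have e : (↥N') ≃ₗ[R] ↥N :=
      { toFun := fun y => ⟨y.1, y.2⟩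
        invFun := fun y => ⟨y.1, y.2⟩
        map_add' := fun _ _ => rfl
        map_smul' := fun _ _ => rfl
        left_inv := fun _ => rfl
        right_inv := fun _ => rfl }
    exact e.isFiniteLength hfl
end

section
/- Let (R, m) be a commutative quasi-local ring with m^3 = 0. If m/Soc(R) is finitely generated as an R-module, then R satisfies (⋄). -/
open IsLocalRing in
/-- Auxiliary: a finitely generated module over a quasi-local ring killed by the maximal
ideal is Artinian. -/
theorem aux_artinian_of_fg_of_torsion {R : Type*} [CommRing R] [IsLocalRing R]
    (N : Type*) [AddCommGroup N] [Module R N] [Module.Finite R N]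
    (h : ∀ r ∈ maximalIdeal R, ∀ x : N, r • x = 0) : IsArtinian R N := by
  have htor : Module.IsTorsionBySet R N ((maximalIdeal R : Ideal R) : Set R) :=
    fun x r => h r r.2 x
  letI : Module (R ⧸ maximalIdeal R) N := htor.module
  haveI : IsScalarTower R (R ⧸ maximalIdeal R) N := htor.isScalarTower
  haveI : Module.Finite (R ⧸ maximalIdeal R) N :=
    Module.Finite.of_restrictScalars_finite R (R ⧸ maximalIdeal R) N
  letI : Field (R ⧸ maximalIdeal R) := Ideal.Quotient.field _
  haveI hart : IsArtinian (R ⧸ maximalIdeal R) N := isArtinian_of_fg_of_artinian'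
  let e : Submodule R N ↪o Submodule (R ⧸ maximalIdeal R) N :=
    { toFun := fun p =>
        { carrier := p
          add_mem' := fun ha hb => p.add_mem ha hb
          zero_mem' := p.zero_mem
          smul_mem' := by
            intro c x hx
            obtain ⟨b, rfl⟩ := Ideal.Quotient.mk_surjective c
            rw [htor.mk_smul]
            exact p.smul_mem b hx }
      inj' := by
        intro p q hpq
        ext x
        exact SetLike.ext_iff.mp hpq x
      map_rel_iff' := Iff.rfl }
  exact (isArtinian_iff R N).mpr (e.wellFounded ((isArtinian_iff _ N).mp hart))

open IsLocalRing in
/-- Let `(R, 𝔪)` be a commutative quasi-local ring with `𝔪³ = 0`.  If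
`𝔪/Soc(R)` (where `Soc(R) = Ann(𝔪)`) is finitely generated as an `R`-module, then `R`
satisfies (⋄): every cyclic `R`-module `R/I` with essential simple socle is Artinian. -/
theorem diamond_of_maximalIdeal_mod_socle_fg (R : Type u) [CommRing R] [IsLocalRing R]
    (hm3 : maximalIdeal R ^ 3 = ⊥)
    (hfg : Module.Finite R
      (↥(maximalIdeal R) ⧸
        (Submodule.comap (maximalIdeal R).subtype (maximalIdeal R).annihilator)))
    (I : Ideal R)
    (hI : ∃ S : Submodule R (R ⧸ I), IsSimpleModule R S ∧
      ∀ N : Submodule R (R ⧸ I), N ≠ ⊥ → S ⊓ N ≠ ⊥) :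
    IsArtinian R (R ⧸ I) := by
  obtain ⟨S, hS, hE⟩ := hI
  set m : Ideal R := maximalIdeal R with hm
  set K : Submodule R (↥m) :=
    Submodule.comap m.subtype m.annihilator with hK
  -- Step 1: every element of `R ⧸ I` killed by `m` lies in `S`.
  have step1 : ∀ y : R ⧸ I, (∀ r ∈ m, r • y = 0) → y ∈ S := by
    intro y hy
    by_cases h0 : y = 0
    · rw [h0]; exact S.zero_mem
    have hNbot : Submodule.span R {y} ≠ ⊥ := by
      simpa [Submodule.span_singleton_eq_bot] using h0
    obtain ⟨z, hz, hz0⟩ := (Submodule.ne_bot_iff _).mp (hE _ hNbot)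
    obtain ⟨hzS, hzN⟩ := Submodule.mem_inf.mp hz
    obtain ⟨c, rfl⟩ := Submodule.mem_span_singleton.mp hzN
    have hc : c ∉ m := by
      intro hc
      exact hz0 (hy c hc)
    have hcu : IsUnit c := by
      rwa [hm, mem_maximalIdeal, mem_nonunits_iff, not_not] at hc
    obtain ⟨u, rfl⟩ := hcu
    have : ((u⁻¹ : Rˣ) : R) • ((u : R) • y) = y := by
      rw [smul_smul, Units.inv_mul, one_smul]
    rw [← this]
    exact S.smul_mem _ hzS
  -- The image of `m` in `R ⧸ I`.
  set mM : Submodule R (R ⧸ I) := Submodule.map I.mkQ m with hmM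
  -- Step 2: `m • mM ⊆ S ⊓ mM`.
  have hkey : ∀ r ∈ m, ∀ x ∈ mM, r • x ∈ S ⊓ mM := by
    intro r hr x hx
    obtain ⟨a, ha, rfl⟩ := hx
    refine Submodule.mem_inf.mpr ⟨step1 _ ?_, ?_⟩
    · intro s hs
      have hz : s • r • a = 0 := by
        have hmem : s * (r * a) ∈ m ^ 3 := by
          rw [show (3 : ℕ) = 2 + 1 by norm_num, pow_succ, pow_two, ← mul_assoc]
          exact Ideal.mul_mem_mul (Ideal.mul_mem_mul hs hr) ha
        rw [hm, hm3] at hmem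
        simpa [smul_eq_mul, mul_assoc] using (Ideal.mem_bot.mp hmem)
      rw [← map_smul, ← map_smul, hz, map_zero]
    · rw [← map_smul]
      exact Submodule.mem_map_of_mem (m.smul_mem r ha)
  -- elements of `K` map into `S ⊓ mM`
  have hKS : ∀ k : ↥m, k ∈ K → I.mkQ ↑k ∈ S ⊓ mM := by
    intro k hk
    refine Submodule.mem_inf.mpr ⟨step1 _ ?_, Submodule.mem_map_of_mem k.2⟩
    intro r hr
    have hz : r • (k : R) = 0 := by
      have h2 := Submodule.mem_annihilator.mp (Submodule.mem_comap.mp hk) r hr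
      simpa [smul_eq_mul, mul_comm] using h2
    rw [← map_smul, hz, map_zero]
  -- `S` is an atom.
  have hatom : IsAtom S := isSimpleModule_iff_isAtom.mp hS
  obtain ⟨z, hzS, hz0⟩ := (Submodule.ne_bot_iff _).mp hatom.1
  have hspan : Submodule.span R {z} = S := by
    rcases hatom.le_iff.mp
        (Submodule.span_le.mpr (Set.singleton_subset_iff.mpr hzS)) with h | h
    · exact absurd (h ▸ Submodule.mem_span_singleton_self z) (by simp [hz0])
    · exact h
  have hSFG : S.FG := ⟨{z}, by simpa using hspan⟩
  -- `S` is Artinian.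
  have hSart : IsArtinian R ↥S := by
    haveI : Module.Finite R ↥S := Module.Finite.iff_fg.mpr hSFG
    have hann : Module.annihilator R ↥S = m :=
      IsLocalRing.eq_maximalIdeal IsSimpleModule.annihilator_isMaximal
    exact aux_artinian_of_fg_of_torsion ↥S
      (fun r hr x => Module.mem_annihilator.mp (hann ▸ hr) x)
  set C1 : Submodule R (R ⧸ I) := S ⊓ mM with hC1
  have hC1cases : C1 = ⊥ ∨ C1 = S := hatom.le_iff.mp inf_le_left
  have hC1art : IsArtinian R ↥C1 := by
    rcases hC1cases with h | h
    · rw [h]; infer_instance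
    · rw [h]; exact hSart
  have hC1fg : C1.FG := by
    rcases hC1cases with h | h
    · rw [h]; exact Submodule.fg_bot
    · rw [h]; exact hSFG
  -- `mM` is finitely generated.
  have hmMfg : mM.FG := by
    set g : (↥m) →ₗ[R] (R ⧸ I) := I.mkQ.comp m.subtype with hg
    have hker : K ≤ LinearMap.ker (C1.mkQ.comp g) := by
      intro k hk
      rw [LinearMap.mem_ker, LinearMap.comp_apply, Submodule.mkQ_apply,
        Submodule.Quotient.mk_eq_zero]
      exact hKS k hk
    set ψ : (↥m ⧸ K) →ₗ[R] ((R ⧸ I) ⧸ C1) := K.liftQ (C1.mkQ.comp g) hker with hψ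
    have hrange : LinearMap.range ψ = mM.map C1.mkQ := by
      rw [hψ, Submodule.range_liftQ, LinearMap.range_comp, hg, LinearMap.range_comp,
        Submodule.range_subtype]
    have htop : (⊤ : Submodule R (↥m ⧸ K)).FG := Module.finite_def.mp hfg
    have hmapfg : (mM.map C1.mkQ).FG := by
      have := htop.map ψ
      rwa [Submodule.map_top, hrange] at this
    refine Submodule.fg_of_fg_map_of_fg_inf_ker C1.mkQ hmapfg ?_
    rw [Submodule.ker_mkQ, inf_eq_right.mpr inf_le_right]
    exact hC1fg
  -- Assemble via two short exact sequences.
  refine (isArtinian_iff_submodule_quotient mM).mpr ⟨?_, ?_⟩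
  · -- `mM` is Artinian
    set C1' : Submodule R ↥mM := C1.comap mM.subtype with hC1'
    have hle : C1 ≤ mM := inf_le_right
    refine (isArtinian_iff_submodule_quotient C1').mpr ⟨?_, ?_⟩
    · haveI := hC1art
      exact isArtinian_of_linearEquiv (Submodule.comapSubtypeEquivOfLe hle).symm
    · haveI : Module.Finite R ↥mM := Module.Finite.iff_fg.mpr hmMfg
      refine aux_artinian_of_fg_of_torsion _ ?_
      intro r hr x
      obtain ⟨⟨v, hv⟩, rfl⟩ := Submodule.Quotient.mk_surjective C1' x
      rw [← Submodule.Quotient.mk_smul, Submodule.Quotient.mk_eq_zero]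
      exact Submodule.mem_comap.mpr
        (by simpa using (hkey r hr v hv : r • v ∈ C1))
  · -- `(R ⧸ I) ⧸ mM` is Artinian
    refine aux_artinian_of_fg_of_torsion _ ?_
    intro r hr x
    obtain ⟨y, rfl⟩ := Submodule.Quotient.mk_surjective mM x
    rw [← Submodule.Quotient.mk_smul, Submodule.Quotient.mk_eq_zero]
    obtain ⟨a, rfl⟩ := Submodule.Quotient.mk_surjective I y
    have : r • (Submodule.Quotient.mk a : R ⧸ I) = I.mkQ (r • a) := by
      rw [map_smul, Submodule.mkQ_apply]
    rw [this]
    have hma : r • a ∈ m := by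
      rw [smul_eq_mul]; exact Ideal.mul_mem_right a m hr
    exact Submodule.mem_map_of_mem hma
end

section
/- Let (R, m) be a commutative quasi-local ring with m^3 = 0 and assume Soc(R) is finitely generated. Then R satisfies (⋄) if and only if m/Soc(R) is finitely generated as an R-module. -/
open IsLocalRing Submodule
variable {R : Type u} [CommRing R] [IsLocalRing R]

section torsion

variable {M : Type v} [AddCommGroup M] [Module R M]

theorem my_semisimple_of_torsion (h : ∀ x ∈ maximalIdeal R, ∀ v : M, x • v = 0) :
    IsSemisimpleModule R M := by
  apply IsSemisimpleModule.of_sSup_simples_eq_top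
  rw [eq_top_iff]
  intro v _
  rcases eq_or_ne v 0 with rfl | hv
  · exact zero_mem _
  refine le_sSup (a := Submodule.span R {v}) ?_ (Submodule.mem_span_singleton_self v)
  rw [Set.mem_setOf_eq, isSimpleModule_iff_isAtom]
  constructor
  · simp only [ne_eq, Submodule.span_singleton_eq_bot]
    exact hv
  · intro b hb
    by_contra hbne
    obtain ⟨w, hwb, hw0⟩ := (Submodule.ne_bot_iff b).mp hbne
    have hwspan : w ∈ Submodule.span R {v} := hb.le hwb
    obtain ⟨r, rfl⟩ := Submodule.mem_span_singleton.mp hwspan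
    have hr : r ∉ maximalIdeal R := fun hr => hw0 (h r hr v)
    have hu : IsUnit r := by
      rwa [mem_maximalIdeal, mem_nonunits_iff, not_not] at hr
    obtain ⟨u, rfl⟩ := hu
    have hvb : v ∈ b := by
      have h2 := b.smul_mem ((u⁻¹ : Rˣ) : R) hwb
      rwa [smul_smul, Units.inv_mul, one_smul] at h2
    exact hb.ne (le_antisymm hb.le
      ((Submodule.span_singleton_le_iff_mem v b).mpr hvb))

theorem my_finite_of_torsion_of_isArtinian
    (h : ∀ x ∈ maximalIdeal R, ∀ v : M, x • v = 0) [IsArtinian R M] :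
    Module.Finite R M :=
  have := my_semisimple_of_torsion h
  (IsSemisimpleModule.finite_tfae.out 2 0).mp ‹_›

theorem my_isNoetherian_of_torsion_of_finite
    (h : ∀ x ∈ maximalIdeal R, ∀ v : M, x • v = 0) [Module.Finite R M] :
    IsNoetherian R M :=
  have := my_semisimple_of_torsion h
  (IsSemisimpleModule.finite_tfae.out 0 1).mp ‹_›

theorem my_isArtinian_of_torsion_of_finite
    (h : ∀ x ∈ maximalIdeal R, ∀ v : M, x • v = 0) [Module.Finite R M] :
    IsArtinian R M :=
  have := my_semisimple_of_torsion h
  (IsSemisimpleModule.finite_tfae.out 0 2).mp ‹_›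

omit [IsLocalRing R] in
theorem my_noeth_inf (N₁ N₂ : Submodule R M) [IsNoetherian R (M ⧸ N₁)]
    [IsNoetherian R (M ⧸ N₂)] : IsNoetherian R (M ⧸ (N₁ ⊓ N₂)) := by
  have hker : LinearMap.ker (N₁.mkQ.prod N₂.mkQ) = N₁ ⊓ N₂ := by
    rw [LinearMap.ker_prod, Submodule.ker_mkQ, Submodule.ker_mkQ]
  exact isNoetherian_of_injective ((N₁ ⊓ N₂).liftQ (N₁.mkQ.prod N₂.mkQ) hker.ge)
    (LinearMap.ker_eq_bot.mp (Submodule.ker_liftQ_eq_bot _ _ _ hker.le))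

end torsion

theorem my_quot_sub (P : Ideal R) [IsArtinian R (R ⧸ P)] :
    IsArtinian R (↥(maximalIdeal R) ⧸
      (Submodule.comap (maximalIdeal R).subtype P)) := by
  have hker : LinearMap.ker (P.mkQ ∘ₗ (maximalIdeal R).subtype)
      = Submodule.comap (maximalIdeal R).subtype P := by
    rw [LinearMap.ker_comp, Submodule.ker_mkQ]
  exact isArtinian_of_injective
    ((Submodule.comap (maximalIdeal R).subtype P).liftQ _ hker.ge)
    (LinearMap.ker_eq_bot.mp (Submodule.ker_liftQ_eq_bot _ _ _ hker.le))

theorem my_exists_compl_ideal (A B C : Ideal R) (hAB : A ≤ B) (hBC : B ≤ C)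
    (hC : ∀ x ∈ maximalIdeal R, ∀ c ∈ C, x * c ∈ A) :
    ∃ D : Ideal R, A ≤ D ∧ D ≤ C ∧ D ⊓ B = A ∧ D ⊔ B = C := by
  set s : Set (Ideal R) := {D | A ≤ D ∧ D ≤ C ∧ D ⊓ B ≤ A} with hs
  have hAs : A ∈ s := ⟨le_rfl, hAB.trans hBC, inf_le_left⟩
  have hub : ∀ c ⊆ s, IsChain (· ≤ ·) c → ∀ y ∈ c, ∃ ub ∈ s, ∀ z ∈ c, z ≤ ub := by
    intro c hcs hchain y hyc
    refine ⟨sSup c, ⟨?_, ?_, ?_⟩, fun z hz => le_sSup hz⟩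
    · exact (hcs hyc).1.trans (le_sSup hyc)
    · exact sSup_le fun z hz => (hcs hz).2.1
    · intro x hx
      obtain ⟨hx1, hx2⟩ := hx
      obtain ⟨D₀, hD₀c, hxD₀⟩ :=
        (Submodule.mem_sSup_of_directed ⟨y, hyc⟩ hchain.directedOn).mp hx1
      exact (hcs hD₀c).2.2 ⟨hxD₀, hx2⟩
  obtain ⟨D, -, hDmax⟩ := zorn_le_nonempty₀ s hub A hAs
  obtain ⟨hAD, hDC, hDB⟩ := hDmax.prop
  have hsup : C ≤ D ⊔ B := by
    by_contra hns
    obtain ⟨x, hxC, hxDB⟩ := SetLike.not_le_iff_exists.mp hns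
    have hDs' : D ⊔ Ideal.span {x} ∈ s := by
      refine ⟨hAD.trans le_sup_left,
        sup_le hDC ((Ideal.span_singleton_le_iff_mem _).mpr hxC), ?_⟩
      rintro b ⟨hb1, hb2⟩
      obtain ⟨d, hd, y, hy, rfl⟩ := Submodule.mem_sup.mp hb1
      obtain ⟨r, rfl⟩ := Ideal.mem_span_singleton'.mp hy
      by_cases hr : r ∈ maximalIdeal R
      · have hrx : r * x ∈ A := hC r hr x hxC
        exact hDB ⟨add_mem hd (hAD hrx), hb2⟩
      · exfalso
        have hu : IsUnit r := by
          rwa [mem_maximalIdeal, mem_nonunits_iff, not_not] at hr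
        obtain ⟨u, rfl⟩ := hu
        apply hxDB
        have hx1 : x = (↑u⁻¹ : R) * ((d + ↑u * x) - d) := by
          rw [add_sub_cancel_left, ← mul_assoc, Units.inv_mul, one_mul]
        have hmem : (d + ↑u * x) - d ∈ D ⊔ B := by
          exact sub_mem (le_sup_right (α := Ideal R) hb2) (le_sup_left (α := Ideal R) hd)
        rw [hx1]
        exact Ideal.mul_mem_left _ _ hmem
    have hle : D ⊔ Ideal.span {x} ≤ D := hDmax.2 hDs' le_sup_left
    exact hxDB (le_sup_left (α := Ideal R)
      (hle (le_sup_right (α := Ideal R) (Ideal.subset_span rfl))))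
  exact ⟨D, hAD, hDC, le_antisymm hDB (le_inf hAD hAB),
    le_antisymm (sup_le hDC hBC) hsup⟩

open IsLocalRing in
/-- Let `(R, 𝔪)` be a commutative quasi-local ring with `𝔪³ = 0` whose socle
`Soc(R) = Ann(𝔪)` is finitely generated.  Then `R` satisfies (⋄) (every cyclic
`R`-module with essential simple socle is Artinian) if and only if `𝔪/Soc(R)` is
finitely generated as an `R`-module. -/
theorem diamond_iff_maximalIdeal_mod_socle_fg (R : Type u) [CommRing R] [IsLocalRing R]
    (hm3 : maximalIdeal R ^ 3 = ⊥)
    (hsoc : (maximalIdeal R).annihilator.FG) :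
    (∀ I : Ideal R,
        (∃ S : Submodule R (R ⧸ I), IsSimpleModule R S ∧
          ∀ N : Submodule R (R ⧸ I), N ≠ ⊥ → S ⊓ N ≠ ⊥) →
        IsArtinian R (R ⧸ I)) ↔
      Module.Finite R
        (↥(maximalIdeal R) ⧸
          (Submodule.comap (maximalIdeal R).subtype (maximalIdeal R).annihilator)) := by
  classical
  have h2mem : ∀ x ∈ maximalIdeal R, ∀ y ∈ maximalIdeal R, x * y ∈ (maximalIdeal R)^2 := by
    intro x hx y hy; rw [sq]; exact Ideal.mul_mem_mul hx hy
  have h3zero : ∀ w ∈ (maximalIdeal R)^2, ∀ x ∈ maximalIdeal R, w * x = 0 := by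
    intro w hw x hx
    have h := Ideal.mul_mem_mul hw hx
    rw [← pow_succ, hm3, Submodule.mem_bot] at h
    exact h
  have hW_le_S : (maximalIdeal R)^2 ≤ (maximalIdeal R).annihilator := by
    intro w hw
    rw [Submodule.mem_annihilator]
    intro x hx; rw [smul_eq_mul]; exact h3zero w hw x hx
  have htorm : ∀ P : Ideal R, (∀ x ∈ maximalIdeal R, ∀ y ∈ maximalIdeal R, x * y ∈ P) →
      ∀ x ∈ maximalIdeal R,
        ∀ v : (↥(maximalIdeal R) ⧸ Submodule.comap (maximalIdeal R).subtype P),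
          x • v = 0 := by
    intro P hP x hx v
    obtain ⟨⟨y, hy⟩, rfl⟩ := Submodule.Quotient.mk_surjective _ v
    rw [← Submodule.Quotient.mk_smul, Submodule.Quotient.mk_eq_zero]
    simpa [Submodule.mem_comap, smul_eq_mul] using hP x hx y hy
  constructor
  · -- forward direction
    intro hdia
    by_contra hnf
    have hcol : ∀ (W0 : Ideal R), ∀ x ∈ maximalIdeal R, ∀ y ∈ maximalIdeal R,
        x * y ∈ W0.colon (maximalIdeal R) := by
      intro W0 x hx y hy
      rw [Submodule.mem_colon]
      intro p hp
      rw [smul_eq_mul, h3zero _ (h2mem x hx y hy) p hp]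
      exact zero_mem _
    have hcolinf : ∀ (Q₁ Q₂ : Ideal R), (Q₁ ⊓ Q₂).colon (maximalIdeal R) =
        Q₁.colon (maximalIdeal R) ⊓ Q₂.colon (maximalIdeal R) := by
      intro Q₁ Q₂
      ext r
      simp only [Submodule.mem_inf, Submodule.mem_colon]
      constructor
      · intro h
        exact ⟨fun p hp => (h p hp).1, fun p hp => (h p hp).2⟩
      · intro h p hp
        exact ⟨h.1 p hp, h.2 p hp⟩
    haveI hfinS : Module.Finite R ↥((maximalIdeal R).annihilator) :=
      Module.Finite.iff_fg.mpr hsoc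
    have htorS : ∀ x ∈ maximalIdeal R, ∀ v : ↥((maximalIdeal R).annihilator),
        x • v = 0 := by
      intro x hx v
      have hv := Submodule.mem_annihilator.mp v.2 x hx
      apply Subtype.ext
      rw [Submodule.coe_smul, ZeroMemClass.coe_zero, smul_eq_mul, mul_comm]
      simpa [smul_eq_mul] using hv
    haveI : IsArtinian R ↥((maximalIdeal R).annihilator) :=
      my_isArtinian_of_torsion_of_finite htorS
    haveI hart2 : IsArtinian R ↥((maximalIdeal R)^2) :=
      isArtinian_of_injective (Submodule.inclusion hW_le_S)
        (Submodule.inclusion_injective _)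
    -- Step 1 : find a "hyperplane" W' of m^2 whose colon has non-f.g. quotient
    have hstep1 : ∃ W' : Ideal R, W' ≤ (maximalIdeal R)^2 ∧
        (∃ w ∈ (maximalIdeal R)^2, w ∉ W') ∧
        (∀ w ∈ (maximalIdeal R)^2, w ∉ W' →
          (maximalIdeal R)^2 ≤ Ideal.span {w} ⊔ W') ∧
        ¬ Module.Finite R (↥(maximalIdeal R) ⧸
            Submodule.comap (maximalIdeal R).subtype (W'.colon (maximalIdeal R))) := by
      by_contra hstep
      have key : ∀ W' : Ideal R, W' ≤ (maximalIdeal R)^2 →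
          (∃ w ∈ (maximalIdeal R)^2, w ∉ W') →
          (∀ w ∈ (maximalIdeal R)^2, w ∉ W' →
            (maximalIdeal R)^2 ≤ Ideal.span {w} ⊔ W') →
          Module.Finite R (↥(maximalIdeal R) ⧸
            Submodule.comap (maximalIdeal R).subtype (W'.colon (maximalIdeal R))) := by
        intro W' h1 h2 h3
        by_contra hW
        exact hstep ⟨W', h1, h2, h3, hW⟩
      set s' : Set (Submodule R ↥((maximalIdeal R)^2)) :=
        {N | IsNoetherian R (↥(maximalIdeal R) ⧸
          Submodule.comap (maximalIdeal R).subtype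
            ((Submodule.map ((maximalIdeal R)^2).subtype N).colon (maximalIdeal R)))}
        with hs'
      have htop : (⊤ : Submodule R ↥((maximalIdeal R)^2)) ∈ s' := by
        rw [hs', Set.mem_setOf_eq, Submodule.map_subtype_top]
        have hcm : Submodule.comap (maximalIdeal R).subtype
            (((maximalIdeal R)^2).colon (maximalIdeal R)) = ⊤ := by
          rw [eq_top_iff]
          rintro ⟨y, hy⟩ -
          simp only [Submodule.mem_comap, Submodule.coe_subtype]
          rw [Submodule.mem_colon]
          intro p hp
          rw [smul_eq_mul]
          exact h2mem y hy p hp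
        rw [hcm]
        haveI : Subsingleton (↥(maximalIdeal R) ⧸ (⊤ : Submodule R ↥(maximalIdeal R))) :=
          Submodule.Quotient.subsingleton_iff.mpr rfl
        exact isNoetherian_of_finite R _
      obtain ⟨Nstar, hNs, hmin⟩ := IsArtinian.set_has_minimal s' ⟨⊤, htop⟩
      by_cases hbot : Nstar = (⊥ : Submodule R ↥((maximalIdeal R)^2))
      · rw [hbot, hs', Set.mem_setOf_eq, Submodule.map_bot] at hNs
        have hc : ((⊥ : Ideal R).colon (maximalIdeal R))
            = (maximalIdeal R).annihilator := by
          ext r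
          rw [Submodule.mem_colon, Submodule.mem_annihilator]
          simp [Submodule.mem_bot]
        rw [hc] at hNs
        exact hnf (by haveI := hNs; exact Module.finite_def.mpr (IsNoetherian.noetherian ⊤))
      · obtain ⟨xt, hxtN, hxt0⟩ := Submodule.ne_bot_iff _ |>.mp hbot
        have hxm2 : (xt : R) ∈ (maximalIdeal R)^2 := xt.2
        have hx0 : (xt : R) ≠ 0 := fun h => hxt0 (Subtype.ext h)
        have hCbot : ∀ x' ∈ maximalIdeal R, ∀ c ∈ (maximalIdeal R)^2,
            x' * c ∈ (⊥ : Ideal R) := by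
          intro x' hx' c hc
          rw [Submodule.mem_bot, mul_comm]
          exact h3zero c hc x' hx'
        obtain ⟨W'', hbW, hWm2, hinf, hsup⟩ :=
          my_exists_compl_ideal ⊥ (Ideal.span {(xt : R)}) ((maximalIdeal R)^2) bot_le
            ((Ideal.span_singleton_le_iff_mem _).mpr hxm2) hCbot
        have hxW : (xt : R) ∉ W'' := by
          intro h
          have hmem : (xt : R) ∈ W'' ⊓ Ideal.span {(xt : R)} :=
            ⟨h, Ideal.subset_span rfl⟩
          rw [hinf] at hmem
          exact hx0 (Submodule.mem_bot _ |>.mp hmem)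
        have h2' : ∃ w ∈ (maximalIdeal R)^2, w ∉ W'' := ⟨_, hxm2, hxW⟩
        have h3' : ∀ w ∈ (maximalIdeal R)^2, w ∉ W'' →
            (maximalIdeal R)^2 ≤ Ideal.span {w} ⊔ W'' := by
          intro w hw hwn
          have hwmem : w ∈ W'' ⊔ Ideal.span {(xt : R)} := hsup.ge hw
          obtain ⟨d, hd, y, hy, rfl⟩ := Submodule.mem_sup.mp hwmem
          obtain ⟨r, rfl⟩ := Ideal.mem_span_singleton'.mp hy
          by_cases hr : r ∈ maximalIdeal R
          · exfalso
            have h0 : r * (xt : R) = 0 := by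
              rw [mul_comm]; exact h3zero _ hxm2 r hr
            exact hwn (by rw [h0, add_zero]; exact hd)
          · have hu : IsUnit r := by
              rwa [mem_maximalIdeal, mem_nonunits_iff, not_not] at hr
            obtain ⟨u, rfl⟩ := hu
            have hx1 : (xt : R) = (↑u⁻¹ : R) * ((d + ↑u * (xt : R)) - d) := by
              rw [add_sub_cancel_left, ← mul_assoc, Units.inv_mul, one_mul]
            have hmem : (d + ↑u * (xt : R)) - d
                ∈ Ideal.span {d + ↑u * (xt : R)} ⊔ W'' :=
              sub_mem (le_sup_left (α := Ideal R) (Ideal.subset_span rfl))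
                (le_sup_right (α := Ideal R) hd)
            refine le_trans (le_of_eq hsup.symm)
              (sup_le le_sup_right ((Ideal.span_singleton_le_iff_mem _).mpr ?_))
            have h2 := Ideal.mul_mem_left _ ((↑u⁻¹ : R)) hmem
            rwa [← hx1] at h2
        haveI hWfin := key W'' hWm2 h2' h3'
        haveI hWnoeth : IsNoetherian R (↥(maximalIdeal R) ⧸
            Submodule.comap (maximalIdeal R).subtype (W''.colon (maximalIdeal R))) :=
          my_isNoetherian_of_torsion_of_finite (htorm _ (hcol W''))
        set Qs : Ideal R := Submodule.map ((maximalIdeal R)^2).subtype Nstar with hQs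
        haveI hQnoeth : IsNoetherian R (↥(maximalIdeal R) ⧸
            Submodule.comap (maximalIdeal R).subtype (Qs.colon (maximalIdeal R))) := hNs
        haveI hQWnoeth : IsNoetherian R (↥(maximalIdeal R) ⧸
            Submodule.comap (maximalIdeal R).subtype
              ((Qs ⊓ W'').colon (maximalIdeal R))) := by
          rw [hcolinf, Submodule.comap_inf]
          exact my_noeth_inf _ _
        set Nt : Submodule R ↥((maximalIdeal R)^2) :=
          Submodule.comap ((maximalIdeal R)^2).subtype (Qs ⊓ W'') with hNt
        have hmapNt : Submodule.map ((maximalIdeal R)^2).subtype Nt = Qs ⊓ W'' := by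
          rw [hNt, Submodule.map_comap_subtype]
          exact inf_eq_right.mpr (le_trans inf_le_left (Submodule.map_subtype_le _ _))
        have hNts : Nt ∈ s' := by
          rw [hs', Set.mem_setOf_eq, hmapNt]
          exact hQWnoeth
        have hle : Nt ≤ Nstar := by
          intro z hz
          have hz1 : ((maximalIdeal R)^2).subtype z ∈ Qs ⊓ W'' :=
            Submodule.mem_comap.mp hz
          obtain ⟨z', hz', hzz⟩ := Submodule.mem_map.mp hz1.1
          rwa [show z' = z from Subtype.ext hzz] at hz'
        have hne : Nt ≠ Nstar := by
          intro heq
          have hxtNt : xt ∈ Nt := heq ▸ hxtN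
          have : ((maximalIdeal R)^2).subtype xt ∈ Qs ⊓ W'' :=
            Submodule.mem_comap.mp hxtNt
          exact hxW this.2
        exact hmin Nt hNts (lt_of_le_of_ne hle hne)
    -- Step 2 : the main construction
    obtain ⟨W', hW'm2, ⟨w₀, hw₀m2, hw₀W'⟩, hsimp, hbig⟩ := hstep1
    set P : Ideal R := W'.colon (maximalIdeal R) with hP
    have hS_le_P : (maximalIdeal R).annihilator ≤ P := by
      intro a ha
      rw [hP, Submodule.mem_colon]
      intro p hp
      rw [Submodule.mem_annihilator] at ha
      rw [ha p hp]
      exact zero_mem _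
    have hW'_le_P : W' ≤ P := by
      intro a ha
      rw [hP, Submodule.mem_colon]
      intro p hp
      rw [smul_eq_mul, h3zero a (hW'm2 ha) p hp]
      exact zero_mem _
    have hCtor : ∀ x ∈ maximalIdeal R, ∀ c ∈ (maximalIdeal R).annihilator,
        x * c ∈ W' := by
      intro x hx c hc
      rw [Submodule.mem_annihilator] at hc
      have h0 := hc x hx
      rw [smul_eq_mul] at h0
      rw [mul_comm, h0]
      exact zero_mem _
    have hXtor : ∀ x ∈ maximalIdeal R, ∀ c ∈ P, x * c ∈ W' := by
      intro x hx c hc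
      rw [hP, Submodule.mem_colon] at hc
      have h0 := hc x hx
      rw [smul_eq_mul] at h0
      rwa [mul_comm]
    obtain ⟨C, hW'C, hCS, hCinf, hCsup⟩ :=
      my_exists_compl_ideal W' ((maximalIdeal R)^2) ((maximalIdeal R).annihilator)
        hW'm2 hW_le_S hCtor
    obtain ⟨X, hW'X, hXP, hXinf, hXsup⟩ :=
      my_exists_compl_ideal W' ((maximalIdeal R).annihilator) P
        (hW'm2.trans hW_le_S) hS_le_P hXtor
    set I : Ideal R := C ⊔ X with hI
    have hW'_le_I : W' ≤ I := hW'X.trans le_sup_right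
    have hI_le_P : I ≤ P := sup_le (hCS.trans hS_le_P) hXP
    have hPIm2 : I ⊔ (maximalIdeal R)^2 = P := by
      rw [hI, sup_comm C X, sup_assoc, hCsup, hXsup]
    have hIinfm2 : I ⊓ (maximalIdeal R)^2 = W' := by
      apply le_antisymm
      · rintro w ⟨hwI, hwm2⟩
        obtain ⟨c, hc, ξ, hξ, rfl⟩ := Submodule.mem_sup.mp hwI
        have hξS : ξ ∈ (maximalIdeal R).annihilator := by
          have h1 : (c + ξ) - c ∈ (maximalIdeal R).annihilator :=
            sub_mem (hW_le_S hwm2) (hCS hc)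
          simpa using h1
        have hξW' : ξ ∈ W' := by
          rw [← hXinf]; exact ⟨hξ, hξS⟩
        have hcm2 : c ∈ (maximalIdeal R)^2 := by
          have h1 : (c + ξ) - ξ ∈ (maximalIdeal R)^2 := sub_mem hwm2 (hW'm2 hξW')
          simpa using h1
        have hcW' : c ∈ W' := by
          rw [← hCinf]; exact ⟨hc, hcm2⟩
        exact add_mem hcW' hξW'
      · exact le_inf hW'_le_I hW'm2
    set Ssub : Submodule R (R ⧸ I) := Submodule.map I.mkQ P with hSsubdef
    have hmapbot : ∀ (J : Ideal R), J ≤ I → Submodule.map I.mkQ J = ⊥ := by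
      intro J hJ
      rw [eq_bot_iff]
      rintro z ⟨y, hy, rfl⟩
      rw [Submodule.mem_bot, Submodule.mkQ_apply, Submodule.Quotient.mk_eq_zero]
      exact hJ hy
    have hSsub_eq : Ssub = Submodule.map I.mkQ ((maximalIdeal R)^2) := by
      rw [hSsubdef, ← hPIm2, Submodule.map_sup, hmapbot I le_rfl, bot_sup_eq]
    have hSne : Ssub ≠ ⊥ := by
      intro h
      have hw₀P : w₀ ∈ P := hS_le_P (hW_le_S hw₀m2)
      have hmem : I.mkQ w₀ ∈ Ssub := Submodule.mem_map_of_mem hw₀P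
      rw [h, Submodule.mem_bot, Submodule.mkQ_apply,
        Submodule.Quotient.mk_eq_zero] at hmem
      exact hw₀W' (by rw [← hIinfm2]; exact ⟨hmem, hw₀m2⟩)
    have hSsimple : IsSimpleModule R Ssub := by
      rw [isSimpleModule_iff_isAtom]
      refine ⟨hSne, ?_⟩
      intro b hblt
      by_contra hbne
      obtain ⟨v, hvb, hv0⟩ := Submodule.ne_bot_iff _ |>.mp hbne
      obtain ⟨x, hxP, rfl⟩ := Submodule.mem_map.mp (hblt.le hvb)
      have hxI : x ∉ I := by
        intro h
        apply hv0
        rw [Submodule.mkQ_apply, Submodule.Quotient.mk_eq_zero]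
        exact h
      have hxP' : x ∈ I ⊔ (maximalIdeal R)^2 := by rw [hPIm2]; exact hxP
      obtain ⟨i, hiI, w, hwm2, rfl⟩ := Submodule.mem_sup.mp hxP'
      have hwW' : w ∉ W' := fun h => hxI (add_mem hiI (hW'_le_I h))
      have hmkiz : I.mkQ i = 0 := by
        rw [Submodule.mkQ_apply, Submodule.Quotient.mk_eq_zero]; exact hiI
      have hmkw : I.mkQ w = I.mkQ (i + w) := by
        rw [map_add, hmkiz, zero_add]
      have hSb : Ssub ≤ b := by
        rw [hSsub_eq]
        calc Submodule.map I.mkQ ((maximalIdeal R)^2)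
            ≤ Submodule.map I.mkQ (Ideal.span {w} ⊔ W') :=
              Submodule.map_mono (hsimp w hwm2 hwW')
          _ = Submodule.map I.mkQ (Ideal.span {w}) ⊔ Submodule.map I.mkQ W' :=
              Submodule.map_sup _ _ _
          _ ≤ Submodule.span R {I.mkQ (i + w)} ⊔ (⊥ : Submodule R (R ⧸ I)) := by
              refine sup_le_sup ?_ ?_
              · rw [← Ideal.submodule_span_eq, Submodule.map_span,
                  Set.image_singleton, hmkw]
              · rw [hmapbot W' hW'_le_I]
          _ ≤ b := by
              rw [sup_bot_eq]
              exact (Submodule.span_singleton_le_iff_mem _ _).mpr hvb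
      exact hblt.ne (le_antisymm hblt.le hSb)
    have hSess : ∀ N : Submodule R (R ⧸ I), N ≠ ⊥ → Ssub ⊓ N ≠ ⊥ := by
      intro N hN
      obtain ⟨v, hvN, hv0⟩ := Submodule.ne_bot_iff _ |>.mp hN
      obtain ⟨x, rfl⟩ := Submodule.Quotient.mk_surjective _ v
      have hxI : x ∉ I := fun h => hv0 (Submodule.Quotient.mk_eq_zero _ |>.mpr h)
      rw [Submodule.ne_bot_iff]
      by_cases hxm : x ∈ maximalIdeal R
      · by_cases hxPm : x ∈ P
        · exact ⟨Submodule.Quotient.mk x, ⟨Submodule.mem_map_of_mem hxPm, hvN⟩, hv0⟩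
        · have hnall : ¬ ∀ p ∈ maximalIdeal R, x • p ∈ W' := by
            intro h
            exact hxPm (Submodule.mem_colon.mpr h)
          push_neg at hnall
          obtain ⟨y, hym, hxyW'⟩ := hnall
          rw [smul_eq_mul] at hxyW'
          have hxym2 : x * y ∈ (maximalIdeal R)^2 := h2mem x hxm y hym
          have hxyI : x * y ∉ I := fun h =>
            hxyW' (by rw [← hIinfm2]; exact ⟨h, hxym2⟩)
          refine ⟨Submodule.Quotient.mk (x * y), ⟨?_, ?_⟩, ?_⟩
          · exact Submodule.mem_map_of_mem (hS_le_P (hW_le_S hxym2))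
          · have heq : (Submodule.Quotient.mk (x * y) : R ⧸ I)
                = y • Submodule.Quotient.mk x := by
              rw [← Submodule.Quotient.mk_smul, smul_eq_mul, mul_comm]
            rw [heq]
            exact N.smul_mem y hvN
          · intro h
            exact hxyI (Submodule.Quotient.mk_eq_zero _ |>.mp h)
      · have hu : IsUnit x := by
          rwa [mem_maximalIdeal, mem_nonunits_iff, not_not] at hxm
        obtain ⟨u, rfl⟩ := hu
        have hNtop : ∀ z : R ⧸ I, z ∈ N := by
          intro z
          obtain ⟨y, rfl⟩ := Submodule.Quotient.mk_surjective _ z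
          have h1 : (Submodule.Quotient.mk (y * (↑u⁻¹ : R) * (↑u : R)) : R ⧸ I) ∈ N := by
            have heq : (Submodule.Quotient.mk (y * (↑u⁻¹ : R) * (↑u : R)) : R ⧸ I)
                = (y * (↑u⁻¹ : R)) • (Submodule.Quotient.mk ((↑u : R)) : R ⧸ I) := by
              rw [← Submodule.Quotient.mk_smul, smul_eq_mul]
            rw [heq]
            exact N.smul_mem _ hvN
          rwa [mul_assoc, Units.inv_mul, mul_one] at h1
        obtain ⟨s0, hs0S, hs00⟩ := Submodule.ne_bot_iff _ |>.mp hSne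
        exact ⟨s0, ⟨hs0S, hNtop s0⟩, hs00⟩
    haveI hart := hdia I ⟨Ssub, hSsimple, hSess⟩
    haveI : IsArtinian R (R ⧸ (P : Submodule R R)) := by
      refine isArtinian_of_surjective _
        (Submodule.mapQ I P LinearMap.id (Submodule.comap_id P ▸ hI_le_P)) ?_
      intro z
      obtain ⟨y, rfl⟩ := Submodule.Quotient.mk_surjective _ z
      exact ⟨Submodule.Quotient.mk y, by rw [Submodule.mapQ_apply]; rfl⟩
    haveI := my_quot_sub (R := R) P
    exact hbig (my_finite_of_torsion_of_isArtinian
      (htorm P (fun x hx y hy => hS_le_P (hW_le_S (h2mem x hx y hy)))))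
  · -- backward direction
    intro hfin I _
    haveI hfin' := hfin
    haveI hfinS : Module.Finite R ↥((maximalIdeal R).annihilator) :=
      Module.Finite.iff_fg.mpr hsoc
    have htorS : ∀ x ∈ maximalIdeal R, ∀ v : ↥((maximalIdeal R).annihilator),
        x • v = 0 := by
      intro x hx v
      have hv := Submodule.mem_annihilator.mp v.2 x hx
      apply Subtype.ext
      rw [Submodule.coe_smul, ZeroMemClass.coe_zero, smul_eq_mul, mul_comm]
      simpa [smul_eq_mul] using hv
    haveI : IsArtinian R ↥((maximalIdeal R).annihilator) :=
      my_isArtinian_of_torsion_of_finite htorS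
    haveI : IsArtinian R
        ↥(Submodule.comap (maximalIdeal R).subtype (maximalIdeal R).annihilator) := by
      refine isArtinian_of_injective
        (LinearMap.codRestrict ((maximalIdeal R).annihilator)
          ((maximalIdeal R).subtype.domRestrict
            (Submodule.comap (maximalIdeal R).subtype (maximalIdeal R).annihilator))
          (fun c => c.2)) ?_
      intro a b hab
      have h1 := congrArg Subtype.val hab
      change ((a : ↥(maximalIdeal R)) : R) = ((b : ↥(maximalIdeal R)) : R) at h1
      exact Subtype.ext (Subtype.ext h1)
    haveI : IsArtinian R (↥(maximalIdeal R) ⧸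
        Submodule.comap (maximalIdeal R).subtype (maximalIdeal R).annihilator) :=
      my_isArtinian_of_torsion_of_finite
        (htorm _ (fun x hx y hy => hW_le_S (h2mem x hx y hy)))
    haveI : IsArtinian R ↥(maximalIdeal R) :=
      (isArtinian_iff_submodule_quotient
        (Submodule.comap (maximalIdeal R).subtype (maximalIdeal R).annihilator)).mpr
        ⟨‹_›, ‹_›⟩
    haveI : Module.Finite R (R ⧸ (maximalIdeal R : Submodule R R)) :=
      Module.Finite.of_surjective (maximalIdeal R : Submodule R R).mkQ
        (Submodule.Quotient.mk_surjective _)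
    have htorRm : ∀ x ∈ maximalIdeal R, ∀ v : R ⧸ (maximalIdeal R : Submodule R R),
        x • v = 0 := by
      intro x hx v
      obtain ⟨y, rfl⟩ := Submodule.Quotient.mk_surjective _ v
      rw [← Submodule.Quotient.mk_smul, Submodule.Quotient.mk_eq_zero, smul_eq_mul]
      exact Ideal.mul_mem_right y _ hx
    haveI : IsArtinian R (R ⧸ (maximalIdeal R : Submodule R R)) :=
      my_isArtinian_of_torsion_of_finite htorRm
    haveI : IsArtinian R R :=
      (isArtinian_iff_submodule_quotient (maximalIdeal R : Submodule R R)).mpr ⟨‹_›, ‹_›⟩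
    exact isArtinian_of_surjective R I.mkQ (Submodule.Quotient.mk_surjective _)
end
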